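/- arXiv:1403.6062 — 7 statements merged into one kernel-verified Lean document; each statement's English description precedes it below -/
import Mathlib

section
/- Let I ⊆ ℝ be an open interval and let T, X : I × ℝ → ℝ be smooth functions whose Jacobian determinant T_t X_x − T_x X_t is nowhere zero. Suppose that for every second-order linear ODE E on I (with arbitrary smooth coefficients a₁, a₀, b) there exists a second-order linear ODE Ẽ such that the point transformation (T, X) maps E to Ẽ. Then ∂T/∂x ≡ 0 and ∂²X/∂x² ≡ 0 on I × ℝ; that is, T = T(t) depends only on t and X(t,x) = X₁(t)x + X₀(t) for smooth functions X₁, X₀ with T'(t)X₁(t) ≠ 0 for all t ∈ I. -/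
open Set

/-- The left-hand side `x^(r)(t) + ∑_{i<r} aᵢ(t) x^(i)(t)` of an `r`-th order linear ODE. -/
noncomputable def odeLHS (r : ℕ) (a : ℕ → ℝ → ℝ) (x : ℝ → ℝ) (t : ℝ) : ℝ :=
  iteratedDeriv r x t + ∑ i ∈ Finset.range r, a i t * iteratedDeriv i x t

/-- `x` is a solution on `I` of the linear ODE `x^(r) + ∑_{i<r} aᵢ x^(i) = b`:
it is smooth on `I` and satisfies the identity on `I`. -/
def IsSolODE (r : ℕ) (a : ℕ → ℝ → ℝ) (b : ℝ → ℝ) (I : Set ℝ) (x : ℝ → ℝ) : Prop :=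
  ContDiffOn ℝ (⊤ : ℕ∞) x I ∧ ∀ t ∈ I, odeLHS r a x t = b t

/-- `I ⊆ ℝ` is a (nonempty) open interval. -/
def IsOpenInterval (I : Set ℝ) : Prop := IsOpen I ∧ I.OrdConnected ∧ I.Nonempty

/-- The point transformation `(t, x) ↦ (T(t,x), X(t,x))` maps the `r`-th order linear ODE
with coefficients `a`, `b` on `I` to the one with coefficients `a'`, `b'` on `I'`:
for every solution `x` of the source equation and every `t₀ ∈ I` there is an open
subinterval `J ∋ t₀` of `I` on which `t ↦ T(t, x(t))` is strictly monotone and a solution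
`y` of the target equation with `X(t, x(t)) = y(T(t, x(t)))` on `J`. -/
def PTMapsODE (r : ℕ) (I : Set ℝ) (a : ℕ → ℝ → ℝ) (b : ℝ → ℝ)
    (I' : Set ℝ) (a' : ℕ → ℝ → ℝ) (b' : ℝ → ℝ) (T X : ℝ → ℝ → ℝ) : Prop :=
  ∀ x : ℝ → ℝ, IsSolODE r a b I x → ∀ t₀ ∈ I,
    ∃ J : Set ℝ, IsOpen J ∧ J.OrdConnected ∧ t₀ ∈ J ∧ J ⊆ I ∧
      (StrictMonoOn (fun t => T t (x t)) J ∨ StrictAntiOn (fun t => T t (x t)) J) ∧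
      ∃ y : ℝ → ℝ, IsSolODE r a' b' I' y ∧
        ∀ t ∈ J, T t (x t) ∈ I' ∧ X t (x t) = y (T t (x t))

/-- If a point transformation `(T, X)`, smooth on `I × ℝ` with nowhere
vanishing Jacobian, maps every second-order linear ODE on `I` to some second-order
linear ODE, then `T_x ≡ 0` and `X_xx ≡ 0` on `I × ℝ`, i.e. `T = T(t)` and
`X(t,x) = X₁(t)x + X₀(t)` with `T' X₁ ≠ 0` on `I`. -/
theorem stmt0 (I : Set ℝ) (hI : IsOpenInterval I) (T X : ℝ → ℝ → ℝ)
    (hT : ContDiffOn ℝ (⊤ : ℕ∞) (fun p : ℝ × ℝ => T p.1 p.2) (I ×ˢ univ))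
    (hX : ContDiffOn ℝ (⊤ : ℕ∞) (fun p : ℝ × ℝ => X p.1 p.2) (I ×ˢ univ))
    (hJac : ∀ t ∈ I, ∀ x : ℝ,
      deriv (fun s => T s x) t * deriv (fun y => X t y) x
        - deriv (fun y => T t y) x * deriv (fun s => X s x) t ≠ 0)
    (hmaps : ∀ (a : ℕ → ℝ → ℝ) (b : ℝ → ℝ),
      (∀ i, ContDiffOn ℝ (⊤ : ℕ∞) (a i) I) → ContDiffOn ℝ (⊤ : ℕ∞) b I →
      ∃ (I' : Set ℝ) (a' : ℕ → ℝ → ℝ) (b' : ℝ → ℝ), IsOpenInterval I' ∧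
        (∀ i, ContDiffOn ℝ (⊤ : ℕ∞) (a' i) I') ∧ ContDiffOn ℝ (⊤ : ℕ∞) b' I' ∧
        PTMapsODE 2 I a b I' a' b' T X) :
    (∀ t ∈ I, ∀ x : ℝ, deriv (fun y => T t y) x = 0) ∧
    (∀ t ∈ I, ∀ x : ℝ, deriv (deriv (fun y => X t y)) x = 0) ∧
    ∃ X₁ X₀ : ℝ → ℝ, ContDiffOn ℝ (⊤ : ℕ∞) X₁ I ∧ ContDiffOn ℝ (⊤ : ℕ∞) X₀ I ∧
      (∀ t ∈ I, ∀ x : ℝ, X t x = X₁ t * x + X₀ t) ∧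
      (∀ t ∈ I, deriv (fun s => T s 0) t * X₁ t ≠ 0) := by
  have hUo : IsOpen ((I ×ˢ (univ : Set ℝ)) : Set (ℝ × ℝ)) := hI.1.prod isOpen_univ
  obtain ⟨I', a', b', hI', ha', hb', hmap⟩ :=
    hmaps (fun _ _ => 0) (fun _ => 0) (fun _ => contDiffOn_const) contDiffOn_const
  -- lines are solutions of x'' = 0
  have hline : ∀ x₀ p t₀ : ℝ,
      IsSolODE 2 (fun _ _ => 0) (fun _ => 0) I (fun t => x₀ + p * (t - t₀)) := by
    intro x₀ p t₀
    constructor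
    · exact (contDiff_const.add (contDiff_const.mul (contDiff_id.sub contDiff_const))).contDiffOn
    · intro t ht
      have hd : deriv (fun t : ℝ => x₀ + p * (t - t₀)) = fun _ => p := by
        funext s
        have h : HasDerivAt (fun t : ℝ => x₀ + p * (t - t₀)) p s := by
          simpa using (((hasDerivAt_id s).sub_const t₀).const_mul p).const_add x₀
        exact h.deriv
      simp [odeLHS, Finset.sum_range_succ, iteratedDeriv_succ, iteratedDeriv_zero, hd]
  have hlined : ∀ x₀ p t₀ t : ℝ, HasDerivAt (fun s => x₀ + p * (s - t₀)) p t := by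
    intro x₀ p t₀ t
    simpa using (((hasDerivAt_id t).sub_const t₀).const_mul p).const_add x₀
  have hcurve : ∀ x₀ p t₀ t : ℝ,
      HasDerivAt (fun s => (s, x₀ + p * (s - t₀)) : ℝ → ℝ × ℝ) ((1 : ℝ), p) t :=
    fun x₀ p t₀ t => (hasDerivAt_id t).prodMk (hlined x₀ p t₀ t)
  -- differentiability of T, X on I × ℝ
  have hTf : ∀ t ∈ I, ∀ x : ℝ, HasFDerivAt (fun q : ℝ × ℝ => T q.1 q.2)
      (fderiv ℝ (fun q : ℝ × ℝ => T q.1 q.2) (t, x)) (t, x) := fun t ht x =>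
    ((hT.contDiffAt (hUo.mem_nhds ⟨ht, trivial⟩)).differentiableAt (by simp)).hasFDerivAt
  have hXf : ∀ t ∈ I, ∀ x : ℝ, HasFDerivAt (fun q : ℝ × ℝ => X q.1 q.2)
      (fderiv ℝ (fun q : ℝ × ℝ => X q.1 q.2) (t, x)) (t, x) := fun t ht x =>
    ((hX.contDiffAt (hUo.mem_nhds ⟨ht, trivial⟩)).differentiableAt (by simp)).hasFDerivAt
  -- expansion of a linear map at (1, p)
  have hlin : ∀ (L : ℝ × ℝ →L[ℝ] ℝ) (p : ℝ), L (1, p) = L (1, 0) + p * L (0, 1) := by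
    intro L p
    have h : ((1 : ℝ), p) = ((1 : ℝ), (0 : ℝ)) + p • ((0 : ℝ), (1 : ℝ)) := by
      simp [Prod.ext_iff]
    rw [h, map_add, map_smul, smul_eq_mul]
  -- partial derivatives
  have hTt : ∀ t ∈ I, ∀ x : ℝ, HasDerivAt (fun s => T s x)
      (fderiv ℝ (fun q : ℝ × ℝ => T q.1 q.2) (t, x) (1, 0)) t := by
    intro t ht x
    simpa [Function.comp_def] using
      (hTf t ht x).comp_hasDerivAt t ((hasDerivAt_id t).prodMk (hasDerivAt_const t x))
  have hTxd : ∀ t ∈ I, ∀ x : ℝ, HasDerivAt (fun y => T t y)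
      (fderiv ℝ (fun q : ℝ × ℝ => T q.1 q.2) (t, x) (0, 1)) x := by
    intro t ht x
    simpa [Function.comp_def] using
      (hTf t ht x).comp_hasDerivAt x ((hasDerivAt_const x t).prodMk (hasDerivAt_id x))
  have hXt : ∀ t ∈ I, ∀ x : ℝ, HasDerivAt (fun s => X s x)
      (fderiv ℝ (fun q : ℝ × ℝ => X q.1 q.2) (t, x) (1, 0)) t := by
    intro t ht x
    simpa [Function.comp_def] using
      (hXf t ht x).comp_hasDerivAt t ((hasDerivAt_id t).prodMk (hasDerivAt_const t x))
  have hXxd : ∀ t ∈ I, ∀ x : ℝ, HasDerivAt (fun y => X t y)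
      (fderiv ℝ (fun q : ℝ × ℝ => X q.1 q.2) (t, x) (0, 1)) x := by
    intro t ht x
    simpa [Function.comp_def] using
      (hXf t ht x).comp_hasDerivAt x ((hasDerivAt_const x t).prodMk (hasDerivAt_id x))
  -- derivative of T, X along a line
  have hTc : ∀ t₀ x₀ p : ℝ, ∀ t ∈ I, HasDerivAt (fun s => T s (x₀ + p * (s - t₀)))
      (fderiv ℝ (fun q : ℝ × ℝ => T q.1 q.2) (t, x₀ + p * (t - t₀)) (1, p)) t := by
    intro t₀ x₀ p t ht
    simpa [Function.comp_def] using
      (hTf t ht (x₀ + p * (t - t₀))).comp_hasDerivAt t (hcurve x₀ p t₀ t)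
  have hXc : ∀ t₀ x₀ p : ℝ, ∀ t ∈ I, HasDerivAt (fun s => X s (x₀ + p * (s - t₀)))
      (fderiv ℝ (fun q : ℝ × ℝ => X q.1 q.2) (t, x₀ + p * (t - t₀)) (1, p)) t := by
    intro t₀ x₀ p t ht
    simpa [Function.comp_def] using
      (hXf t ht (x₀ + p * (t - t₀))).comp_hasDerivAt t (hcurve x₀ p t₀ t)
  -- STEP E : T_x = 0
  have hTxzero : ∀ t ∈ I, ∀ x : ℝ, deriv (fun y => T t y) x = 0 := by
    intro t₀ ht₀ x₀
    by_contra hne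
    set Tt := deriv (fun s => T s x₀) t₀ with hTtdef
    set Tx := deriv (fun y => T t₀ y) x₀ with hTxdef
    set Xt := deriv (fun s => X s x₀) t₀ with hXtdef
    set Xx := deriv (fun y => X t₀ y) x₀ with hXxdef
    set p := -Tt / Tx with hpdef
    obtain ⟨J, hJo, -, ht₀J, hJI, -, y, hy, hrel⟩ := hmap _ (hline x₀ p t₀) t₀ ht₀
    have hx0 : x₀ + p * (t₀ - t₀) = x₀ := by ring
    have hTtp : Tt + p * Tx = 0 := by
      rw [hpdef]; field_simp; ring
    -- derivative of t ↦ T t (x t) at t₀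
    have hφ : HasDerivAt (fun s => T s (x₀ + p * (s - t₀))) (Tt + p * Tx) t₀ := by
      have h := hTc t₀ x₀ p t₀ ht₀
      rw [hx0] at h
      rwa [hlin, ← (hTt t₀ ht₀ x₀).deriv, ← (hTxd t₀ ht₀ x₀).deriv] at h
    have hψ : HasDerivAt (fun s => X s (x₀ + p * (s - t₀))) (Xt + p * Xx) t₀ := by
      have h := hXc t₀ x₀ p t₀ ht₀
      rw [hx0] at h
      rwa [hlin, ← (hXt t₀ ht₀ x₀).deriv, ← (hXxd t₀ ht₀ x₀).deriv] at h
    have hτ0I' : T t₀ (x₀ + p * (t₀ - t₀)) ∈ I' := (hrel t₀ ht₀J).1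
    have hyd : DifferentiableAt ℝ y (T t₀ (x₀ + p * (t₀ - t₀))) :=
      (hy.1.contDiffAt (hI'.1.mem_nhds hτ0I')).differentiableAt (by simp)
    have hcomp : HasDerivAt (fun t => y (T t (x₀ + p * (t - t₀))))
        (deriv y (T t₀ (x₀ + p * (t₀ - t₀))) * (Tt + p * Tx)) t₀ :=
      (hyd.hasDerivAt).comp t₀ hφ
    have hEq : (fun t => X t (x₀ + p * (t - t₀))) =ᶠ[nhds t₀]
        fun t => y (T t (x₀ + p * (t - t₀))) := by
      filter_upwards [hJo.mem_nhds ht₀J] with t ht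
      exact (hrel t ht).2
    have hψ2 := hcomp.congr_of_eventuallyEq hEq
    have huniq : Xt + p * Xx = deriv y (T t₀ (x₀ + p * (t₀ - t₀))) * (Tt + p * Tx) :=
      hψ.unique hψ2
    rw [hTtp, mul_zero] at huniq
    exact hJac t₀ ht₀ x₀ (by linear_combination Xx * hTtp - Tx * huniq)
  have hXxx : ∀ t ∈ I, ∀ x : ℝ, deriv (deriv (fun y => X t y)) x = 0 := by
    intro t₀ ht₀ x₀
    -- second derivative data for X and T
    have hcdX : ContDiffAt ℝ (⊤ : ℕ∞) (fderiv ℝ (fun q : ℝ × ℝ => X q.1 q.2)) (t₀, x₀) :=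
      (hX.contDiffAt (hUo.mem_nhds ⟨ht₀, trivial⟩)).fderiv_right (by exact_mod_cast le_top)
    have hcdT : ContDiffAt ℝ (⊤ : ℕ∞) (fderiv ℝ (fun q : ℝ × ℝ => T q.1 q.2)) (t₀, x₀) :=
      (hT.contDiffAt (hUo.mem_nhds ⟨ht₀, trivial⟩)).fderiv_right (by exact_mod_cast le_top)
    have hf'X : HasFDerivAt (fderiv ℝ (fun q : ℝ × ℝ => X q.1 q.2))
        (fderiv ℝ (fderiv ℝ (fun q : ℝ × ℝ => X q.1 q.2)) (t₀, x₀)) (t₀, x₀) :=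
      (hcdX.differentiableAt (by simp)).hasFDerivAt
    have hf'T : HasFDerivAt (fderiv ℝ (fun q : ℝ × ℝ => T q.1 q.2))
        (fderiv ℝ (fderiv ℝ (fun q : ℝ × ℝ => T q.1 q.2)) (t₀, x₀)) (t₀, x₀) :=
      (hcdT.differentiableAt (by simp)).hasFDerivAt
    set Tt := fderiv ℝ (fun q : ℝ × ℝ => T q.1 q.2) (t₀, x₀) (1, 0) with hTtdef
    set Ttt := fderiv ℝ (fderiv ℝ (fun q : ℝ × ℝ => T q.1 q.2)) (t₀, x₀) (1, 0) (1, 0) with hTttdef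
    set Xt0 := fderiv ℝ (fun q : ℝ × ℝ => X q.1 q.2) (t₀, x₀) (1, 0) with hXt0def
    set Xx0 := fderiv ℝ (fun q : ℝ × ℝ => X q.1 q.2) (t₀, x₀) (0, 1) with hXx0def
    set A := fderiv ℝ (fderiv ℝ (fun q : ℝ × ℝ => X q.1 q.2)) (t₀, x₀) (1, 0) (1, 0) with hAdef
    set B := fderiv ℝ (fderiv ℝ (fun q : ℝ × ℝ => X q.1 q.2)) (t₀, x₀) (1, 0) (0, 1)
      + fderiv ℝ (fderiv ℝ (fun q : ℝ × ℝ => X q.1 q.2)) (t₀, x₀) (0, 1) (1, 0) with hBdef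
    set C := fderiv ℝ (fderiv ℝ (fun q : ℝ × ℝ => X q.1 q.2)) (t₀, x₀) (0, 1) (0, 1) with hCdef
    -- derivative of s ↦ T_t(s, x₀) at t₀
    have hTttd : HasDerivAt (fun s => fderiv ℝ (fun q : ℝ × ℝ => T q.1 q.2) (s, x₀) ((1:ℝ), (0:ℝ)))
        Ttt t₀ := by
      have hc : HasDerivAt (fun s => fderiv ℝ (fun q : ℝ × ℝ => T q.1 q.2) (s, x₀))
          (fderiv ℝ (fderiv ℝ (fun q : ℝ × ℝ => T q.1 q.2)) (t₀, x₀) (1, 0)) t₀ := by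
        simpa [Function.comp_def] using
          hf'T.comp_hasDerivAt t₀ ((hasDerivAt_id t₀).prodMk (hasDerivAt_const t₀ x₀))
      simpa using hc.clm_apply (hasDerivAt_const t₀ ((1:ℝ), (0:ℝ)))
    -- T is constant in x
    have hTconst : ∀ t ∈ I, ∀ z : ℝ, T t z = T t x₀ := by
      intro t ht z
      exact is_const_of_deriv_eq_zero (fun u => (hTxd t ht u).differentiableAt)
        (hTxzero t ht) z x₀
    -- Tt ≠ 0
    have hTtne : Tt ≠ 0 := by
      have h := hJac t₀ ht₀ x₀
      rw [hTxzero t₀ ht₀ x₀, zero_mul, sub_zero] at h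
      have h2 := left_ne_zero_of_mul h
      rwa [(hTt t₀ ht₀ x₀).deriv] at h2
    -- quadratic expansion of the second fderiv
    have hexp : ∀ p : ℝ, fderiv ℝ (fderiv ℝ (fun q : ℝ × ℝ => X q.1 q.2)) (t₀, x₀) (1, p) (1, p)
        = A + B * p + C * p ^ 2 := by
      intro p
      have h : ((1 : ℝ), p) = ((1 : ℝ), (0 : ℝ)) + p • ((0 : ℝ), (1 : ℝ)) := by
        simp [Prod.ext_iff]
      rw [h]
      simp only [map_add, map_smul, ContinuousLinearMap.add_apply,
        ContinuousLinearMap.coe_smul', Pi.smul_apply, smul_eq_mul]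
      rw [hAdef, hBdef, hCdef]
      ring
    -- the key relation, for every slope p
    have hkey : ∀ p : ℝ, ∃ w : ℝ, w * Tt = Xt0 + p * Xx0 ∧
        A + B * p + C * p ^ 2
          = (b' (T t₀ x₀) - a' 0 (T t₀ x₀) * X t₀ x₀) * (Tt * Tt)
            + w * (Ttt - a' 1 (T t₀ x₀) * (Tt * Tt)) := by
      intro p
      obtain ⟨J, hJo, -, ht₀J, hJI, -, y, hy, hrel⟩ := hmap _ (hline x₀ p t₀) t₀ ht₀
      have hx0 : x₀ + p * (t₀ - t₀) = x₀ := by ring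
      have hφτ : ∀ s ∈ I, T s (x₀ + p * (s - t₀)) = T s x₀ := fun s hs => hTconst s hs _
      have hτI' : ∀ s ∈ J, T s x₀ ∈ I' := by
        intro s hs; rw [← hφτ s (hJI hs)]; exact (hrel s hs).1
      have hτ₀I' : T t₀ x₀ ∈ I' := hτI' t₀ ht₀J
      have hψτ : ∀ s ∈ J, X s (x₀ + p * (s - t₀)) = y (T s x₀) := by
        intro s hs; rw [← hφτ s (hJI hs)]; exact (hrel s hs).2
      have hyd : ∀ z ∈ I', DifferentiableAt ℝ y z := fun z hz =>
        (hy.1.contDiffAt (hI'.1.mem_nhds hz)).differentiableAt (by simp)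
      have hdyd : DifferentiableAt ℝ (deriv y) (T t₀ x₀) := by
        have h1 : ContDiffAt ℝ (⊤ : ℕ∞) (fderiv ℝ y) (T t₀ x₀) :=
          (hy.1.contDiffAt (hI'.1.mem_nhds hτ₀I')).fderiv_right (by exact_mod_cast le_top)
        have h2 : deriv y = fun s => fderiv ℝ y s 1 := funext fun s => fderiv_apply_one_eq_deriv.symm
        rw [h2]
        exact (h1.differentiableAt (by simp)).clm_apply (differentiableAt_const _)
      refine ⟨deriv y (T t₀ x₀), ?_, ?_⟩
      · -- first-derivative relation
        have hτd' : HasDerivAt (fun s => T s x₀) Tt t₀ := hTt t₀ ht₀ x₀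
        have hyτ : HasDerivAt (fun s => y (T s x₀)) (deriv y (T t₀ x₀) * Tt) t₀ :=
          ((hyd _ hτ₀I').hasDerivAt).comp t₀ hτd'
        have hψeq : (fun s => X s (x₀ + p * (s - t₀))) =ᶠ[nhds t₀] fun s => y (T s x₀) := by
          filter_upwards [hJo.mem_nhds ht₀J] with s hs
          exact hψτ s hs
        have hψd : HasDerivAt (fun s => X s (x₀ + p * (s - t₀))) (deriv y (T t₀ x₀) * Tt) t₀ :=
          hyτ.congr_of_eventuallyEq hψeq
        have hψd2 : HasDerivAt (fun s => X s (x₀ + p * (s - t₀)))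
            (fderiv ℝ (fun q : ℝ × ℝ => X q.1 q.2) (t₀, x₀) (1, p)) t₀ := by
          have h := hXc t₀ x₀ p t₀ ht₀; rwa [hx0] at h
        have := hψd2.unique hψd
        rw [hlin] at this
        exact this.symm
      · -- second-derivative relation
        have hD1 : deriv (fun s => X s (x₀ + p * (s - t₀))) =ᶠ[nhds t₀]
            fun s => fderiv ℝ (fun q : ℝ × ℝ => X q.1 q.2) (s, x₀ + p * (s - t₀)) (1, p) := by
          filter_upwards [hI.1.mem_nhds ht₀] with s hs
          exact (hXc t₀ x₀ p s hs).deriv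
        have hD2 : deriv (fun s => X s (x₀ + p * (s - t₀))) =ᶠ[nhds t₀]
            fun s => deriv y (T s x₀) * fderiv ℝ (fun q : ℝ × ℝ => T q.1 q.2) (s, x₀) (1, 0) := by
          filter_upwards [hJo.mem_nhds ht₀J] with s hs
          have hτds : HasDerivAt (fun r => T r x₀)
              (fderiv ℝ (fun q : ℝ × ℝ => T q.1 q.2) (s, x₀) (1, 0)) s := hTt s (hJI hs) x₀
          have h1 : HasDerivAt (fun r => y (T r x₀))
              (deriv y (T s x₀) * fderiv ℝ (fun q : ℝ × ℝ => T q.1 q.2) (s, x₀) (1, 0)) s :=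
            ((hyd _ (hτI' s hs)).hasDerivAt).comp s hτds
          have h2 : HasDerivAt (fun r => X r (x₀ + p * (r - t₀)))
              (deriv y (T s x₀) * fderiv ℝ (fun q : ℝ × ℝ => T q.1 q.2) (s, x₀) (1, 0)) s := by
            refine h1.congr_of_eventuallyEq ?_
            filter_upwards [hJo.mem_nhds hs] with r hr
            exact hψτ r hr
          exact h2.deriv
        have hGd : HasDerivAt
            (fun s => fderiv ℝ (fun q : ℝ × ℝ => X q.1 q.2) (s, x₀ + p * (s - t₀)) ((1:ℝ), p))
            (fderiv ℝ (fderiv ℝ (fun q : ℝ × ℝ => X q.1 q.2)) (t₀, x₀) (1, p) (1, p)) t₀ := by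
          have hc : HasDerivAt (fun s => fderiv ℝ (fun q : ℝ × ℝ => X q.1 q.2) (s, x₀ + p * (s - t₀)))
              (fderiv ℝ (fderiv ℝ (fun q : ℝ × ℝ => X q.1 q.2)) (t₀, x₀) (1, p)) t₀ := by
            have h := hf'X.comp_hasDerivAt_of_eq t₀ (hcurve x₀ p t₀ t₀) (by rw [hx0])
            simpa [Function.comp_def] using h
          simpa using hc.clm_apply (hasDerivAt_const t₀ ((1:ℝ), p))
        have hyy : HasDerivAt (fun s => deriv y (T s x₀)) (deriv (deriv y) (T t₀ x₀) * Tt) t₀ :=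
          by have h := (hdyd.hasDerivAt).comp t₀ (hTt t₀ ht₀ x₀); exact h
        have hHd : HasDerivAt
            (fun s => deriv y (T s x₀) * fderiv ℝ (fun q : ℝ × ℝ => T q.1 q.2) (s, x₀) (1, 0))
            (deriv (deriv y) (T t₀ x₀) * Tt * Tt + deriv y (T t₀ x₀) * Ttt) t₀ :=
          hyy.mul hTttd
        have h2nd : fderiv ℝ (fderiv ℝ (fun q : ℝ × ℝ => X q.1 q.2)) (t₀, x₀) (1, p) (1, p)
            = deriv (deriv y) (T t₀ x₀) * Tt * Tt + deriv y (T t₀ x₀) * Ttt :=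
          (hGd.congr_of_eventuallyEq hD1).unique (hHd.congr_of_eventuallyEq hD2)
        have hyval : y (T t₀ x₀) = X t₀ x₀ := by
          have h := hψτ t₀ ht₀J; rw [hx0] at h; exact h.symm
        have hode := hy.2 (T t₀ x₀) hτ₀I'
        have hit : iteratedDeriv 2 y (T t₀ x₀) = deriv (deriv y) (T t₀ x₀) := by
          rw [iteratedDeriv_succ, iteratedDeriv_one]
        simp only [odeLHS, Finset.sum_range_succ, Finset.sum_range_zero, iteratedDeriv_zero,
          iteratedDeriv_one, hit, hyval, zero_add] at hode
        rw [← hexp p, h2nd]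
        linear_combination (Tt * Tt) * hode
    -- finish: extract C = 0
    obtain ⟨w0, e0, f0⟩ := hkey 0
    obtain ⟨w1, e1, f1⟩ := hkey 1
    obtain ⟨w2, e2, f2⟩ := hkey (-1)
    have hw : w1 + w2 - 2 * w0 = 0 := by
      have h : (w1 + w2 - 2 * w0) * Tt = 0 := by linear_combination e1 + e2 - 2 * e0
      rcases mul_eq_zero.mp h with h' | h'
      · exact h'
      · exact absurd h' hTtne
    have hgoal : deriv (deriv (fun y => X t₀ y)) x₀ = C := by
      have h1 : deriv (fun y => X t₀ y) =
          fun y => fderiv ℝ (fun q : ℝ × ℝ => X q.1 q.2) (t₀, y) ((0:ℝ), (1:ℝ)) :=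
        funext fun y => (hXxd t₀ ht₀ y).deriv
      rw [h1]
      have hc : HasDerivAt (fun y => fderiv ℝ (fun q : ℝ × ℝ => X q.1 q.2) (t₀, y))
          (fderiv ℝ (fderiv ℝ (fun q : ℝ × ℝ => X q.1 q.2)) (t₀, x₀) (0, 1)) x₀ := by
        simpa [Function.comp_def] using
          hf'X.comp_hasDerivAt x₀ ((hasDerivAt_const x₀ t₀).prodMk (hasDerivAt_id x₀))
      have h2 := hc.clm_apply (hasDerivAt_const x₀ ((0:ℝ), (1:ℝ)))
      simpa using h2.deriv
    rw [hgoal]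
    linear_combination (f1 + f2) / 2 - f0 + ((Ttt - a' 1 (T t₀ x₀) * (Tt * Tt)) / 2) * hw
  refine ⟨hTxzero, hXxx, fun t => deriv (fun y => X t y) 0, fun t => X t 0, ?_, ?_, ?_, ?_⟩
  · -- smoothness of X₁
    have hf' : ContDiffOn ℝ (⊤ : ℕ∞) (fderiv ℝ (fun q : ℝ × ℝ => X q.1 q.2)) (I ×ˢ univ) :=
      hX.fderiv_of_isOpen hUo (by exact_mod_cast le_top)
    have hcv : ContDiffOn ℝ (⊤ : ℕ∞) (fun t : ℝ => ((t, 0) : ℝ × ℝ)) I :=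
      (contDiff_id.prodMk contDiff_const).contDiffOn
    have hcomp : ContDiffOn ℝ (⊤ : ℕ∞)
        (fun t : ℝ => fderiv ℝ (fun q : ℝ × ℝ => X q.1 q.2) (t, 0) ((0:ℝ), (1:ℝ))) I :=
      (hf'.comp hcv (fun t ht => ⟨ht, trivial⟩)).clm_apply contDiffOn_const
    refine hcomp.congr ?_
    intro t ht
    exact (hXxd t ht 0).deriv
  · -- smoothness of X₀
    have hcv : ContDiffOn ℝ (⊤ : ℕ∞) (fun t : ℝ => ((t, 0) : ℝ × ℝ)) I :=
      (contDiff_id.prodMk contDiff_const).contDiffOn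
    exact hX.comp hcv (fun t ht => ⟨ht, trivial⟩)
  · -- affineness in x
    intro t ht x
    have hdconst : ∀ y : ℝ, deriv (fun z => X t z) y = deriv (fun z => X t z) 0 := by
      have hdiff : Differentiable ℝ (deriv (fun z => X t z)) := by
        have h1 : deriv (fun z => X t z) =
            fun y => fderiv ℝ (fun q : ℝ × ℝ => X q.1 q.2) (t, y) ((0:ℝ), (1:ℝ)) :=
          funext fun y => (hXxd t ht y).deriv
        rw [h1]
        intro z
        have hcd : ContDiffAt ℝ (⊤ : ℕ∞) (fderiv ℝ (fun q : ℝ × ℝ => X q.1 q.2)) (t, z) :=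
          (hX.contDiffAt (hUo.mem_nhds ⟨ht, trivial⟩)).fderiv_right (by exact_mod_cast le_top)
        have hd2 : DifferentiableAt ℝ
            (fun y : ℝ => fderiv ℝ (fun q : ℝ × ℝ => X q.1 q.2) (t, y)) z := by
          have h := ((hcd.differentiableAt (by simp)).hasFDerivAt.comp_hasDerivAt z
            ((hasDerivAt_const z t).prodMk (hasDerivAt_id z)))
          simpa [Function.comp_def] using h.differentiableAt
        exact hd2.clm_apply (differentiableAt_const _)
      exact fun y => is_const_of_deriv_eq_zero hdiff (hXxx t ht) y 0
    have hlin2 : ∀ y : ℝ, HasDerivAt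
        (fun z => X t z - deriv (fun z' => X t z') 0 * z) 0 y := by
      intro y
      have h1 : HasDerivAt (fun z => X t z) (deriv (fun z' => X t z') 0) y := by
        have h := hXxd t ht y
        rw [← (hXxd t ht y).deriv, hdconst y] at h
        exact h
      have h2 := h1.sub ((hasDerivAt_id y).const_mul (deriv (fun z' => X t z') 0))
      simpa [Pi.sub_def] using h2
    have hc := is_const_of_deriv_eq_zero (fun y => (hlin2 y).differentiableAt)
      (fun y => (hlin2 y).deriv) x 0
    simp only [mul_zero, sub_zero] at hc
    linarith [hc]
  · -- nonvanishing
    intro t ht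
    have h := hJac t ht 0
    rw [hTxzero t ht 0, zero_mul, sub_zero] at h
    simpa using h
end

section
/- Let r ≥ 2, let I ⊆ ℝ be an open interval, and let T, X₁, X₀ : I → ℝ be smooth with T'(t)X₁(t) ≠ 0 for all t ∈ I (so T is a diffeomorphism of I onto the open interval T(I)). Then for every r-th order linear ODE E on I with smooth coefficients a_{r−1}, …, a₀, b there exist smooth functions ã_{r−1}, …, ã₀, b̃ on T(I) such that the fiber-preserving transformation t̃ = T(t), x̃ = X₁(t)x + X₀(t) maps E to the r-th order linear ODE with coefficients ã_{r−1}, …, ã₀, b̃; i.e., for every solution x of E the function y(s) = X₁(T⁻¹(s))·x(T⁻¹(s)) + X₀(T⁻¹(s)) satisfies y^{(r)} + ã_{r−1}y^{(r−1)} + ⋯ + ã₀y = b̃ on T(I). -/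
open Set

/-! ### Auxiliary machinery -/

noncomputable def coefC (T X₁ : ℝ → ℝ) : ℕ → ℕ → ℝ → ℝ
  | 0, 0 => X₁
  | 0, _+1 => fun _ => 0
  | k+1, 0 => fun t => deriv (coefC T X₁ k 0) t / deriv T t
  | k+1, i+1 => fun t => (deriv (coefC T X₁ k (i+1)) t + coefC T X₁ k i t) / deriv T t

noncomputable def coefD (T X₀ : ℝ → ℝ) : ℕ → ℝ → ℝ
  | 0 => X₀
  | k+1 => fun t => deriv (coefD T X₀ k) t / deriv T t

theorem coefC_zero (T X₁ : ℝ → ℝ) : ∀ k i, k < i → coefC T X₁ k i = fun _ => 0 := by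
  intro k
  induction k with
  | zero => intro i hi; match i, hi with
    | i+1, _ => rfl
  | succ k ih =>
    intro i hi
    match i, hi with
    | i+1, hi =>
      have h1 : coefC T X₁ k (i+1) = fun _ => 0 := ih _ (by omega)
      have h2 : coefC T X₁ k i = fun _ => 0 := ih _ (by omega)
      show (fun t => (deriv (coefC T X₁ k (i+1)) t + coefC T X₁ k i t) / deriv T t) = _
      rw [h1, h2]
      funext t
      simp

theorem coefC_diag (T X₁ : ℝ → ℝ) : ∀ k t, coefC T X₁ k k t = X₁ t / (deriv T t)^k := by
  intro k
  induction k with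
  | zero => intro t; simp [coefC]
  | succ k ih =>
    intro t
    show (deriv (coefC T X₁ k (k+1)) t + coefC T X₁ k k t) / deriv T t = _
    rw [coefC_zero T X₁ k (k+1) (by omega)]
    simp [ih t, div_div, pow_succ]

theorem contDiffOn_coefC {T X₁ : ℝ → ℝ} {I : Set ℝ} (hI : IsOpen I)
    (hT : ContDiffOn ℝ (⊤ : ℕ∞) T I) (hX₁ : ContDiffOn ℝ (⊤ : ℕ∞) X₁ I)
    (hT' : ∀ t ∈ I, deriv T t ≠ 0) :
    ∀ k i, ContDiffOn ℝ (⊤ : ℕ∞) (coefC T X₁ k i) I := by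
  have hdT : ContDiffOn ℝ (⊤ : ℕ∞) (deriv T) I := hT.deriv_of_isOpen hI (by norm_num)
  intro k
  induction k with
  | zero =>
    rintro (_|i)
    · exact hX₁
    · exact contDiffOn_const
  | succ k ih =>
    rintro (_|i)
    · exact ((ih 0).deriv_of_isOpen hI (by norm_num)).div hdT hT'
    · exact (((ih (i+1)).deriv_of_isOpen hI (by norm_num)).add (ih i)).div hdT hT'

theorem contDiffOn_coefD {T X₀ : ℝ → ℝ} {I : Set ℝ} (hI : IsOpen I)
    (hT : ContDiffOn ℝ (⊤ : ℕ∞) T I) (hX₀ : ContDiffOn ℝ (⊤ : ℕ∞) X₀ I)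
    (hT' : ∀ t ∈ I, deriv T t ≠ 0) :
    ∀ k, ContDiffOn ℝ (⊤ : ℕ∞) (coefD T X₀ k) I := by
  have hdT : ContDiffOn ℝ (⊤ : ℕ∞) (deriv T) I := hT.deriv_of_isOpen hI (by norm_num)
  intro k
  induction k with
  | zero => exact hX₀
  | succ k ih => exact (ih.deriv_of_isOpen hI (by norm_num)).div hdT hT'

noncomputable def Bco (tgt : ℕ → ℝ → ℝ) (cross : ℕ → ℕ → ℝ → ℝ) (diag : ℕ → ℝ → ℝ) : ℕ → ℝ → ℝ
  | m => fun t =>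
    (tgt m t - ∑ m' ∈ (Finset.range m).attach, Bco tgt cross diag m'.1 t * cross m'.1 m t)
      / diag m t
  decreasing_by exact Finset.mem_range.mp m'.2

theorem Bco_eq (tgt : ℕ → ℝ → ℝ) (cross : ℕ → ℕ → ℝ → ℝ) (diag : ℕ → ℝ → ℝ) (m : ℕ) (t : ℝ) :
    Bco tgt cross diag m t =
    (tgt m t - ∑ m' ∈ (Finset.range m).attach, Bco tgt cross diag m'.1 t * cross m'.1 m t)
      / diag m t := by
  rw [Bco]

theorem Bco_eq' (tgt : ℕ → ℝ → ℝ) (cross : ℕ → ℕ → ℝ → ℝ) (diag : ℕ → ℝ → ℝ) (m : ℕ) (t : ℝ) :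
    Bco tgt cross diag m t =
    (tgt m t - ∑ m' ∈ Finset.range m, Bco tgt cross diag m' t * cross m' m t) / diag m t := by
  rw [Bco_eq]
  congr 1
  congr 1
  exact Finset.sum_attach (Finset.range m) (fun m' => Bco tgt cross diag m' t * cross m' m t)

theorem contDiffOn_Bco {tgt : ℕ → ℝ → ℝ} {cross : ℕ → ℕ → ℝ → ℝ} {diag : ℕ → ℝ → ℝ} {I : Set ℝ}
    (htgt : ∀ m, ContDiffOn ℝ (⊤ : ℕ∞) (tgt m) I)
    (hcross : ∀ m' m, ContDiffOn ℝ (⊤ : ℕ∞) (cross m' m) I)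
    (hdiag : ∀ m, ContDiffOn ℝ (⊤ : ℕ∞) (diag m) I)
    (hdiag0 : ∀ m, ∀ t ∈ I, diag m t ≠ 0) :
    ∀ m, ContDiffOn ℝ (⊤ : ℕ∞) (Bco tgt cross diag m) I := by
  intro m
  induction m using Nat.strong_induction_on with
  | _ m ih =>
    have : ContDiffOn ℝ (⊤ : ℕ∞) (fun t =>
        (tgt m t - ∑ m' ∈ (Finset.range m).attach, Bco tgt cross diag m'.1 t * cross m'.1 m t)
          / diag m t) I := by
      apply ContDiffOn.div _ (hdiag m) (hdiag0 m)
      apply (htgt m).sub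
      apply ContDiffOn.sum
      intro m' _
      exact (ih m'.1 (Finset.mem_range.mp m'.2)).mul (hcross m'.1 m)
    exact this.congr (fun t _ => Bco_eq tgt cross diag m t)

theorem Bco_solve {tgt : ℕ → ℝ → ℝ} {cross : ℕ → ℕ → ℝ → ℝ} {diag : ℕ → ℝ → ℝ} (t : ℝ)
    (m : ℕ) (hd : diag m t ≠ 0) (hcd : cross m m t = diag m t) :
    ∑ m' ∈ Finset.range (m+1), Bco tgt cross diag m' t * cross m' m t = tgt m t := by
  rw [Finset.sum_range_succ, hcd, Bco_eq', div_mul_cancel₀ _ hd]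
  ring

theorem sign_const {T : ℝ → ℝ} {I : Set ℝ} (hIo : IsOpen I) (hIc : Convex ℝ I)
    (hT : ContDiffOn ℝ (⊤:ℕ∞) T I) (hT' : ∀ t ∈ I, deriv T t ≠ 0) :
    Set.InjOn T I := by
  have hc : ContinuousOn (deriv T) I := hT.continuousOn_deriv_of_isOpen hIo (by norm_num)
  have hpc : IsPreconnected ((deriv T) '' I) := (hIc.isPreconnected).image _ hc
  have hoc : OrdConnected ((deriv T) '' I) := hpc.ordConnected
  have hsign : (∀ t ∈ I, 0 < deriv T t) ∨ (∀ t ∈ I, deriv T t < 0) := by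
    by_contra h
    push_neg at h
    obtain ⟨⟨t₁, ht₁, h₁⟩, ⟨t₂, ht₂, h₂⟩⟩ := h
    have h₁' : deriv T t₁ < 0 := lt_of_le_of_ne h₁ (hT' t₁ ht₁)
    have h₂' : 0 < deriv T t₂ := lt_of_le_of_ne h₂ (Ne.symm (hT' t₂ ht₂))
    have : (0:ℝ) ∈ (deriv T) '' I :=
      hoc.out (mem_image_of_mem _ ht₁) (mem_image_of_mem _ ht₂) ⟨h₁'.le, h₂'.le⟩
    obtain ⟨t, ht, h0⟩ := this
    exact hT' t ht h0
  rcases hsign with h | h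
  · exact (strictMonoOn_of_deriv_pos hIc hT.continuousOn
      (fun t ht => h t (hIo.interior_eq ▸ ht))).injOn
  · exact (strictAntiOn_of_deriv_neg hIc hT.continuousOn
      (fun t ht => h t (hIo.interior_eq ▸ ht))).injOn

theorem smooth_inverse {T : ℝ → ℝ} {I : Set ℝ} (hIo : IsOpen I) (hIc : Convex ℝ I)
    (hT : ContDiffOn ℝ (⊤:ℕ∞) T I) (hT' : ∀ t ∈ I, deriv T t ≠ 0) :
    IsOpen (T '' I) ∧ ∃ S : ℝ → ℝ, (∀ t ∈ I, S (T t) = t) ∧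
      (∀ s ∈ T '' I, S s ∈ I ∧ T (S s) = s) ∧ ContDiffOn ℝ (⊤:ℕ∞) S (T '' I) := by
  have hinj := sign_const hIo hIc hT hT'
  set S := Function.invFunOn T I with hSdef
  have hS1 : ∀ t ∈ I, S (T t) = t := fun t ht => hinj.leftInvOn_invFunOn ht
  have hS2 : ∀ s ∈ T '' I, S s ∈ I ∧ T (S s) = s := by
    rintro s ⟨t, ht, rfl⟩
    rw [hS1 t ht]; exact ⟨ht, rfl⟩
  have hopen : IsOpen (T '' I) := by
    rw [isOpen_iff_mem_nhds]
    rintro s ⟨t, ht, rfl⟩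
    have hct : ContDiffAt ℝ (⊤:ℕ∞) T t := hT.contDiffAt (hIo.mem_nhds ht)
    have hsd : HasStrictDerivAt T (deriv T t) t := hct.hasStrictDerivAt (by norm_num)
    have := hsd.map_nhds_eq (hT' t ht)
    rw [← this]
    exact Filter.image_mem_map (hIo.mem_nhds ht)
  refine ⟨hopen, S, hS1, hS2, ?_⟩
  intro s hs
  obtain ⟨t, ht, rfl⟩ := hs
  have hct : ContDiffAt ℝ (⊤:ℕ∞) T t := hT.contDiffAt (hIo.mem_nhds ht)
  have hne : deriv T t ≠ 0 := hT' t ht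
  have hd : HasFDerivAt T
      ((ContinuousLinearEquiv.unitsEquivAut ℝ (Units.mk0 (deriv T t) hne)) : ℝ →L[ℝ] ℝ) t :=
    ((hct.differentiableAt (by norm_num)).hasDerivAt).hasFDerivAt_equiv hne
  have hn : ((⊤:ℕ∞) : WithTop ℕ∞) ≠ 0 := by simp
  have hg_cd : ContDiffAt ℝ (⊤:ℕ∞) (hct.localInverse hd hn) (T t) :=
    hct.to_localInverse hd hn
  have hsf := hct.hasStrictFDerivAt' hd hn
  have hright : ∀ᶠ y in nhds (T t), T (hct.localInverse hd hn y) = y :=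
    hsf.eventually_right_inverse
  have hcont : ContinuousAt (hct.localInverse hd hn) (T t) :=
    hsf.localInverse_continuousAt
  have happ : hct.localInverse hd hn (T t) = t := hct.localInverse_apply_image hd hn
  have hmemI : ∀ᶠ y in nhds (T t), hct.localInverse hd hn y ∈ I := by
    have : I ∈ nhds (hct.localInverse hd hn (T t)) := by rw [happ]; exact hIo.mem_nhds ht
    exact hcont.eventually_mem this
  have heq : S =ᶠ[nhds (T t)] hct.localInverse hd hn := by
    filter_upwards [hright, hmemI] with y h1 h2
    calc S y = S (T (hct.localInverse hd hn y)) := by rw [h1]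
    _ = hct.localInverse hd hn y := hS1 _ h2
  exact (hg_cd.congr_of_eventuallyEq heq).contDiffWithinAt

theorem iter_smooth {f : ℝ → ℝ} {U : Set ℝ} (hU : IsOpen U) (hf : ContDiffOn ℝ (⊤:ℕ∞) f U) :
    ∀ n, ContDiffOn ℝ (⊤:ℕ∞) (iteratedDeriv n f) U := by
  intro n
  induction n with
  | zero => simpa [iteratedDeriv_zero] using hf
  | succ n ih => rw [iteratedDeriv_succ]; exact ih.deriv_of_isOpen hU (by norm_num)

theorem aux_cancel (c : ℝ) (hc : c ≠ 0) (A X : ℝ) : A / c * X * c = A * X := by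
  field_simp

theorem claimA {T X₁ X₀ x y : ℝ → ℝ} {I : Set ℝ} (hIo : IsOpen I) (hJo : IsOpen (T '' I))
    (hT : ContDiffOn ℝ (⊤:ℕ∞) T I) (hT' : ∀ t ∈ I, deriv T t ≠ 0)
    (hx : ContDiffOn ℝ (⊤:ℕ∞) x I)
    (hy : ContDiffOn ℝ (⊤:ℕ∞) y (T '' I))
    (hC : ∀ k i, ContDiffOn ℝ (⊤:ℕ∞) (coefC T X₁ k i) I)
    (hD : ∀ k, ContDiffOn ℝ (⊤:ℕ∞) (coefD T X₀ k) I)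
    (hbase : ∀ t ∈ I, y (T t) = X₁ t * x t + X₀ t) :
    ∀ k, ∀ t ∈ I, iteratedDeriv k y (T t) =
      ∑ i ∈ Finset.range (k+1), coefC T X₁ k i t * iteratedDeriv i x t + coefD T X₀ k t := by
  intro k
  induction k with
  | zero =>
    intro t ht
    simpa [iteratedDeriv_zero, coefC, coefD] using hbase t ht
  | succ k ih =>
    intro t ht
    have hT0 : deriv T t ≠ 0 := hT' t ht
    set F : ℝ → ℝ := fun u => ∑ i ∈ Finset.range (k+1),
        coefC T X₁ k i u * iteratedDeriv i x u + coefD T X₀ k u with hF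
    have hyk : DifferentiableAt ℝ (iteratedDeriv k y) (T t) :=
      ((iter_smooth hJo hy k).contDiffAt (hJo.mem_nhds ⟨t, ht, rfl⟩)).differentiableAt
        (by norm_num)
    have hTt : HasDerivAt T (deriv T t) t :=
      ((hT.contDiffAt (hIo.mem_nhds ht)).differentiableAt (by norm_num)).hasDerivAt
    have hcomp : HasDerivAt (fun u => iteratedDeriv k y (T u))
        (deriv (iteratedDeriv k y) (T t) * deriv T t) t :=
      (hyk.hasDerivAt).comp t hTt
    have hci : ∀ i, HasDerivAt (coefC T X₁ k i) (deriv (coefC T X₁ k i) t) t := fun i =>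
      (((hC k i).contDiffAt (hIo.mem_nhds ht)).differentiableAt (by norm_num)).hasDerivAt
    have hxi : ∀ i, HasDerivAt (iteratedDeriv i x) (iteratedDeriv (i+1) x t) t := by
      intro i
      have := (((iter_smooth hIo hx i).contDiffAt
        (hIo.mem_nhds ht)).differentiableAt (by norm_num)).hasDerivAt
      rwa [← iteratedDeriv_succ] at this
    have hdk : HasDerivAt (coefD T X₀ k) (deriv (coefD T X₀ k) t) t :=
      (((hD k).contDiffAt (hIo.mem_nhds ht)).differentiableAt (by norm_num)).hasDerivAt
    set D : ℝ := ∑ i ∈ Finset.range (k+1), (deriv (coefC T X₁ k i) t * iteratedDeriv i x t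
        + coefC T X₁ k i t * iteratedDeriv (i+1) x t) + deriv (coefD T X₀ k) t with hDdef
    have hFd : HasDerivAt F D t := by
      apply HasDerivAt.add _ hdk
      exact HasDerivAt.fun_sum fun i _ => (hci i).mul (hxi i)
    have heq : (fun u => iteratedDeriv k y (T u)) =ᶠ[nhds t] F :=
      Filter.eventuallyEq_of_mem (hIo.mem_nhds ht) (fun u hu => ih u hu)
    have hcomp' : HasDerivAt (fun u => iteratedDeriv k y (T u)) D t :=
      hFd.congr_of_eventuallyEq heq
    have huniq : deriv (iteratedDeriv k y) (T t) * deriv T t = D := hcomp.unique hcomp'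
    have hz : deriv (coefC T X₁ k (k+1)) = fun _ => (0:ℝ) := by
      rw [coefC_zero T X₁ k (k+1) (by omega)]
      funext u
      simp
    have key : (∑ i ∈ Finset.range (k+1+1), coefC T X₁ (k+1) i t * iteratedDeriv i x t
        + coefD T X₀ (k+1) t) * deriv T t = D := by
      rw [add_mul, Finset.sum_mul, Finset.sum_range_succ']
      have e1 : ∀ i, coefC T X₁ (k+1) (i+1) t * iteratedDeriv (i+1) x t * deriv T t
          = (deriv (coefC T X₁ k (i+1)) t + coefC T X₁ k i t) * iteratedDeriv (i+1) x t := by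
        intro i
        show (deriv (coefC T X₁ k (i+1)) t + coefC T X₁ k i t) / deriv T t
          * iteratedDeriv (i+1) x t * deriv T t = _
        exact aux_cancel _ hT0 _ _
      have e0 : coefC T X₁ (k+1) 0 t * iteratedDeriv 0 x t * deriv T t
          = deriv (coefC T X₁ k 0) t * iteratedDeriv 0 x t := by
        show deriv (coefC T X₁ k 0) t / deriv T t * iteratedDeriv 0 x t * deriv T t = _
        exact aux_cancel _ hT0 _ _
      have eD : coefD T X₀ (k+1) t * deriv T t = deriv (coefD T X₀ k) t := by
        show deriv (coefD T X₀ k) t / deriv T t * deriv T t = _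
        exact div_mul_cancel₀ _ hT0
      calc (∑ i ∈ Finset.range (k+1), coefC T X₁ (k+1) (i+1) t * iteratedDeriv (i+1) x t
            * deriv T t) + coefC T X₁ (k+1) 0 t * iteratedDeriv 0 x t * deriv T t
            + coefD T X₀ (k+1) t * deriv T t
          = (∑ i ∈ Finset.range (k+1), (deriv (coefC T X₁ k (i+1)) t + coefC T X₁ k i t)
              * iteratedDeriv (i+1) x t) + deriv (coefC T X₁ k 0) t * iteratedDeriv 0 x t
              + deriv (coefD T X₀ k) t := by
            rw [Finset.sum_congr rfl (fun i _ => e1 i), e0, eD]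
        _ = D := by
            rw [hDdef]
            rw [Finset.sum_congr rfl (fun i (_ : i ∈ Finset.range (k+1)) =>
              add_mul (deriv (coefC T X₁ k (i+1)) t) (coefC T X₁ k i t)
                (iteratedDeriv (i+1) x t)), Finset.sum_add_distrib, Finset.sum_add_distrib]
            have hre : ∑ i ∈ Finset.range (k+1), deriv (coefC T X₁ k i) t * iteratedDeriv i x t
                = (∑ i ∈ Finset.range (k+1), deriv (coefC T X₁ k (i+1)) t
                    * iteratedDeriv (i+1) x t) + deriv (coefC T X₁ k 0) t
                    * iteratedDeriv 0 x t := by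
              have : ∑ i ∈ Finset.range (k+2), deriv (coefC T X₁ k i) t * iteratedDeriv i x t
                  = ∑ i ∈ Finset.range (k+1), deriv (coefC T X₁ k i) t * iteratedDeriv i x t := by
                rw [Finset.sum_range_succ, hz]
                simp
              rw [← this, Finset.sum_range_succ']
            rw [hre]
            ring
    have hgoal : iteratedDeriv (k+1) y (T t) * deriv T t = D := by
      rw [iteratedDeriv_succ]
      exact huniq
    have := key.trans hgoal.symm
    exact (mul_right_cancel₀ hT0 this).symm

theorem assemble (r : ℕ) (c : ℕ → ℕ → ℝ) (A aa X dd : ℕ → ℝ) (bb : ℝ)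
    (hF2 : X r + ∑ j ∈ Finset.range r, aa j * X j = bb)
    (hF3 : ∀ j < r, ∑ i ∈ Finset.range r, A i * c i j = c r r * aa j - c r j)
    (hF4 : ∀ i j, i < j → c i j = 0) :
    (∑ j ∈ Finset.range (r+1), c r j * X j + dd r)
      + ∑ i ∈ Finset.range r, A i * (∑ j ∈ Finset.range (i+1), c i j * X j + dd i)
    = c r r * bb + dd r + ∑ i ∈ Finset.range r, A i * dd i := by
  have h1 : ∀ i ∈ Finset.range r, ∑ j ∈ Finset.range (i+1), c i j * X j
      = ∑ j ∈ Finset.range r, c i j * X j := by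
    intro i hi
    rw [Finset.mem_range] at hi
    apply Finset.sum_subset (Finset.range_subset_range.2 (by omega))
    intro j _ hj
    rw [Finset.mem_range] at hj
    rw [hF4 i j (by omega), zero_mul]
  have h2 : ∑ i ∈ Finset.range r, A i * (∑ j ∈ Finset.range (i+1), c i j * X j + dd i)
      = (∑ j ∈ Finset.range r, (∑ i ∈ Finset.range r, A i * c i j) * X j)
        + ∑ i ∈ Finset.range r, A i * dd i := by
    calc ∑ i ∈ Finset.range r, A i * (∑ j ∈ Finset.range (i+1), c i j * X j + dd i)
        = ∑ i ∈ Finset.range r,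
            (A i * ∑ j ∈ Finset.range r, c i j * X j + A i * dd i) := by
          apply Finset.sum_congr rfl
          intro i hi
          rw [h1 i hi, mul_add]
      _ = (∑ i ∈ Finset.range r, ∑ j ∈ Finset.range r, A i * (c i j * X j))
            + ∑ i ∈ Finset.range r, A i * dd i := by
          rw [Finset.sum_add_distrib]
          congr 1
          apply Finset.sum_congr rfl
          intro i _
          rw [Finset.mul_sum]
      _ = (∑ j ∈ Finset.range r, ∑ i ∈ Finset.range r, A i * (c i j * X j))
            + ∑ i ∈ Finset.range r, A i * dd i := by rw [Finset.sum_comm]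
      _ = (∑ j ∈ Finset.range r, (∑ i ∈ Finset.range r, A i * c i j) * X j)
            + ∑ i ∈ Finset.range r, A i * dd i := by
          congr 1
          apply Finset.sum_congr rfl
          intro j _
          rw [Finset.sum_mul]
          apply Finset.sum_congr rfl
          intro i _
          ring
  rw [h2]
  have h3 : ∑ j ∈ Finset.range r, (∑ i ∈ Finset.range r, A i * c i j) * X j
      = c r r * (∑ j ∈ Finset.range r, aa j * X j) - ∑ j ∈ Finset.range r, c r j * X j := by
    calc ∑ j ∈ Finset.range r, (∑ i ∈ Finset.range r, A i * c i j) * X j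
        = ∑ j ∈ Finset.range r, (c r r * (aa j * X j) - c r j * X j) := by
          apply Finset.sum_congr rfl
          intro j hj
          rw [Finset.mem_range] at hj
          rw [hF3 j hj]
          ring
      _ = _ := by rw [Finset.sum_sub_distrib, Finset.mul_sum]
  rw [h3, Finset.sum_range_succ]
  linear_combination c r r * hF2

/-- every fiber-preserving transformation `t̃ = T(t)`, `x̃ = X₁(t)x + X₀(t)`
with `T' X₁ ≠ 0` maps every `r`-th order linear ODE on `I` to an `r`-th order linear ODE
on `T(I)` with smooth coefficients. -/
theorem stmt1 (r : ℕ) (hr : 2 ≤ r) (I : Set ℝ) (hI : IsOpenInterval I)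
    (T X₁ X₀ : ℝ → ℝ)
    (hT : ContDiffOn ℝ (⊤ : ℕ∞) T I) (hX₁ : ContDiffOn ℝ (⊤ : ℕ∞) X₁ I) (hX₀ : ContDiffOn ℝ (⊤ : ℕ∞) X₀ I)
    (hTX : ∀ t ∈ I, deriv T t * X₁ t ≠ 0)
    (a : ℕ → ℝ → ℝ) (b : ℝ → ℝ)
    (ha : ∀ i, ContDiffOn ℝ (⊤ : ℕ∞) (a i) I) (hb : ContDiffOn ℝ (⊤ : ℕ∞) b I) :
    ∃ (a' : ℕ → ℝ → ℝ) (b' : ℝ → ℝ),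
      (∀ i, ContDiffOn ℝ (⊤ : ℕ∞) (a' i) (T '' I)) ∧ ContDiffOn ℝ (⊤ : ℕ∞) b' (T '' I) ∧
      ∀ x : ℝ → ℝ, IsSolODE r a b I x →
        ∃ y : ℝ → ℝ, IsSolODE r a' b' (T '' I) y ∧
          ∀ t ∈ I, y (T t) = X₁ t * x t + X₀ t := by
  obtain ⟨hIo, hIoc, -⟩ := hI
  have hIc : Convex ℝ I := convex_iff_ordConnected.mpr hIoc
  have hT' : ∀ t ∈ I, deriv T t ≠ 0 := fun t ht => left_ne_zero_of_mul (hTX t ht)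
  have hX₁' : ∀ t ∈ I, X₁ t ≠ 0 := fun t ht => right_ne_zero_of_mul (hTX t ht)
  obtain ⟨hJo, S, hS1, hS2, hSsm⟩ := smooth_inverse hIo hIc hT hT'
  have hmaps : Set.MapsTo S (T '' I) I := fun s hs => (hS2 s hs).1
  have hC := contDiffOn_coefC hIo hT hX₁ hT'
  have hD := contDiffOn_coefD hIo hT hX₀ hT'
  have hCdiag : ∀ k, ∀ t ∈ I, coefC T X₁ k k t ≠ 0 := by
    intro k t ht
    rw [coefC_diag]
    exact div_ne_zero (hX₁' t ht) (pow_ne_zero _ (hT' t ht))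
  -- the transformed coefficients (as functions on I, pre-composition with S)
  set tgt : ℕ → ℝ → ℝ := fun m t => coefC T X₁ r r t * a (r-1-m) t - coefC T X₁ r (r-1-m) t
    with htgt_def
  set cross : ℕ → ℕ → ℝ → ℝ := fun m' m t => coefC T X₁ (r-1-m') (r-1-m) t with hcross_def
  set diag : ℕ → ℝ → ℝ := fun m t => coefC T X₁ (r-1-m) (r-1-m) t with hdiag_def
  set B : ℕ → ℝ → ℝ := Bco tgt cross diag with hB_def
  have hBsm : ∀ m, ContDiffOn ℝ (⊤ : ℕ∞) (B m) I := by
    apply contDiffOn_Bco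
    · exact fun m => ((hC r r).mul (ha _)).sub (hC r _)
    · exact fun m' m => hC _ _
    · exact fun m => hC _ _
    · exact fun m t ht => hCdiag _ t ht
  set A : ℕ → ℝ → ℝ := fun j => B (r-1-j) with hA_def
  -- key linear-system identity
  have hF3 : ∀ t ∈ I, ∀ j < r, ∑ i ∈ Finset.range r, A i t * coefC T X₁ i j t
      = coefC T X₁ r r t * a j t - coefC T X₁ r j t := by
    intro t ht j hj
    set m : ℕ := r - 1 - j with hm
    have hjm : r - 1 - m = j := by omega
    have hmr : m < r := by omega
    have hrefl : ∑ i ∈ Finset.range r, A i t * coefC T X₁ i j t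
        = ∑ m' ∈ Finset.range r, A (r-1-m') t * coefC T X₁ (r-1-m') j t := by
      rw [Finset.sum_range_reflect (fun i => A i t * coefC T X₁ i j t) r]
    rw [hrefl]
    have hstep : ∀ m' ∈ Finset.range r, A (r-1-m') t * coefC T X₁ (r-1-m') j t
        = B m' t * cross m' m t := by
      intro m' hm'
      rw [Finset.mem_range] at hm'
      have : r - 1 - (r - 1 - m') = m' := by omega
      rw [hA_def]
      simp only [this, hcross_def, hjm]
    rw [Finset.sum_congr rfl hstep]
    have hsub : ∑ m' ∈ Finset.range r, B m' t * cross m' m t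
        = ∑ m' ∈ Finset.range (m+1), B m' t * cross m' m t := by
      symm
      apply Finset.sum_subset (Finset.range_subset_range.2 (by omega))
      intro m' hmem hm'
      rw [Finset.mem_range] at hmem hm'
      have hzero : cross m' m t = 0 := by
        show coefC T X₁ (r-1-m') (r-1-m) t = 0
        have h' : r - 1 - m' < r - 1 - m := by omega
        rw [coefC_zero T X₁ (r-1-m') (r-1-m) h']
      rw [hzero, mul_zero]
    have hd0 : diag m t ≠ 0 := by
      show coefC T X₁ (r-1-m) (r-1-m) t ≠ 0
      exact hCdiag _ t ht
    rw [hsub, hB_def,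
      Bco_solve (tgt := tgt) (cross := cross) (diag := diag) t m hd0 rfl]
    show coefC T X₁ r r t * a (r-1-m) t - coefC T X₁ r (r-1-m) t = _
    rw [hjm]
  -- define transformed coefficients on T '' I
  refine ⟨fun i => if i < r then (fun s => A i (S s)) else (fun _ => 0),
    fun s => coefC T X₁ r r (S s) * b (S s) + coefD T X₀ r (S s)
      + ∑ i ∈ Finset.range r, A i (S s) * coefD T X₀ i (S s), ?_, ?_, ?_⟩
  · intro i
    by_cases hi : i < r
    · simp only [hi, if_true]
      exact (hBsm _).comp hSsm hmaps
    · simp only [hi, if_false]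
      exact contDiffOn_const
  · apply ContDiffOn.add
    apply ContDiffOn.add
    · exact (((hC r r).comp hSsm hmaps).mul (hb.comp hSsm hmaps))
    · exact (hD r).comp hSsm hmaps
    · apply ContDiffOn.sum
      intro i _
      exact ((hBsm _).comp hSsm hmaps).mul ((hD i).comp hSsm hmaps)
  · rintro x ⟨hxsm, hxeq⟩
    set y : ℝ → ℝ := fun s => X₁ (S s) * x (S s) + X₀ (S s) with hy_def
    have hysm : ContDiffOn ℝ (⊤ : ℕ∞) y (T '' I) :=
      ((hX₁.comp hSsm hmaps).mul (hxsm.comp hSsm hmaps)).add (hX₀.comp hSsm hmaps)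
    have hbase : ∀ t ∈ I, y (T t) = X₁ t * x t + X₀ t := by
      intro t ht
      simp only [hy_def, hS1 t ht]
    have hiter := claimA hIo hJo hT hT' hxsm hysm hC hD hbase
    refine ⟨y, ⟨hysm, ?_⟩, hbase⟩
    rintro s ⟨t, ht, rfl⟩
    have hSt : S (T t) = t := hS1 t ht
    have hode : iteratedDeriv r x t + ∑ j ∈ Finset.range r, a j t * iteratedDeriv j x t = b t :=
      hxeq t ht
    unfold odeLHS
    have hsum : ∑ i ∈ Finset.range r,
        (if i < r then (fun s => A i (S s)) else (fun _ => (0:ℝ))) (T t) * iteratedDeriv i y (T t)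
        = ∑ i ∈ Finset.range r, A i t
          * (∑ j ∈ Finset.range (i+1), coefC T X₁ i j t * iteratedDeriv j x t
              + coefD T X₀ i t) := by
      apply Finset.sum_congr rfl
      intro i hi
      rw [Finset.mem_range] at hi
      simp only [hi, if_true, hSt, hiter i t ht]
    rw [hsum, hiter r t ht]
    have := assemble r (fun i j => coefC T X₁ i j t) (fun i => A i t) (fun j => a j t)
      (fun j => iteratedDeriv j x t) (fun i => coefD T X₀ i t) (b t)
      (by simpa using hode)
      (fun j hj => hF3 t ht j hj)
      (fun i j hij => by
        show coefC T X₁ i j t = 0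
        rw [coefC_zero T X₁ i j hij])
    rw [this]
    simp only [hSt]
end

section
/- Let a₁, a₀, b be smooth functions on an open interval I ⊆ ℝ, let φ₀ : I → ℝ be a solution of the second-order linear ODE x'' + a₁x' + a₀x = b, and let φ₁, φ₂ : I → ℝ be solutions of the associated homogeneous equation x'' + a₁x' + a₀x = 0 such that φ₁(t) ≠ 0 and the Wronskian φ₁(t)φ₂'(t) − φ₂(t)φ₁'(t) ≠ 0 for all t ∈ I. Set T = φ₂/φ₁, so T' ≠ 0 on I and T is a diffeomorphism of I onto T(I). Then for every solution x of x'' + a₁x' + a₀x = b, the function y : T(I) → ℝ defined by y(T(t)) = (x(t) − φ₀(t))/φ₁(t) is smooth and satisfies y'' = 0 on T(I). (The Arnold transformation t̃ = φ₂/φ₁, x̃ = (x − φ₀)/φ₁ reduces every second-order linear ODE to the free particle equation x'' = 0.) -/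
open Set

/-- Constancy from zero derivative on an open convex set. -/
lemma myConstOf {I : Set ℝ} (hIo : IsOpen I) (hconv : Convex ℝ I) {f : ℝ → ℝ}
    (hd : ∀ t ∈ I, DifferentiableAt ℝ f t) (h0 : ∀ t ∈ I, deriv f t = 0) :
    ∀ t ∈ I, ∀ s ∈ I, f t = f s := by
  intro t ht s hs
  refine hconv.is_const_of_fderivWithin_eq_zero
    (fun z hz => (hd z hz).differentiableWithinAt) (fun z hz => ?_) ht hs
  rw [fderivWithin_of_isOpen hIo hz, ← toSpanSingleton_deriv, h0 z hz]
  ext; simp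

/-- Derivative of the Wronskian of two solutions of the homogeneous equation. -/
lemma myWronskianDeriv {I : Set ℝ} (hIo : IsOpen I) (a₀ a₁ : ℝ → ℝ) {f g : ℝ → ℝ}
    (hf : ContDiffOn ℝ (⊤ : ℕ∞) f I) (hg : ContDiffOn ℝ (⊤ : ℕ∞) g I)
    (hfe : ∀ t ∈ I, iteratedDeriv 2 f t + a₁ t * deriv f t + a₀ t * f t = 0)
    (hge : ∀ t ∈ I, iteratedDeriv 2 g t + a₁ t * deriv g t + a₀ t * g t = 0) :
    ∀ t ∈ I, deriv (fun s => f s * deriv g s - g s * deriv f s) t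
      = -a₁ t * (f t * deriv g t - g t * deriv f t) := by
  intro t ht
  have hf' : ContDiffOn ℝ (⊤ : ℕ∞) (deriv f) I := hf.deriv_of_isOpen hIo (by simp)
  have hg' : ContDiffOn ℝ (⊤ : ℕ∞) (deriv g) I := hg.deriv_of_isOpen hIo (by simp)
  have dft : DifferentiableAt ℝ f t := (hf.contDiffAt (hIo.mem_nhds ht)).differentiableAt (by simp)
  have dgt : DifferentiableAt ℝ g t := (hg.contDiffAt (hIo.mem_nhds ht)).differentiableAt (by simp)
  have dft' : DifferentiableAt ℝ (deriv f) t :=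
    (hf'.contDiffAt (hIo.mem_nhds ht)).differentiableAt (by simp)
  have dgt' : DifferentiableAt ℝ (deriv g) t :=
    (hg'.contDiffAt (hIo.mem_nhds ht)).differentiableAt (by simp)
  have hif : iteratedDeriv 2 f t = deriv (deriv f) t := by
    rw [show (2:ℕ) = 1 + 1 by rfl, iteratedDeriv_succ, iteratedDeriv_one]
  have hig : iteratedDeriv 2 g t = deriv (deriv g) t := by
    rw [show (2:ℕ) = 1 + 1 by rfl, iteratedDeriv_succ, iteratedDeriv_one]
  have h1 := hfe t ht
  have h2 := hge t ht
  rw [hif] at h1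
  rw [hig] at h2
  rw [deriv_fun_sub (f := fun s => f s * deriv g s) (g := fun s => g s * deriv f s) (dft.mul dgt') (dgt.mul dft'), deriv_fun_mul dft dgt', deriv_fun_mul dgt dft']
  linear_combination f t * h2 - g t * h1

/-- the Arnold transformation `t̃ = φ₂/φ₁`, `x̃ = (x − φ₀)/φ₁` reduces every
second-order linear ODE `x'' + a₁x' + a₀x = b` to the free particle equation `y'' = 0`. -/
theorem stmt2 (I : Set ℝ) (hI : IsOpenInterval I) (a₀ a₁ b : ℝ → ℝ)
    (ha₀ : ContDiffOn ℝ (⊤ : ℕ∞) a₀ I) (ha₁ : ContDiffOn ℝ (⊤ : ℕ∞) a₁ I) (hb : ContDiffOn ℝ (⊤ : ℕ∞) b I)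
    (φ₀ φ₁ φ₂ : ℝ → ℝ)
    (hφ₀ : ContDiffOn ℝ (⊤ : ℕ∞) φ₀ I ∧
      ∀ t ∈ I, iteratedDeriv 2 φ₀ t + a₁ t * deriv φ₀ t + a₀ t * φ₀ t = b t)
    (hφ₁ : ContDiffOn ℝ (⊤ : ℕ∞) φ₁ I ∧
      ∀ t ∈ I, iteratedDeriv 2 φ₁ t + a₁ t * deriv φ₁ t + a₀ t * φ₁ t = 0)
    (hφ₂ : ContDiffOn ℝ (⊤ : ℕ∞) φ₂ I ∧
      ∀ t ∈ I, iteratedDeriv 2 φ₂ t + a₁ t * deriv φ₂ t + a₀ t * φ₂ t = 0)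
    (hφ₁ne : ∀ t ∈ I, φ₁ t ≠ 0)
    (hW : ∀ t ∈ I, φ₁ t * deriv φ₂ t - φ₂ t * deriv φ₁ t ≠ 0) :
    (∀ t ∈ I, deriv (fun s => φ₂ s / φ₁ s) t ≠ 0) ∧
    ∀ x : ℝ → ℝ,
      (ContDiffOn ℝ (⊤ : ℕ∞) x I ∧
        ∀ t ∈ I, iteratedDeriv 2 x t + a₁ t * deriv x t + a₀ t * x t = b t) →
      ∃ y : ℝ → ℝ, ContDiffOn ℝ (⊤ : ℕ∞) y ((fun s => φ₂ s / φ₁ s) '' I) ∧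
        (∀ s ∈ (fun s => φ₂ s / φ₁ s) '' I, iteratedDeriv 2 y s = 0) ∧
        ∀ t ∈ I, y (φ₂ t / φ₁ t) = (x t - φ₀ t) / φ₁ t := by
  obtain ⟨hIo, hIc, t₀, ht₀⟩ := hI
  have hconv : Convex ℝ I := hIc.convex
  -- differentiability helpers
  have dAt : ∀ {f : ℝ → ℝ}, ContDiffOn ℝ (⊤ : ℕ∞) f I → ∀ t ∈ I, DifferentiableAt ℝ f t :=
    fun hf t ht => (hf.contDiffAt (hIo.mem_nhds ht)).differentiableAt (by simp)
  have dAt' : ∀ {f : ℝ → ℝ}, ContDiffOn ℝ (⊤ : ℕ∞) f I → ∀ t ∈ I, DifferentiableAt ℝ (deriv f) t :=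
    fun hf t ht => dAt (hf.deriv_of_isOpen hIo (by simp)) t ht
  have d1 := dAt hφ₁.1; have d2 := dAt hφ₂.1
  have d1' := dAt' hφ₁.1; have d2' := dAt' hφ₂.1
  constructor
  · intro t ht
    rw [deriv_fun_div (d2 t ht) (d1 t ht) (hφ₁ne t ht)]
    apply div_ne_zero
    · intro h; apply hW t ht; linarith
    · exact pow_ne_zero 2 (hφ₁ne t ht)
  intro x hx
  -- u = x - φ₀ solves the homogeneous equation
  set u : ℝ → ℝ := fun t => x t - φ₀ t with hu_def
  have hu : ContDiffOn ℝ (⊤ : ℕ∞) u I := hx.1.sub hφ₀.1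
  have du := dAt hu; have du' := dAt' hu
  have hueq : ∀ t ∈ I, iteratedDeriv 2 u t + a₁ t * deriv u t + a₀ t * u t = 0 := by
    intro t ht
    have hderiv : ∀ s ∈ I, deriv u s = deriv x s - deriv φ₀ s := fun s hs =>
      deriv_sub (dAt hx.1 s hs) (dAt hφ₀.1 s hs)
    have h2 : iteratedDeriv 2 u t = iteratedDeriv 2 x t - iteratedDeriv 2 φ₀ t := by
      have e : ∀ f : ℝ → ℝ, iteratedDeriv 2 f = deriv (deriv f) := by
        intro f
        rw [show (2:ℕ) = 1 + 1 by rfl, iteratedDeriv_succ, iteratedDeriv_one]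
      rw [e u, e x, e φ₀]
      have hev : deriv u =ᶠ[nhds t] fun s => deriv x s - deriv φ₀ s := by
        filter_upwards [hIo.mem_nhds ht] with s hs using hderiv s hs
      rw [hev.deriv_eq]
      exact deriv_sub (dAt' hx.1 t ht) (dAt' hφ₀.1 t ht)
    have := hx.2 t ht; have := hφ₀.2 t ht
    rw [h2, hderiv t ht]; ring_nf; linarith
  -- Wronskian derivatives
  have hW12' := myWronskianDeriv hIo a₀ a₁ hφ₁.1 hφ₂.1 hφ₁.2 hφ₂.2
  have hW1u' := myWronskianDeriv hIo a₀ a₁ hφ₁.1 hu hφ₁.2 hueq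
  -- the ratio of Wronskians is constant
  set W12 : ℝ → ℝ := fun s => φ₁ s * deriv φ₂ s - φ₂ s * deriv φ₁ s with hW12_def
  set W1u : ℝ → ℝ := fun s => φ₁ s * deriv u s - u s * deriv φ₁ s with hW1u_def
  have dW12 : ∀ t ∈ I, DifferentiableAt ℝ W12 t := fun t ht =>
    ((d1 t ht).mul (d2' t ht)).sub ((d2 t ht).mul (d1' t ht))
  have dW1u : ∀ t ∈ I, DifferentiableAt ℝ W1u t := fun t ht =>
    ((d1 t ht).mul (du' t ht)).sub ((du t ht).mul (d1' t ht))
  have hq0 : ∀ t ∈ I, deriv (fun s => W1u s / W12 s) t = 0 := by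
    intro t ht
    rw [deriv_fun_div (dW1u t ht) (dW12 t ht) (hW t ht), hW12' t ht, hW1u' t ht,
      div_eq_zero_iff]
    left
    simp only [hW1u_def, hW12_def]
    ring
  set c₂ : ℝ := W1u t₀ / W12 t₀ with hc₂_def
  have hc₂ : ∀ t ∈ I, W1u t = c₂ * W12 t := by
    intro t ht
    have := myConstOf (f := fun s => W1u s / W12 s) hIo hconv
      (fun s hs => (dW1u s hs).div (dW12 s hs) (hW s hs)) hq0 t ht t₀ ht₀
    rw [div_eq_iff (hW t ht)] at this
    exact this
  -- g = (u - c₂ φ₂)/φ₁ is constant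
  have dnum : ∀ t ∈ I, DifferentiableAt ℝ (fun s => u s - c₂ * φ₂ s) t := fun t ht =>
    (du t ht).sub ((differentiableAt_const c₂).mul (d2 t ht))
  have hg0 : ∀ t ∈ I, deriv (fun s => (u s - c₂ * φ₂ s) / φ₁ s) t = 0 := by
    intro t ht
    rw [deriv_fun_div (dnum t ht) (d1 t ht) (hφ₁ne t ht)]
    have hd : deriv (fun s => u s - c₂ * φ₂ s) t = deriv u t - c₂ * deriv φ₂ t := by
      rw [deriv_fun_sub (g := fun s => c₂ * φ₂ s) (du t ht) ((differentiableAt_const c₂).mul (d2 t ht)),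
        deriv_const_mul _ (d2 t ht)]
    rw [hd]
    apply div_eq_zero_iff.2
    left
    have h := hc₂ t ht
    have h' : φ₁ t * deriv u t - u t * deriv φ₁ t
        = c₂ * (φ₁ t * deriv φ₂ t - φ₂ t * deriv φ₁ t) := h
    nlinarith [h']
  set c₁ : ℝ := (u t₀ - c₂ * φ₂ t₀) / φ₁ t₀ with hc₁_def
  have hc₁ : ∀ t ∈ I, (u t - c₂ * φ₂ t) / φ₁ t = c₁ := by
    intro t ht
    exact myConstOf hIo hconv
      (fun s hs => (dnum s hs).div (d1 s hs) (hφ₁ne s hs)) hg0 t ht t₀ ht₀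
  refine ⟨fun s => c₁ + c₂ * s, ?_, ?_, ?_⟩
  · exact (contDiff_const.add (contDiff_const.mul contDiff_id)).contDiffOn
  · intro s _
    have h1 : deriv (fun s : ℝ => c₁ + c₂ * s) = fun _ => c₂ := by
      funext z
      rw [deriv_const_add]
      rw [deriv_const_mul _ differentiableAt_id]
      simp
    rw [show (2:ℕ) = 1 + 1 by rfl, iteratedDeriv_succ, iteratedDeriv_one, h1]
    simp
  · intro t ht
    have hg := hc₁ t ht
    have h1 := hφ₁ne t ht
    have hg' : x t - φ₀ t - c₂ * φ₂ t = c₁ * φ₁ t := by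
      rw [div_eq_iff h1] at hg
      exact hg
    field_simp
    linarith
end

section
/- Let r ≥ 3, let E be a homogeneous r-th order linear ODE on an open interval I, and let T, X₁, X₀ : I → ℝ be smooth with T'(t)X₁(t) ≠ 0 for all t ∈ I. Then the following are equivalent: (i) there exists a homogeneous r-th order linear ODE Ẽ on T(I) such that the fiber-preserving transformation t̃ = T(t), x̃ = X₁(t)x + X₀(t) maps E to Ẽ and its inverse maps Ẽ to E (i.e., for every solution y of Ẽ the function t ↦ (y(T(t)) − X₀(t))/X₁(t) is a solution of E); (ii) X₀/X₁ is a solution of E. -/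
open Set

/-- The fiber-preserving transformation `t̃ = T(t)`, `x̃ = X₁(t)x + X₀(t)` maps the
`r`-th order linear ODE with coefficients `a`, `b` on `I` to the one with coefficients
`a'`, `b'` on `T(I)`: for every solution `x` of the source equation the function
`y(s) = X₁(T⁻¹(s))x(T⁻¹(s)) + X₀(T⁻¹(s))` is a solution of the target equation. -/
def FPMapsODE (r : ℕ) (I : Set ℝ) (a : ℕ → ℝ → ℝ) (b : ℝ → ℝ)
    (a' : ℕ → ℝ → ℝ) (b' : ℝ → ℝ) (T X₁ X₀ : ℝ → ℝ) : Prop :=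
  ∀ x : ℝ → ℝ, IsSolODE r a b I x →
    ∃ y : ℝ → ℝ, IsSolODE r a' b' (T '' I) y ∧ ∀ t ∈ I, y (T t) = X₁ t * x t + X₀ t

noncomputable def fCoef (T X₁ : ℝ → ℝ) : ℕ → ℕ → ℝ → ℝ
  | 0 => fun j => if j = 0 then X₁ else fun _ => 0
  | (k+1) => fun j t =>
      (deriv (fCoef T X₁ k j) t + if j = 0 then 0 else fCoef T X₁ k (j-1) t) / deriv T t

noncomputable def Acoef (T X₁ : ℝ → ℝ) (a : ℕ → ℝ → ℝ) (r : ℕ) : ℕ → ℝ → ℝ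
  | m => fun t =>
    (fCoef T X₁ r r t * a (r-1-m) t - fCoef T X₁ r (r-1-m) t
      - ∑ p ∈ (Finset.range m).attach,
          Acoef T X₁ a r p.1 t * fCoef T X₁ (r-1-p.1) (r-1-m) t)
      / fCoef T X₁ (r-1-m) (r-1-m) t
  decreasing_by exact Finset.mem_range.mp p.2

theorem Acoef_def (T X₁ : ℝ → ℝ) (a : ℕ → ℝ → ℝ) (r m : ℕ) (t : ℝ) :
    Acoef T X₁ a r m t
    = (fCoef T X₁ r r t * a (r-1-m) t - fCoef T X₁ r (r-1-m) t
      - ∑ p ∈ Finset.range m, Acoef T X₁ a r p t * fCoef T X₁ (r-1-p) (r-1-m) t)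
      / fCoef T X₁ (r-1-m) (r-1-m) t := by
  rw [Acoef, ← Finset.sum_attach (Finset.range m) (fun p => Acoef T X₁ a r p t * fCoef T X₁ (r-1-p) (r-1-m) t)]

theorem sumSwap (n : ℕ) (F : ℕ → ℕ → ℝ) :
    ∑ i ∈ Finset.range n, ∑ j ∈ Finset.range (i+1), F i j
    = ∑ j ∈ Finset.range n, ∑ i ∈ Finset.Ico j n, F i j := by
  induction n with
  | zero => simp
  | succ n ih =>
      rw [Finset.sum_range_succ, ih]
      have h1 : ∀ j ∈ Finset.range (n+1), ∑ i ∈ Finset.Ico j (n+1), F i j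
          = (∑ i ∈ Finset.Ico j n, F i j) + F n j := by
        intro j hj
        rw [Finset.sum_Ico_succ_top (Nat.lt_succ_iff.mp (Finset.mem_range.mp hj))]
      rw [Finset.sum_congr rfl h1, Finset.sum_add_distrib, Finset.sum_range_succ (fun j => ∑ i ∈ Finset.Ico j n, F i j), Finset.Ico_self, Finset.sum_empty, add_zero]

theorem fCoef_eq_zero (T X₁ : ℝ → ℝ) : ∀ k j, k < j → fCoef T X₁ k j = fun _ => 0 := by
  intro k
  induction k with
  | zero =>
      intro j hj
      rw [show fCoef T X₁ 0 j = if j = 0 then X₁ else fun _ => 0 from rfl,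
        if_neg (by omega : ¬ j = 0)]
  | succ k ih =>
      intro j hj
      funext t
      have h1 : fCoef T X₁ k j = fun _ => 0 := ih j (lt_of_le_of_lt (Nat.le_succ k) hj)
      have h2 : j ≠ 0 := by omega
      have h3 : fCoef T X₁ k (j-1) = fun _ => 0 := ih (j-1) (by omega)
      simp [fCoef, h1, h2, h3]

theorem iterSmooth {f : ℝ → ℝ} {s : Set ℝ} (hs : IsOpen s)
    (hf : ContDiffOn ℝ (⊤ : ℕ∞) f s) (n : ℕ) :
    ContDiffOn ℝ (⊤ : ℕ∞) (iteratedDeriv n f) s := by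
  induction n with
  | zero => simpa [iteratedDeriv_zero] using hf
  | succ n ih =>
      rw [iteratedDeriv_succ]
      exact ih.deriv_of_isOpen hs (by exact_mod_cast le_top)

theorem iterDiffAt {f : ℝ → ℝ} {s : Set ℝ} (hs : IsOpen s)
    (hf : ContDiffOn ℝ (⊤ : ℕ∞) f s) (n : ℕ) {t : ℝ} (ht : t ∈ s) :
    DifferentiableAt ℝ (iteratedDeriv n f) t :=
  (((iterSmooth hs hf n) t ht).contDiffAt (hs.mem_nhds ht)).differentiableAt
    (by simp)

theorem diffAtOf {f : ℝ → ℝ} {s : Set ℝ} (hs : IsOpen s)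
    (hf : ContDiffOn ℝ (⊤ : ℕ∞) f s) {t : ℝ} (ht : t ∈ s) :
    DifferentiableAt ℝ f t :=
  ((hf t ht).contDiffAt (hs.mem_nhds ht)).differentiableAt (by simp)

theorem fCoef_smooth {T X₁ : ℝ → ℝ} {I : Set ℝ} (hI : IsOpen I)
    (hT : ContDiffOn ℝ (⊤ : ℕ∞) T I) (hX₁ : ContDiffOn ℝ (⊤ : ℕ∞) X₁ I)
    (hT' : ∀ t ∈ I, deriv T t ≠ 0) :
    ∀ k j, ContDiffOn ℝ (⊤ : ℕ∞) (fCoef T X₁ k j) I := by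
  have hdT : ContDiffOn ℝ (⊤ : ℕ∞) (deriv T) I :=
    hT.deriv_of_isOpen hI (by exact_mod_cast le_top)
  intro k
  induction k with
  | zero =>
      intro j
      by_cases hj : j = 0 <;> simp [fCoef, hj] <;> first | exact hX₁ | exact contDiffOn_const
  | succ k ih =>
      intro j
      have h1 : ContDiffOn ℝ (⊤ : ℕ∞) (deriv (fCoef T X₁ k j)) I :=
        (ih j).deriv_of_isOpen hI (by exact_mod_cast le_top)
      have h2 : ContDiffOn ℝ (⊤ : ℕ∞)
          (fun t => if j = 0 then (0:ℝ) else fCoef T X₁ k (j-1) t) I := by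
        by_cases hj : j = 0 <;> simp [hj]
        exacts [contDiffOn_const, ih (j-1)]
      exact (h1.add h2).div hdT hT'

theorem derivExpand {T X₁ y v : ℝ → ℝ} {I W : Set ℝ} (hI : IsOpen I) (hW : IsOpen W)
    (hTW : ∀ t ∈ I, T t ∈ W)
    (hT : ContDiffOn ℝ (⊤ : ℕ∞) T I) (hX₁ : ContDiffOn ℝ (⊤ : ℕ∞) X₁ I)
    (hT' : ∀ t ∈ I, deriv T t ≠ 0)
    (hy : ContDiffOn ℝ (⊤ : ℕ∞) y W) (hv : ContDiffOn ℝ (⊤ : ℕ∞) v I)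
    (hyv : ∀ t ∈ I, y (T t) = X₁ t * v t) : ∀ (k : ℕ), ∀ t ∈ I,
    iteratedDeriv k y (T t) = ∑ j ∈ Finset.range (k+1), fCoef T X₁ k j t * iteratedDeriv j v t := by
  have hfs := fCoef_smooth hI hT hX₁ hT'
  intro k
  induction k with
  | zero =>
      intro t ht
      simpa [iteratedDeriv_zero, fCoef] using hyv t ht
  | succ k ih =>
      intro t ht
      have hdT := hT' t ht
      -- chain rule
      have hcomp : deriv (fun u => iteratedDeriv k y (T u)) t
          = deriv (iteratedDeriv k y) (T t) * deriv T t := by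
        have h1 : DifferentiableAt ℝ (iteratedDeriv k y) (T t) :=
          iterDiffAt hW hy k (hTW t ht)
        have h2 : DifferentiableAt ℝ T t := diffAtOf hI hT ht
        exact deriv_comp t h1 h2
      -- derivative of the RHS of IH
      have hsum : deriv (fun u => ∑ j ∈ Finset.range (k+1),
            fCoef T X₁ k j u * iteratedDeriv j v u) t
          = ∑ j ∈ Finset.range (k+1), (deriv (fCoef T X₁ k j) t * iteratedDeriv j v t
              + fCoef T X₁ k j t * iteratedDeriv (j+1) v t) := by
        rw [deriv_fun_sum (A := fun j u => fCoef T X₁ k j u * iteratedDeriv j v u) (fun j _ => ((diffAtOf hI (hfs k j) ht).mul (iterDiffAt hI hv j ht)))]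
        refine Finset.sum_congr rfl fun j _ => ?_
        rw [deriv_fun_mul (diffAtOf hI (hfs k j) ht) (iterDiffAt hI hv j ht), ← iteratedDeriv_succ]
      -- the two functions agree near t
      have hev : (fun u => iteratedDeriv k y (T u)) =ᶠ[nhds t]
          (fun u => ∑ j ∈ Finset.range (k+1), fCoef T X₁ k j u * iteratedDeriv j v u) := by
        filter_upwards [hI.mem_nhds ht] with u hu using ih u hu
      have key : deriv (iteratedDeriv k y) (T t) * deriv T t
          = ∑ j ∈ Finset.range (k+1), (deriv (fCoef T X₁ k j) t * iteratedDeriv j v t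
              + fCoef T X₁ k j t * iteratedDeriv (j+1) v t) := by
        rw [← hcomp, hev.deriv_eq, hsum]
      rw [iteratedDeriv_succ]
      -- now compute the claimed RHS
      have hRHS : ∑ j ∈ Finset.range (k+2), fCoef T X₁ (k+1) j t * iteratedDeriv j v t
          = (∑ j ∈ Finset.range (k+1), (deriv (fCoef T X₁ k j) t * iteratedDeriv j v t
              + fCoef T X₁ k j t * iteratedDeriv (j+1) v t)) / deriv T t := by
        have expand : ∀ j, fCoef T X₁ (k+1) j t
            = (deriv (fCoef T X₁ k j) t + if j = 0 then 0 else fCoef T X₁ k (j-1) t)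
              / deriv T t := fun j => rfl
        simp only [expand, div_mul_eq_mul_div, ← Finset.sum_div]
        congr 1
        simp only [add_mul]
        rw [Finset.sum_add_distrib, Finset.sum_add_distrib]
        congr 1
        · -- derivative part: drop last term (zero)
          rw [Finset.sum_range_succ, fCoef_eq_zero T X₁ k (k+1) (Nat.lt_succ_self k)]
          simp
        · -- shifted part; peel first term
          rw [Finset.sum_range_succ']
          simp
      rw [hRHS, eq_div_iff hdT, key]

theorem fCoef_diag (T X₁ : ℝ → ℝ) (k : ℕ) (t : ℝ) :
    fCoef T X₁ k k t = X₁ t / (deriv T t)^k := by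
  induction k with
  | zero => simp [fCoef]
  | succ k ih =>
      have h1 : fCoef T X₁ k (k+1) = fun _ => 0 := fCoef_eq_zero T X₁ k (k+1) (Nat.lt_succ_self k)
      simp only [fCoef, h1]
      simp [ih, div_div, pow_succ]


theorem derivTop {f : ℝ → ℝ} {s : Set ℝ} (hf : ContDiffOn ℝ (⊤ : ℕ∞) f s) (hs : IsOpen s) :
    ContDiffOn ℝ (⊤ : ℕ∞) (deriv f) s :=
  hf.deriv_of_isOpen hs (by exact_mod_cast le_top)

theorem injT {T : ℝ → ℝ} {I : Set ℝ} (hIo : IsOpen I) (hIc : I.OrdConnected)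
    (hT : ContDiffOn ℝ (⊤ : ℕ∞) T I) (hT' : ∀ t ∈ I, deriv T t ≠ 0) :
    InjOn T I := by
  have hconv : Convex ℝ I := convex_iff_ordConnected.mpr hIc
  have hTcont : ContinuousOn T I := hT.continuousOn
  have hdcont : ContinuousOn (deriv T) I := (derivTop hT hIo).continuousOn
  have hint : interior I = I := hIo.interior_eq
  rcases (em (∀ t ∈ I, 0 < deriv T t)) with hpos | hnpos
  · exact (StrictMonoOn.injOn (strictMonoOn_of_deriv_pos hconv hTcont (by rwa [hint])))
  · have hneg : ∀ t ∈ I, deriv T t < 0 := by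
      push_neg at hnpos
      obtain ⟨t₀, ht₀, ht₀'⟩ := hnpos
      have ht₀neg : deriv T t₀ < 0 := lt_of_le_of_ne ht₀' (hT' t₀ ht₀)
      intro t ht
      by_contra h
      have htpos : 0 < deriv T t := lt_of_le_of_ne (not_lt.mp h) (Ne.symm (hT' t ht))
      obtain ⟨u, hu, hu0⟩ := hconv.isPreconnected.intermediate_value₂ ht₀ ht hdcont
        (continuousOn_const (c := (0:ℝ))) (le_of_lt ht₀neg) (le_of_lt htpos)
      exact hT' u hu hu0
    exact (StrictAntiOn.injOn (strictAntiOn_of_deriv_neg hconv hTcont (by rwa [hint])))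

theorem imageOpen {T : ℝ → ℝ} {I : Set ℝ} (hIo : IsOpen I)
    (hT : ContDiffOn ℝ (⊤ : ℕ∞) T I) (hT' : ∀ t ∈ I, deriv T t ≠ 0) :
    IsOpen (T '' I) := by
  rw [isOpen_iff_mem_nhds]
  rintro s ⟨t, ht, rfl⟩
  have hsd : HasStrictDerivAt T (deriv T t) t :=
    ((hT t ht).contDiffAt (hIo.mem_nhds ht)).hasStrictDerivAt (by simp)
  rw [← hsd.map_nhds_eq (hT' t ht)]
  exact Filter.image_mem_map (hIo.mem_nhds ht)

theorem invT {T : ℝ → ℝ} {I : Set ℝ} (hIo : IsOpen I) (hIc : I.OrdConnected)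
    (hT : ContDiffOn ℝ (⊤ : ℕ∞) T I) (hT' : ∀ t ∈ I, deriv T t ≠ 0) :
    ∃ G : ℝ → ℝ, (∀ t ∈ I, G (T t) = t) ∧ (∀ s ∈ T '' I, G s ∈ I) ∧
      ContDiffOn ℝ (⊤ : ℕ∞) G (T '' I) := by
  have hinj := injT hIo hIc hT hT'
  have hGmem : ∀ s ∈ T '' I, Function.invFunOn T I s ∈ I := by
    rintro s ⟨t, ht, rfl⟩
    exact Function.invFunOn_mem ⟨t, ht, rfl⟩
  have hGright : ∀ s ∈ T '' I, T (Function.invFunOn T I s) = s := by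
    rintro s ⟨t, ht, rfl⟩
    exact Function.invFunOn_eq ⟨t, ht, rfl⟩
  refine ⟨Function.invFunOn T I, fun t ht => hinj.leftInvOn_invFunOn ht, hGmem, ?_⟩
  rintro s ⟨t₀, ht₀, rfl⟩
  have htop1 : ((⊤ : ℕ∞) : WithTop ℕ∞) ≠ 0 := by simp
  have hCAt : ContDiffAt ℝ (⊤ : ℕ∞) T t₀ := (hT t₀ ht₀).contDiffAt (hIo.mem_nhds ht₀)
  have hne := hT' t₀ ht₀
  have hDA : HasDerivAt T (deriv T t₀) t₀ :=
    (hCAt.differentiableAt (by simp)).hasDerivAt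
  have hFD : HasFDerivAt T
      ((ContinuousLinearEquiv.unitsEquivAut ℝ (Units.mk0 (deriv T t₀) hne)) : ℝ →L[ℝ] ℝ) t₀ :=
    hDA.hasFDerivAt_equiv hne
  have hLIs : ContDiffAt ℝ (⊤ : ℕ∞) (hCAt.localInverse hFD htop1) (T t₀) :=
    hCAt.to_localInverse hFD htop1
  set S := hCAt.hasStrictFDerivAt' hFD htop1 with hS
  have hLIdef : hCAt.localInverse hFD htop1 = S.localInverse T _ t₀ := rfl
  have hright : ∀ᶠ s' in nhds (T t₀), T (hCAt.localInverse hFD htop1 s') = s' := by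
    rw [hLIdef]; exact S.eventually_right_inverse
  have hLIcont : ContinuousAt (hCAt.localInverse hFD htop1) (T t₀) := by
    rw [hLIdef]; exact S.localInverse_continuousAt
  have hLIval : hCAt.localInverse hFD htop1 (T t₀) = t₀ := hCAt.localInverse_apply_image hFD htop1
  have hmemI : ∀ᶠ s' in nhds (T t₀), hCAt.localInverse hFD htop1 s' ∈ I := by
    have : I ∈ nhds (hCAt.localInverse hFD htop1 (T t₀)) := by
      rw [hLIval]; exact hIo.mem_nhds ht₀
    exact hLIcont.eventually_mem this
  refine (hLIs.contDiffWithinAt).congr_of_eventuallyEq ?_ (by rw [hLIval, hinj.leftInvOn_invFunOn ht₀])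
  filter_upwards [(hright.and hmemI).filter_mono nhdsWithin_le_nhds, self_mem_nhdsWithin]
    with s' hs' hs'W
  exact hinj (hGmem s' hs'W) hs'.2 (by rw [hGright s' hs'W, hs'.1])

theorem iterZero (n : ℕ) : iteratedDeriv n (fun _ : ℝ => (0:ℝ)) = fun _ => 0 := by
  induction n with
  | zero => simp [iteratedDeriv_zero]
  | succ n ih => rw [iteratedDeriv_succ, ih]; funext t; simp

theorem iterAdd {f g : ℝ → ℝ} {s : Set ℝ} (hs : IsOpen s)
    (hf : ContDiffOn ℝ (⊤ : ℕ∞) f s) (hg : ContDiffOn ℝ (⊤ : ℕ∞) g s) (n : ℕ) :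
    ∀ t ∈ s, iteratedDeriv n (fun t => f t + g t) t = iteratedDeriv n f t + iteratedDeriv n g t := by
  induction n with
  | zero => intro t ht; simp [iteratedDeriv_zero]
  | succ n ih =>
      intro t ht
      rw [iteratedDeriv_succ, iteratedDeriv_succ, iteratedDeriv_succ]
      have h1 : iteratedDeriv n (fun t => f t + g t) =ᶠ[nhds t]
          (fun t => iteratedDeriv n f t + iteratedDeriv n g t) := by
        filter_upwards [hs.mem_nhds ht] with u hu using ih u hu
      rw [h1.deriv_eq]
      exact deriv_add (iterDiffAt hs hf n ht) (iterDiffAt hs hg n ht)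

theorem iterNeg (f : ℝ → ℝ) (n : ℕ) :
    iteratedDeriv n (fun t => -(f t)) = fun t => -(iteratedDeriv n f t) := by
  induction n with
  | zero => simp [iteratedDeriv_zero]
  | succ n ih => rw [iteratedDeriv_succ, ih, iteratedDeriv_succ]; funext t; rw [deriv.fun_neg]

theorem solZero (r : ℕ) (a : ℕ → ℝ → ℝ) (I : Set ℝ) :
    IsSolODE r a (fun _ => 0) I (fun _ => 0) := by
  refine ⟨contDiffOn_const, fun t ht => ?_⟩
  simp [odeLHS, iterZero]

theorem solNeg {r : ℕ} {a : ℕ → ℝ → ℝ} {I : Set ℝ} {x : ℝ → ℝ}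
    (hx : IsSolODE r a (fun _ => 0) I x) : IsSolODE r a (fun _ => 0) I (fun t => -(x t)) := by
  refine ⟨hx.1.neg, fun t ht => ?_⟩
  have := hx.2 t ht
  simp only [odeLHS, iterNeg] at *
  simp only [mul_neg, Finset.sum_neg_distrib, ← neg_add]
  linarith
theorem Acoef_smooth {T X₁ : ℝ → ℝ} {a : ℕ → ℝ → ℝ} {I : Set ℝ} (hI : IsOpen I)
    (hT : ContDiffOn ℝ (⊤ : ℕ∞) T I) (hX₁ : ContDiffOn ℝ (⊤ : ℕ∞) X₁ I)
    (hT' : ∀ t ∈ I, deriv T t ≠ 0) (hX₁' : ∀ t ∈ I, X₁ t ≠ 0)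
    (ha : ∀ i, ContDiffOn ℝ (⊤ : ℕ∞) (a i) I) (r : ℕ) :
    ∀ m, ContDiffOn ℝ (⊤ : ℕ∞) (Acoef T X₁ a r m) I := by
  have hfs := fCoef_smooth hI hT hX₁ hT'
  intro m
  induction m using Nat.strong_induction_on with
  | _ m ih =>
    have heq : Acoef T X₁ a r m = fun t =>
        (fCoef T X₁ r r t * a (r-1-m) t - fCoef T X₁ r (r-1-m) t
          - ∑ p ∈ Finset.range m, Acoef T X₁ a r p t * fCoef T X₁ (r-1-p) (r-1-m) t)
          / fCoef T X₁ (r-1-m) (r-1-m) t := by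
      funext t; exact Acoef_def T X₁ a r m t
    rw [heq]
    have hden : ∀ t ∈ I, fCoef T X₁ (r-1-m) (r-1-m) t ≠ 0 := by
      intro t ht
      rw [fCoef_diag]
      exact div_ne_zero (hX₁' t ht) (pow_ne_zero _ (hT' t ht))
    refine ContDiffOn.div ?_ (hfs _ _) hden
    refine ContDiffOn.sub (ContDiffOn.sub ((hfs r r).mul (ha _)) (hfs _ _)) ?_
    exact ContDiffOn.sum fun p hp => (ih p (Finset.mem_range.mp hp)).mul (hfs _ _)

theorem Acoef_spec {T X₁ : ℝ → ℝ} {a : ℕ → ℝ → ℝ} (r : ℕ) :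
    ∀ j, j < r → ∀ t : ℝ, X₁ t ≠ 0 → deriv T t ≠ 0 →
    ∑ i ∈ Finset.Ico j r, Acoef T X₁ a r (r-1-i) t * fCoef T X₁ i j t + fCoef T X₁ r j t
      = fCoef T X₁ r r t * a j t := by
  intro j hj t hX₁t hTt
  have hm : r - 1 - (r-1-j) = j := by omega
  -- peel off the i = j term
  rw [Finset.sum_eq_sum_Ico_succ_bot hj]
  -- reindex the rest
  have hre : ∑ i ∈ Finset.Ico (j+1) r, Acoef T X₁ a r (r-1-i) t * fCoef T X₁ i j t
      = ∑ p ∈ Finset.range (r-1-j), Acoef T X₁ a r p t * fCoef T X₁ (r-1-p) j t := by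
    refine Finset.sum_nbij' (fun i => r-1-i) (fun p => r-1-p) ?_ ?_ ?_ ?_ ?_
    · intro i hi
      simp only [Finset.mem_Ico] at hi
      simp only [Finset.mem_range]
      omega
    · intro p hp
      simp only [Finset.mem_range] at hp
      simp only [Finset.mem_Ico]
      omega
    · intro i hi
      simp only [Finset.mem_Ico] at hi
      show r - 1 - (r - 1 - i) = i
      omega
    · intro p hp
      simp only [Finset.mem_range] at hp
      show r - 1 - (r - 1 - p) = p
      omega
    · intro i hi
      simp only [Finset.mem_Ico] at hi
      have h5 : r-1-(r-1-i) = i := by omega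
      show _ = Acoef T X₁ a r (r-1-i) t * fCoef T X₁ (r-1-(r-1-i)) j t
      rw [h5]
  rw [hre]
  have hdiag : fCoef T X₁ j j t ≠ 0 := by
    rw [fCoef_diag]
    exact div_ne_zero hX₁t (pow_ne_zero _ hTt)
  have hA := Acoef_def T X₁ a r (r-1-j) t
  rw [hm] at hA
  rw [show Acoef T X₁ a r (r-1-j) t * fCoef T X₁ j j t
      = fCoef T X₁ r r t * a j t - fCoef T X₁ r j t
        - ∑ p ∈ Finset.range (r-1-j), Acoef T X₁ a r p t * fCoef T X₁ (r-1-p) j t by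
    rw [hA, div_mul_cancel₀ _ hdiag]]
  ring
theorem keyC {T X₁ y v : ℝ → ℝ} {a : ℕ → ℝ → ℝ} {I W : Set ℝ} (hI : IsOpen I) (hW : IsOpen W)
    (hTW : ∀ t ∈ I, T t ∈ W)
    (hT : ContDiffOn ℝ (⊤ : ℕ∞) T I) (hX₁ : ContDiffOn ℝ (⊤ : ℕ∞) X₁ I)
    (hT' : ∀ t ∈ I, deriv T t ≠ 0) (hX₁' : ∀ t ∈ I, X₁ t ≠ 0)
    (hy : ContDiffOn ℝ (⊤ : ℕ∞) y W) (hv : ContDiffOn ℝ (⊤ : ℕ∞) v I)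
    (hyv : ∀ t ∈ I, y (T t) = X₁ t * v t) (r : ℕ) : ∀ t ∈ I,
    iteratedDeriv r y (T t)
      + ∑ i ∈ Finset.range r, Acoef T X₁ a r (r-1-i) t * iteratedDeriv i y (T t)
    = fCoef T X₁ r r t * odeLHS r a v t := by
  intro t ht
  have hD := derivExpand hI hW hTW hT hX₁ hT' hy hv hyv
  rw [hD r t ht]
  have hsum : ∑ i ∈ Finset.range r, Acoef T X₁ a r (r-1-i) t * iteratedDeriv i y (T t)
      = ∑ i ∈ Finset.range r, ∑ j ∈ Finset.range (i+1),
          Acoef T X₁ a r (r-1-i) t * fCoef T X₁ i j t * iteratedDeriv j v t := by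
    refine Finset.sum_congr rfl fun i _ => ?_
    rw [hD i t ht, Finset.mul_sum]
    exact Finset.sum_congr rfl fun j _ => by ring
  rw [hsum, sumSwap]
  rw [Finset.sum_range_succ]
  have hcol : ∀ j ∈ Finset.range r,
      ∑ i ∈ Finset.Ico j r, Acoef T X₁ a r (r-1-i) t * fCoef T X₁ i j t * iteratedDeriv j v t
      = (fCoef T X₁ r r t * a j t - fCoef T X₁ r j t) * iteratedDeriv j v t := by
    intro j hj
    rw [← Finset.sum_mul]
    congr 1
    have := Acoef_spec (T := T) (X₁ := X₁) (a := a) r j (Finset.mem_range.mp hj) t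
      (hX₁' t ht) (hT' t ht)
    linarith
  rw [Finset.sum_congr rfl hcol]
  simp only [odeLHS, sub_mul, Finset.sum_sub_distrib]
  rw [mul_add, Finset.mul_sum]
  have hassoc : ∀ j ∈ Finset.range r, fCoef T X₁ r r t * (a j t * iteratedDeriv j v t)
      = fCoef T X₁ r r t * a j t * iteratedDeriv j v t := fun j _ => by ring
  rw [Finset.sum_congr rfl hassoc]
  ring
theorem solAdd {r : ℕ} {a : ℕ → ℝ → ℝ} {I : Set ℝ} {x z : ℝ → ℝ} (hI : IsOpen I)
    (hx : IsSolODE r a (fun _ => 0) I x) (hz : IsSolODE r a (fun _ => 0) I z) :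
    IsSolODE r a (fun _ => 0) I (fun t => x t + z t) := by
  refine ⟨hx.1.add hz.1, fun t ht => ?_⟩
  have h1 := hx.2 t ht
  have h2 := hz.2 t ht
  simp only [odeLHS] at *
  rw [iterAdd hI hx.1 hz.1 r t ht,
    Finset.sum_congr rfl (fun i _ => by rw [iterAdd hI hx.1 hz.1 i t ht] :
      ∀ i ∈ Finset.range r, a i t * iteratedDeriv i (fun t => x t + z t) t
        = a i t * (iteratedDeriv i x t + iteratedDeriv i z t))]
  simp only [mul_add, Finset.sum_add_distrib]
  linarith


/-- for `r ≥ 3` and a homogeneous `r`-th order linear ODE `E` on `I`,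
a fiber-preserving transformation `t̃ = T(t)`, `x̃ = X₁(t)x + X₀(t)` with `T' X₁ ≠ 0`
maps `E` to some homogeneous `r`-th order linear ODE on `T(I)` (with inverse mapping
back) if and only if `X₀/X₁` is a solution of `E`. -/
theorem stmt6 (r : ℕ) (hr : 3 ≤ r) (I : Set ℝ) (hI : IsOpenInterval I)
    (a : ℕ → ℝ → ℝ) (ha : ∀ i, ContDiffOn ℝ (⊤ : ℕ∞) (a i) I)
    (T X₁ X₀ : ℝ → ℝ)
    (hT : ContDiffOn ℝ (⊤ : ℕ∞) T I) (hX₁ : ContDiffOn ℝ (⊤ : ℕ∞) X₁ I) (hX₀ : ContDiffOn ℝ (⊤ : ℕ∞) X₀ I)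
    (hTX : ∀ t ∈ I, deriv T t * X₁ t ≠ 0) :
    (∃ a' : ℕ → ℝ → ℝ, (∀ i, ContDiffOn ℝ (⊤ : ℕ∞) (a' i) (T '' I)) ∧
      FPMapsODE r I a (fun _ => 0) a' (fun _ => 0) T X₁ X₀ ∧
      (∀ y : ℝ → ℝ, IsSolODE r a' (fun _ => 0) (T '' I) y →
        IsSolODE r a (fun _ => 0) I (fun t => (y (T t) - X₀ t) / X₁ t)))
    ↔ IsSolODE r a (fun _ => 0) I (fun t => X₀ t / X₁ t) := by
  obtain ⟨hIo, hIc, _hIne⟩ := hI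
  have hT' : ∀ t ∈ I, deriv T t ≠ 0 := fun t ht => left_ne_zero_of_mul (hTX t ht)
  have hX₁' : ∀ t ∈ I, X₁ t ≠ 0 := fun t ht => right_ne_zero_of_mul (hTX t ht)
  constructor
  · rintro ⟨a', -, -, hinv⟩
    have hx0 := hinv (fun _ => 0) (solZero r a' (T '' I))
    have heq : (fun t => ((fun _ : ℝ => (0:ℝ)) (T t) - X₀ t) / X₁ t)
        = fun t => -(X₀ t / X₁ t) := by
      funext t; rw [zero_sub, neg_div]
    rw [heq] at hx0
    have h2 := solNeg hx0
    simpa using h2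
  · intro hsol
    obtain ⟨G, hGl, hGmem, hGsmooth⟩ := invT hIo hIc hT hT'
    have hWo : IsOpen (T '' I) := imageOpen hIo hT hT'
    have hTW : ∀ t ∈ I, T t ∈ T '' I := fun t ht => mem_image_of_mem T ht
    have hfne : ∀ t ∈ I, fCoef T X₁ r r t ≠ 0 := by
      intro t ht
      rw [fCoef_diag]
      exact div_ne_zero (hX₁' t ht) (pow_ne_zero _ (hT' t ht))
    refine ⟨fun i s => Acoef T X₁ a r (r-1-i) (G s), ?_, ?_, ?_⟩
    · intro i
      exact (Acoef_smooth hIo hT hX₁ hT' hX₁' ha r (r-1-i)).comp hGsmooth hGmem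
    · -- forward map
      intro x hx
      have hvsol : IsSolODE r a (fun _ => 0) I (fun t => x t + X₀ t / X₁ t) :=
        solAdd hIo hx hsol
      have hysmooth : ContDiffOn ℝ (⊤ : ℕ∞)
          (fun s => X₁ (G s) * (x (G s) + X₀ (G s) / X₁ (G s))) (T '' I) :=
        (hX₁.comp hGsmooth hGmem).mul (hvsol.1.comp hGsmooth hGmem)
      have hyv : ∀ u ∈ I, (fun s => X₁ (G s) * (x (G s) + X₀ (G s) / X₁ (G s))) (T u)
          = X₁ u * (x u + X₀ u / X₁ u) := by
        intro u hu; simp only [hGl u hu]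
      refine ⟨fun s => X₁ (G s) * (x (G s) + X₀ (G s) / X₁ (G s)), ⟨hysmooth, ?_⟩, ?_⟩
      · rintro s ⟨t, ht, rfl⟩
        have hkc := keyC (a := a) hIo hWo hTW hT hX₁ hT' hX₁' hysmooth hvsol.1 hyv r t ht
        have hb : odeLHS r (fun i s => Acoef T X₁ a r (r-1-i) (G s))
            (fun s => X₁ (G s) * (x (G s) + X₀ (G s) / X₁ (G s))) (T t)
            = iteratedDeriv r (fun s => X₁ (G s) * (x (G s) + X₀ (G s) / X₁ (G s))) (T t)
              + ∑ i ∈ Finset.range r, Acoef T X₁ a r (r-1-i) t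
                * iteratedDeriv i (fun s => X₁ (G s) * (x (G s) + X₀ (G s) / X₁ (G s))) (T t) := by
          simp only [odeLHS, hGl t ht]
        rw [hb, hkc, hvsol.2 t ht]
        simp
      · intro t ht
        simp only [hGl t ht]
        rw [mul_add, mul_div_cancel₀ _ (hX₁' t ht)]
    · -- inverse map
      intro y hy
      have hvsmooth : ContDiffOn ℝ (⊤ : ℕ∞) (fun t => y (T t) / X₁ t) I :=
        ((hy.1.comp hT hTW).div hX₁ hX₁')
      have hyv : ∀ t ∈ I, y (T t) = X₁ t * (fun t => y (T t) / X₁ t) t := by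
        intro t ht
        rw [mul_div_cancel₀ _ (hX₁' t ht)]
      have hkc := keyC (a := a) hIo hWo hTW hT hX₁ hT' hX₁' hy.1 hvsmooth hyv r
      have hvsol : IsSolODE r a (fun _ => 0) I (fun t => y (T t) / X₁ t) := by
        refine ⟨hvsmooth, fun t ht => ?_⟩
        have h0 := hy.2 (T t) (hTW t ht)
        have hb : odeLHS r (fun i s => Acoef T X₁ a r (r-1-i) (G s)) y (T t)
            = iteratedDeriv r y (T t)
              + ∑ i ∈ Finset.range r, Acoef T X₁ a r (r-1-i) t * iteratedDeriv i y (T t) := by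
          simp only [odeLHS, hGl t ht]
        rw [hb] at h0
        rw [hkc t ht] at h0
        exact (mul_eq_zero.mp h0).resolve_left (hfne t ht)
      have hfinal : (fun t => (y (T t) - X₀ t)/X₁ t)
          = fun t => (y (T t) / X₁ t) + -(X₀ t / X₁ t) := by
        funext t; rw [sub_div, ← sub_eq_add_neg]
      rw [hfinal]
      exact solAdd hIo hvsol (solNeg hsol)
end

section
/- Let r ≥ 3, and let E and Ẽ be r-th order linear ODEs in rational form (that is, with coefficient of the (r−1)-st derivative identically zero) on open intervals I and T(I) respectively. Let T, X₁, X₀ : I → ℝ be smooth with T'(t)X₁(t) ≠ 0 for all t, and suppose the fiber-preserving transformation t̃ = T(t), x̃ = X₁(t)x + X₀(t) maps E to Ẽ. Then 2 X₁'(t) T'(t) = (r − 1) X₁(t) T''(t) for all t ∈ I; in particular, if T' > 0 on I then there is a nonzero constant C such that X₁(t) = C·(T'(t))^{(r−1)/2} on I. -/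
open Set

open intervalIntegral

section Picard
variable {E : Type*} [NormedAddCommGroup E] [NormedSpace ℝ E] [CompleteSpace E]

lemma integral_abs_pow_nonneg {a : ℝ} (ha : 0 ≤ a) (m : ℕ) :
    ∫ u in (0:ℝ)..a, |u|^m = a^(m+1)/(m+1) := by
  have h1 : ∫ u in (0:ℝ)..a, |u|^m = ∫ u in (0:ℝ)..a, u^m := by
    apply intervalIntegral.integral_congr
    intro u hu
    rw [uIcc_of_le ha] at hu
    simp [abs_of_nonneg hu.1]
  rw [h1, integral_pow]
  simp

lemma abs_integral_abs_pow (t₀ t : ℝ) (m : ℕ) :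
    |∫ s in t₀..t, |s - t₀|^m| = |t - t₀|^(m+1)/(m+1) := by
  have h0 := intervalIntegral.integral_comp_sub_right (a := t₀) (b := t) (fun u => |u|^m) t₀
  rw [sub_self] at h0
  rcases le_total 0 (t - t₀) with h | h
  · rw [h0, integral_abs_pow_nonneg h]
    rw [abs_of_nonneg (by positivity), abs_of_nonneg h]
  · have h2 : ∫ u in (0:ℝ)..(t - t₀), |u|^m = -∫ u in (t - t₀)..(0:ℝ), |u|^m :=
      (intervalIntegral.integral_symm _ _)
    have h3 := intervalIntegral.integral_comp_neg (a := t - t₀) (b := 0) (fun u => |u|^m)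
    simp only [abs_neg, neg_zero, neg_sub] at h3
    rw [h0, h2, h3, integral_abs_pow_nonneg (by linarith)]
    have hnn : (0:ℝ) ≤ (t₀ - t)^(m+1)/(m+1) :=
      div_nonneg (pow_nonneg (by linarith) _) (by positivity)
    rw [abs_neg, abs_of_nonneg hnn, abs_of_nonpos (by linarith : t - t₀ ≤ 0), neg_sub]

/-- Picard existence on a compact interval for a globally (in space) Lipschitz,
jointly continuous right-hand side. -/
theorem picard_compact (c d t₀ : ℝ) (hcd : c ≤ d) (ht₀ : t₀ ∈ Icc c d)
    (F : ℝ → E → E) (hFc : Continuous fun p : ℝ × E => F p.1 p.2)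
    (L : ℝ) (hL0 : 0 ≤ L) (hLip : ∀ t u w, dist (F t u) (F t w) ≤ L * dist u w)
    (v₀ : E) :
    ∃ v : ℝ → E, v t₀ = v₀ ∧ Continuous v ∧ ∀ t ∈ Icc c d, HasDerivAt v (F t (v t)) t := by
  classical
  set X := C(Icc c d, E) with hX
  haveI : Nonempty X := ⟨ContinuousMap.const _ v₀⟩
  -- the integrand associated to g
  have hGc : ∀ g : X, Continuous fun s : ℝ => F s (g (projIcc c d hcd s)) := by
    intro g
    exact hFc.comp (continuous_id.prodMk (g.continuous.comp (continuous_projIcc)))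
  have hGi : ∀ (g : X) (p q : ℝ),
      IntervalIntegrable (fun s : ℝ => F s (g (projIcc c d hcd s))) MeasureTheory.volume p q :=
    fun g p q => (hGc g).intervalIntegrable p q
  -- Picard operator
  set Φ : X → X := fun g => ⟨fun t : Icc c d => v₀ + ∫ s in t₀..(t : ℝ), F s (g (projIcc c d hcd s)),
    by
      apply Continuous.add continuous_const
      exact (intervalIntegral.continuous_primitive (fun p q => hGi g p q) t₀).comp
        continuous_subtype_val⟩ with hΦ
  have hΦapp : ∀ (g : X) (t : Icc c d),
      Φ g t = v₀ + ∫ s in t₀..(t : ℝ), F s (g (projIcc c d hcd s)) := fun g t => rfl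
  -- iterate estimate
  have key : ∀ (g h : X) (m : ℕ) (t : Icc c d),
      dist ((Φ^[m]) g t) ((Φ^[m]) h t) ≤ L^m * |(t : ℝ) - t₀|^m / m.factorial * dist g h := by
    intro g h m
    induction m with
    | zero => intro t; simpa using ContinuousMap.dist_apply_le_dist t
    | succ m ih =>
      intro t
      rw [Function.iterate_succ_apply', Function.iterate_succ_apply']
      rw [hΦapp, hΦapp, dist_eq_norm]
      have hsub : (v₀ + ∫ s in t₀..(t : ℝ), F s ((Φ^[m] g) (projIcc c d hcd s))) -
          (v₀ + ∫ s in t₀..(t : ℝ), F s ((Φ^[m] h) (projIcc c d hcd s))) =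
          ∫ s in t₀..(t : ℝ), (F s ((Φ^[m] g) (projIcc c d hcd s)) - F s ((Φ^[m] h) (projIcc c d hcd s))) := by
        rw [intervalIntegral.integral_sub (hGi _ _ _) (hGi _ _ _)]; abel
      rw [hsub]
      have hbound : ∀ s ∈ uIoc t₀ (t : ℝ),
          ‖F s ((Φ^[m] g) (projIcc c d hcd s)) - F s ((Φ^[m] h) (projIcc c d hcd s))‖ ≤
          L^(m+1) * |s - t₀|^m / m.factorial * dist g h := by
        intro s hs
        have hsmem : s ∈ Icc c d := by
          have h1 : uIoc t₀ (t : ℝ) ⊆ Icc c d := by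
            rw [uIoc_eq_union]
            rintro z (hz | hz)
            · exact ⟨le_trans ht₀.1 (le_of_lt hz.1), le_trans hz.2 t.2.2⟩
            · exact ⟨le_trans t.2.1 (le_of_lt hz.1), le_trans hz.2 ht₀.2⟩
          exact h1 hs
        have hproj : ((projIcc c d hcd s : Icc c d) : ℝ) = s := by
          rw [projIcc_of_mem hcd hsmem]
        rw [← dist_eq_norm]
        calc dist (F s ((Φ^[m] g) (projIcc c d hcd s))) (F s ((Φ^[m] h) (projIcc c d hcd s)))
            ≤ L * dist ((Φ^[m] g) (projIcc c d hcd s)) ((Φ^[m] h) (projIcc c d hcd s)) := hLip _ _ _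
          _ ≤ L * (L^m * |((projIcc c d hcd s : Icc c d) : ℝ) - t₀|^m / m.factorial * dist g h) := by
              apply mul_le_mul_of_nonneg_left (ih _) hL0
          _ = L^(m+1) * |s - t₀|^m / m.factorial * dist g h := by
              rw [hproj]; ring
      have hIb : IntervalIntegrable (fun s => L^(m+1) * |s - t₀|^m / m.factorial * dist g h)
          MeasureTheory.volume t₀ (t : ℝ) := by
        apply Continuous.intervalIntegrable
        continuity
      have := intervalIntegral.norm_integral_le_abs_of_norm_le
        (f := fun s => F s ((Φ^[m] g) (projIcc c d hcd s)) - F s ((Φ^[m] h) (projIcc c d hcd s)))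
        (g := fun s => L^(m+1) * |s - t₀|^m / m.factorial * dist g h)
        (by
          filter_upwards [MeasureTheory.ae_restrict_mem measurableSet_uIoc] with s hs
          exact hbound s hs) hIb
      refine this.trans ?_
      have hval : ∫ s in t₀..(t : ℝ), L^(m+1) * |s - t₀|^m / m.factorial * dist g h =
          (L^(m+1) / m.factorial * dist g h) * ∫ s in t₀..(t : ℝ), |s - t₀|^m := by
        rw [← intervalIntegral.integral_const_mul]
        apply intervalIntegral.integral_congr
        intro s _; ring
      rw [hval, abs_mul, abs_integral_abs_pow]
      have habs : |L^(m+1) / m.factorial * dist g h| = L^(m+1) / m.factorial * dist g h := by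
        rw [abs_of_nonneg]; positivity
      rw [habs]
      apply le_of_eq
      rw [Nat.factorial_succ]
      push_cast
      have hm1 : ((m:ℝ)+1) ≠ 0 := by positivity
      have hm2 : ((m.factorial:ℝ)) ≠ 0 := by positivity
      field_simp
  -- X-level Lipschitz for iterates
  have keyX : ∀ m : ℕ, ∀ g h : X,
      dist ((Φ^[m]) g) ((Φ^[m]) h) ≤ (L*(d-c))^m / m.factorial * dist g h := by
    intro m g h
    have hdc : (0:ℝ) ≤ L * (d - c) := mul_nonneg hL0 (by linarith)
    rw [ContinuousMap.dist_le (mul_nonneg (div_nonneg (pow_nonneg hdc m) (by positivity)) dist_nonneg)]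
    intro t
    refine (key g h m t).trans ?_
    have h1 : |(t : ℝ) - t₀| ≤ d - c := by
      rw [abs_sub_le_iff]
      constructor <;> linarith [t.2.1, t.2.2, ht₀.1, ht₀.2]
    have hpow : |(t : ℝ) - t₀|^m ≤ (d-c)^m := pow_le_pow_left₀ (abs_nonneg _) h1 m
    have h2 : L^m * |(t : ℝ) - t₀|^m ≤ L^m * (d-c)^m :=
      mul_le_mul_of_nonneg_left hpow (pow_nonneg hL0 m)
    rw [mul_pow]
    exact mul_le_mul_of_nonneg_right
      ((div_le_div_iff_of_pos_right (by positivity : (0:ℝ) < m.factorial)).2 h2) dist_nonneg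
  obtain ⟨m, hm⟩ : ∃ m : ℕ, (L*(d-c))^m / m.factorial < 1 := by
    have h1 := FloorSemiring.tendsto_pow_div_factorial_atTop (K := ℝ) (L*(d-c))
    exact (h1.eventually (gt_mem_nhds one_pos)).exists
  have hvnn : (0:ℝ) ≤ (L*(d-c))^m / m.factorial := by
    have hm0 : t₀ ≤ d := ht₀.2
    have hdc : (0:ℝ) ≤ L * (d - c) := mul_nonneg hL0 (by linarith [ht₀.1, ht₀.2])
    exact div_nonneg (pow_nonneg hdc m) (by positivity)
  set K : NNReal := Real.toNNReal ((L*(d-c))^m / m.factorial) with hK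
  have hlip : LipschitzWith K (Φ^[m]) := LipschitzWith.of_dist_le_mul (fun g h => by
    rw [hK, Real.coe_toNNReal _ hvnn]
    exact keyX m g h)
  have hK1 : K < 1 := by
    have h1 : (K : ℝ) < 1 := by
      rw [hK, Real.coe_toNNReal _ hvnn]; exact hm
    exact_mod_cast h1
  have hC : ContractingWith K (Φ^[m]) := ⟨hK1, hlip⟩
  obtain ⟨fix, hfix⟩ : ∃ fx : X, Φ fx = fx := ⟨_, hC.isFixedPt_fixedPoint_iterate⟩
  refine ⟨fun τ => v₀ + ∫ s in t₀..τ, F s (fix (projIcc c d hcd s)), ?_, ?_, ?_⟩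
  · show v₀ + (∫ s in t₀..t₀, F s (fix (projIcc c d hcd s))) = v₀
    rw [intervalIntegral.integral_same, add_zero]
  · exact continuous_const.add (intervalIntegral.continuous_primitive (fun p q => hGi fix p q) t₀)
  · intro t ht
    have hproj : projIcc c d hcd t = ⟨t, ht⟩ := projIcc_of_mem hcd ht
    have h2 : v₀ + (∫ s in t₀..t, F s (fix (projIcc c d hcd s))) = fix ⟨t, ht⟩ := by
      have h3 : Φ fix ⟨t, ht⟩ = fix ⟨t, ht⟩ := DFunLike.congr_fun hfix (⟨t, ht⟩ : Icc c d)
      rw [hΦapp] at h3; exact h3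
    have h1 : HasDerivAt (fun τ => v₀ + ∫ s in t₀..τ, F s (fix (projIcc c d hcd s)))
        (F t (fix (projIcc c d hcd t))) t :=
      ((hGc fix).integral_hasStrictDerivAt t₀ t).hasDerivAt.const_add v₀
    have heq : F t (fix (projIcc c d hcd t)) =
        F t (v₀ + ∫ s in t₀..t, F s (fix (projIcc c d hcd s))) := by
      rw [hproj, h2]
    rw [heq] at h1
    exact h1

theorem ode_unique_on_Icc (c d t₀ : ℝ) (ht₀ : t₀ ∈ Icc c d)
    (F : ℝ → E → E) (K : NNReal) (hK : ∀ t ∈ Icc c d, LipschitzWith K (F t))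
    (v w : ℝ → E)
    (hv : ∀ t ∈ Icc c d, HasDerivAt v (F t (v t)) t)
    (hw : ∀ t ∈ Icc c d, HasDerivAt w (F t (w t)) t)
    (h₀ : v t₀ = w t₀) : EqOn v w (Icc c d) := by
  have hcd : c ≤ d := le_trans ht₀.1 ht₀.2
  set G : ℝ → E → E := fun t x => F (projIcc c d hcd t) x with hG
  have hGlip : ∀ t, LipschitzOnWith K (G t) univ :=
    fun t => (hK _ (projIcc c d hcd t).2).lipschitzOnWith
  have hGeq : ∀ t ∈ Icc c d, ∀ x, G t x = F t x := by
    intro t ht x; rw [hG]; simp only; rw [projIcc_of_mem hcd ht]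
  have hvc : ContinuousOn v (Icc c d) :=
    fun s hs => ((hv s hs).continuousAt).continuousWithinAt
  have hwc : ContinuousOn w (Icc c d) :=
    fun s hs => ((hw s hs).continuousAt).continuousWithinAt
  have hright : EqOn v w (Icc t₀ d) := by
    apply ODE_solution_unique_of_mem_Icc_right (v := G) (s := fun _ => (univ : Set E))
      (fun t _ => hGlip t) (hvc.mono (Icc_subset_Icc_left ht₀.1))
      ?_ (fun t _ => mem_univ _) (hwc.mono (Icc_subset_Icc_left ht₀.1)) ?_
      (fun t _ => mem_univ _) h₀
    · intro t ht
      have htm : t ∈ Icc c d := ⟨le_trans ht₀.1 ht.1, le_of_lt ht.2⟩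
      rw [hGeq t htm]
      exact (hv t htm).hasDerivWithinAt
    · intro t ht
      have htm : t ∈ Icc c d := ⟨le_trans ht₀.1 ht.1, le_of_lt ht.2⟩
      rw [hGeq t htm]
      exact (hw t htm).hasDerivWithinAt
  have hleft : EqOn v w (Icc c t₀) := by
    apply ODE_solution_unique_of_mem_Icc_left (v := G) (s := fun _ => (univ : Set E))
      (fun t _ => hGlip t) (hvc.mono (Icc_subset_Icc_right ht₀.2))
      ?_ (fun t _ => mem_univ _) (hwc.mono (Icc_subset_Icc_right ht₀.2)) ?_
      (fun t _ => mem_univ _) h₀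
    · intro t ht
      have htm : t ∈ Icc c d := ⟨le_of_lt ht.1, le_trans ht.2 ht₀.2⟩
      rw [hGeq t htm]
      exact (hv t htm).hasDerivWithinAt
    · intro t ht
      have htm : t ∈ Icc c d := ⟨le_of_lt ht.1, le_trans ht.2 ht₀.2⟩
      rw [hGeq t htm]
      exact (hw t htm).hasDerivWithinAt
  intro t ht
  rcases le_total t t₀ with h | h
  · exact hleft ⟨ht.1, h⟩
  · exact hright ⟨h, ht.2⟩

theorem ode_global (I : Set ℝ) (hIo : IsOpen I) (hIc : OrdConnected I)
    (F : ℝ → E → E)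
    (hFc : ContinuousOn (fun p : ℝ × E => F p.1 p.2) (I ×ˢ univ))
    (hLip : ∀ c d : ℝ, Icc c d ⊆ I → ∃ K : NNReal, ∀ t ∈ Icc c d, LipschitzWith K (F t))
    (t₀ : ℝ) (ht₀ : t₀ ∈ I) (v₀ : E) :
    ∃ v : ℝ → E, v t₀ = v₀ ∧ ∀ t ∈ I, HasDerivAt v (F t (v t)) t := by
  classical
  have hmem : ∀ t ∈ I, Icc (min t t₀) (max t t₀) ⊆ I := by
    intro t ht
    apply hIc.out
    · rcases min_cases t t₀ with ⟨h, _⟩ | ⟨h, _⟩ <;> rw [h] <;> assumption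
    · rcases max_cases t t₀ with ⟨h, _⟩ | ⟨h, _⟩ <;> rw [h] <;> assumption
  have ht₀mem : ∀ t : ℝ, t₀ ∈ Icc (min t t₀) (max t t₀) :=
    fun t => ⟨min_le_right _ _, le_max_right _ _⟩
  have Hsol : ∀ c d : ℝ, Icc c d ⊆ I → c ≤ t₀ → t₀ ≤ d →
      ∃ v : ℝ → E, v t₀ = v₀ ∧ Continuous v ∧ ∀ t ∈ Icc c d, HasDerivAt v (F t (v t)) t := by
    intro c d hsubI hc hd
    have hcd : c ≤ d := le_trans hc hd
    obtain ⟨K, hKl⟩ := hLip c d hsubI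
    set G : ℝ → E → E := fun t x => F (projIcc c d hcd t) x with hG
    have hGc : Continuous fun p : ℝ × E => G p.1 p.2 := by
      have hg : Continuous fun p : ℝ × E => (((projIcc c d hcd p.1) : ℝ), p.2) :=
        ((continuous_subtype_val.comp continuous_projIcc).comp continuous_fst).prodMk
          continuous_snd
      exact hFc.comp_continuous hg (fun p => ⟨hsubI (projIcc c d hcd p.1).2, trivial⟩)
    have hGlip : ∀ t u w, dist (G t u) (G t w) ≤ K * dist u w :=
      fun t u w => (hKl _ (projIcc c d hcd t).2).dist_le_mul u w
    obtain ⟨v, h1, h2, h3⟩ := picard_compact c d t₀ hcd ⟨hc, hd⟩ G hGc K K.coe_nonneg hGlip v₀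
    refine ⟨v, h1, h2, fun t ht => ?_⟩
    have h4 := h3 t ht
    rwa [show G t (v t) = F t (v t) from by rw [hG]; simp only; rw [projIcc_of_mem hcd ht]] at h4
  choose! sol hsol1 hsol2 hsol3 using Hsol
  set v : ℝ → E := fun t => if h : t ∈ I then sol (min t t₀) (max t t₀) t else v₀ with hvdef
  have hcons : ∀ c d : ℝ, Icc c d ⊆ I → c ≤ t₀ → t₀ ≤ d →
      ∀ t ∈ Icc c d, v t = sol c d t := by
    intro c d hs h2 h3 t ht
    have htI : t ∈ I := hs ht
    have hminmax : Icc (min t t₀) (max t t₀) ⊆ Icc c d :=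
      Icc_subset_Icc (le_min ht.1 h2) (max_le ht.2 h3)
    have hsubm : Icc (min t t₀) (max t t₀) ⊆ I := hmem t htI
    have hv : v t = sol (min t t₀) (max t t₀) t := dif_pos htI
    rw [hv]
    obtain ⟨K, hKl⟩ := hLip c d hs
    exact ode_unique_on_Icc (min t t₀) (max t t₀) t₀ (ht₀mem t) F K
      (fun s hs' => hKl s (hminmax hs'))
      (sol (min t t₀) (max t t₀)) (sol c d)
      (fun s hs' => hsol3 _ _ hsubm (min_le_right _ _) (le_max_right _ _) s hs')
      (fun s hs' => hsol3 c d hs h2 h3 s (hminmax hs'))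
      (by rw [hsol1 _ _ hsubm (min_le_right _ _) (le_max_right _ _),
              hsol1 c d hs h2 h3])
      ⟨min_le_left t t₀, le_max_left t t₀⟩
  refine ⟨v, ?_, ?_⟩
  · have : v t₀ = sol (min t₀ t₀) (max t₀ t₀) t₀ := dif_pos ht₀
    rw [this]
    exact hsol1 _ _ (hmem t₀ ht₀) (min_le_right _ _) (le_max_right _ _)
  · intro t ht
    obtain ⟨δ, hδ, hb⟩ := Metric.isOpen_iff.1 hIo t ht
    set ε := δ / 2 with hε
    have hεpos : 0 < ε := by rw [hε]; linarith
    have hball : Icc (t - ε) (t + ε) ⊆ I := by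
      intro s hs
      apply hb
      rw [Metric.mem_ball, Real.dist_eq]
      rw [abs_lt]
      constructor <;> [linarith [hs.1]; linarith [hs.2]]
    set c := min (t - ε) t₀ with hc'
    set d := max (t + ε) t₀ with hd'
    have hm1 : t - ε ∈ I := hball ⟨le_rfl, by linarith⟩
    have hm2 : t + ε ∈ I := hball ⟨by linarith, le_rfl⟩
    have hcI : c ∈ I := by
      rcases min_cases (t - ε) t₀ with ⟨h, _⟩ | ⟨h, _⟩ <;> rw [hc', h] <;> assumption
    have hdI : d ∈ I := by
      rcases max_cases (t + ε) t₀ with ⟨h, _⟩ | ⟨h, _⟩ <;> rw [hd', h] <;> assumption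
    have hsubI : Icc c d ⊆ I := hIc.out hcI hdI
    have hc : c ≤ t₀ := min_le_right _ _
    have hd : t₀ ≤ d := le_max_right _ _
    have heq : EqOn v (sol c d) (Ioo (t - ε) (t + ε)) := fun s hs =>
      hcons c d hsubI hc hd s
        ⟨le_trans (min_le_left _ _) (le_of_lt hs.1), le_trans (le_of_lt hs.2) (le_max_left _ _)⟩
    have hev : v =ᶠ[nhds t] sol c d :=
      Filter.eventuallyEq_of_mem (Ioo_mem_nhds (by linarith) (by linarith)) heq
    have hd1 : HasDerivAt (sol c d) (F t (sol c d t)) t :=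
      hsol3 c d hsubI hc hd t
        ⟨le_trans (min_le_left _ _) (by linarith), le_trans (by linarith) (le_max_left _ _)⟩
    have hvt : v t = sol c d t := heq ⟨by linarith, by linarith⟩
    have h5 := hd1.congr_of_eventuallyEq hev
    rwa [← hvt] at h5

end Picard

section Scalar

theorem linear_ode_exists (r : ℕ) (hr : 0 < r) (I : Set ℝ) (hIo : IsOpen I) (hIc : OrdConnected I)
    (a : ℕ → ℝ → ℝ) (b : ℝ → ℝ)
    (ha : ∀ i, ContDiffOn ℝ (⊤ : ℕ∞) (a i) I) (hb : ContDiffOn ℝ (⊤ : ℕ∞) b I)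
    (t₀ : ℝ) (ht₀ : t₀ ∈ I) (w : Fin r → ℝ) :
    ∃ x : ℝ → ℝ, ContDiffOn ℝ (⊤ : ℕ∞) x I ∧
      (∀ t ∈ I, iteratedDeriv r x t + ∑ i ∈ Finset.range r, a i t * iteratedDeriv i x t = b t) ∧
      (∀ i : Fin r, iteratedDeriv (i : ℕ) x t₀ = w i) := by
  classical
  set F : ℝ → (Fin r → ℝ) → (Fin r → ℝ) := fun t v i =>
    if h : (i : ℕ) + 1 < r then v ⟨(i : ℕ) + 1, h⟩ else b t - ∑ j : Fin r, a j t * v j with hF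
  -- continuity of F on I ×ˢ univ
  have hFc : ContinuousOn (fun p : ℝ × (Fin r → ℝ) => F p.1 p.2) (I ×ˢ univ) := by
    apply continuousOn_pi.2
    intro i
    by_cases h : (i : ℕ) + 1 < r
    · simp only [hF, dif_pos h]
      exact ((continuous_apply _).comp continuous_snd).continuousOn
    · simp only [hF, dif_neg h]
      apply ContinuousOn.sub
      · exact (hb.continuousOn).comp continuous_fst.continuousOn (fun p hp => hp.1)
      · apply continuousOn_finset_sum
        intro j _
        exact (((ha j).continuousOn).comp continuous_fst.continuousOn (fun p hp => hp.1)).mul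
          ((continuous_apply j).comp continuous_snd).continuousOn
  -- Lipschitz on compacts
  have hLip : ∀ c d : ℝ, Icc c d ⊆ I → ∃ K : NNReal, ∀ t ∈ Icc c d, LipschitzWith K (F t) := by
    intro c d hsub
    have hcont : ContinuousOn (fun t => ∑ j : Fin r, |a j t|) (Icc c d) := by
      apply continuousOn_finset_sum
      intro j _
      exact (((ha j).continuousOn).mono hsub).abs
    obtain ⟨C, hC⟩ := isCompact_Icc.exists_bound_of_continuousOn hcont
    set K : NNReal := Real.toNNReal (1 + max C 0) with hK
    have hKge : ∀ t ∈ Icc c d, (∑ j : Fin r, |a j t|) ≤ (K : ℝ) ∧ (1 : ℝ) ≤ (K : ℝ) := by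
      intro t ht
      have h1 := hC t ht
      rw [Real.norm_eq_abs, abs_of_nonneg (Finset.sum_nonneg fun j _ => abs_nonneg _)] at h1
      have h2 : (K : ℝ) = 1 + max C 0 := Real.coe_toNNReal _ (by positivity)
      constructor
      · calc (∑ j : Fin r, |a j t|) ≤ C := h1
          _ ≤ 1 + max C 0 := by have := le_max_left C 0; linarith
          _ = K := h2.symm
      · rw [h2]; have := le_max_right C 0; linarith
    refine ⟨K, fun t ht => LipschitzWith.of_dist_le_mul (fun u v => ?_)⟩
    rw [dist_pi_le_iff (by positivity)]
    intro i
    simp only [hF]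
    by_cases h : (i : ℕ) + 1 < r
    · rw [dif_pos h, dif_pos h]
      calc dist (u ⟨(i:ℕ)+1, h⟩) (v ⟨(i:ℕ)+1, h⟩) ≤ dist u v := dist_le_pi_dist u v _
        _ ≤ (K : ℝ) * dist u v := by
            have := (hKge t ht).2
            nlinarith [@dist_nonneg _ _ u v]
    · rw [dif_neg h, dif_neg h]
      rw [Real.dist_eq]
      have heq : (b t - ∑ j : Fin r, a j t * u j) - (b t - ∑ j : Fin r, a j t * v j) =
          ∑ j : Fin r, a j t * (v j - u j) := by
        simp only [mul_sub]
        rw [Finset.sum_sub_distrib]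
        ring
      rw [heq]
      calc |∑ j : Fin r, a j t * (v j - u j)| ≤ ∑ j : Fin r, |a j t * (v j - u j)| :=
            Finset.abs_sum_le_sum_abs _ _
        _ ≤ ∑ j : Fin r, |a j t| * dist u v := by
            apply Finset.sum_le_sum
            intro j _
            rw [abs_mul]
            apply mul_le_mul_of_nonneg_left _ (abs_nonneg _)
            rw [← Real.dist_eq, dist_comm]
            exact dist_le_pi_dist u v j
        _ = (∑ j : Fin r, |a j t|) * dist u v := by rw [Finset.sum_mul]
        _ ≤ (K : ℝ) * dist u v := mul_le_mul_of_nonneg_right ((hKge t ht).1) dist_nonneg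
  obtain ⟨v, hv0, hv⟩ := ode_global I hIo hIc F hFc hLip t₀ ht₀ w
  -- component derivatives
  have hcomp : ∀ (i : Fin r), ∀ t ∈ I, HasDerivAt (fun s => v s i) (F t (v t) i) t :=
    fun i t ht => hasDerivAt_pi.1 (hv t ht) i
  -- smoothness of v on I
  have hsm : ∀ n : ℕ, ContDiffOn ℝ n v I := by
    intro n
    induction n with
    | zero =>
      rw [show ((0:ℕ) : WithTop ℕ∞) = 0 from rfl, contDiffOn_zero]
      exact fun t ht => ((hv t ht).continuousAt).continuousWithinAt
    | succ n ihn =>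
      rw [show ((n+1:ℕ) : WithTop ℕ∞) = (n : WithTop ℕ∞) + 1 by push_cast; ring,
        contDiffOn_succ_iff_deriv_of_isOpen hIo]
      refine ⟨fun t ht => ((hv t ht).differentiableAt).differentiableWithinAt,
        (fun h => by simp at h), ?_⟩
      · apply ContDiffOn.congr (f := fun t => F t (v t))
        · apply contDiffOn_pi.2
          intro i
          by_cases h : (i : ℕ) + 1 < r
          · simp only [hF, dif_pos h]
            exact ((ContinuousLinearMap.proj (R := ℝ) (φ := fun _ : Fin r => ℝ)
              (⟨(i:ℕ)+1, h⟩ : Fin r)).contDiff.comp_contDiffOn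
              ihn).congr (fun x _ => rfl)
          · simp only [hF, dif_neg h]
            apply ContDiffOn.sub (hb.of_le (by exact_mod_cast le_top))
            apply ContDiffOn.sum
            intro j _
            exact ((ha j).of_le (by exact_mod_cast le_top)).mul
              (((ContinuousLinearMap.proj (R := ℝ) (φ := fun _ : Fin r => ℝ)
                j).contDiff.comp_contDiffOn ihn).congr
                (fun x _ => rfl))
        · intro t ht
          exact (hv t ht).deriv
  have hsmv : ContDiffOn ℝ (⊤ : ℕ∞) v I := contDiffOn_infty.2 hsm
  set x : ℝ → ℝ := fun t => v t ⟨0, hr⟩ with hx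
  have hxs : ContDiffOn ℝ (⊤ : ℕ∞) x I :=
    ((ContinuousLinearMap.proj (R := ℝ) (φ := fun _ : Fin r => ℝ)
      (⟨0, hr⟩ : Fin r)).contDiff.comp_contDiffOn hsmv).congr (fun t _ => rfl)
  -- iterated derivatives agree with components
  have hiter : ∀ (i : ℕ) (h : i < r), ∀ t ∈ I, iteratedDeriv i x t = v t ⟨i, h⟩ := by
    intro i
    induction i with
    | zero =>
      intro h t ht
      rw [iteratedDeriv_zero]
    | succ i ih =>
      intro h t ht
      have hi : i < r := Nat.lt_of_succ_lt h
      rw [iteratedDeriv_succ]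
      have hev : iteratedDeriv i x =ᶠ[nhds t] (fun s => v s ⟨i, hi⟩) :=
        Filter.eventuallyEq_of_mem (hIo.mem_nhds ht) (fun s hs => ih hi s hs)
      rw [hev.deriv_eq]
      have hd := hcomp ⟨i, hi⟩ t ht
      rw [hd.deriv]
      simp only [hF]
      rw [dif_pos (show i + 1 < r from h)]
  have hiter' : ∀ t ∈ I, iteratedDeriv r x t = b t - ∑ i ∈ Finset.range r, a i t * iteratedDeriv i x t := by
    intro t ht
    have hrm : r - 1 < r := Nat.sub_lt hr Nat.one_pos
    have hr1 : r - 1 + 1 = r := Nat.succ_pred_eq_of_pos hr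
    conv_lhs => rw [← hr1, iteratedDeriv_succ]
    have hev : iteratedDeriv (r-1) x =ᶠ[nhds t] (fun s => v s ⟨r-1, hrm⟩) :=
      Filter.eventuallyEq_of_mem (hIo.mem_nhds ht) (fun s hs => hiter (r-1) hrm s hs)
    rw [hev.deriv_eq]
    have hd := hcomp ⟨r-1, hrm⟩ t ht
    rw [hd.deriv]
    simp only [hF]
    rw [dif_neg (by omega : ¬ (r - 1 + 1 < r))]
    congr 1
    rw [Finset.sum_range (fun i => a i t * iteratedDeriv i x t)]
    apply Finset.sum_congr rfl
    intro j _
    congr 1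
    rw [hiter (j : ℕ) j.2 t ht]
  refine ⟨x, hxs, ?_, ?_⟩
  · intro t ht
    rw [hiter' t ht]; ring
  · intro i
    rw [hiter (i : ℕ) i.2 t₀ ht₀, hv0]

section Coef

variable {I U : Set ℝ}

lemma smooth_iteratedDeriv (hU : IsOpen U) {f : ℝ → ℝ} (hf : ContDiffOn ℝ (⊤ : ℕ∞) f U) :
    ∀ k, ContDiffOn ℝ (⊤ : ℕ∞) (iteratedDeriv k f) U := by
  intro k
  induction k with
  | zero => rw [iteratedDeriv_zero]; exact hf
  | succ k ih =>
    rw [iteratedDeriv_succ]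
    exact ih.deriv_of_isOpen hU (le_of_eq rfl)

lemma hasDerivAt_iteratedDeriv (hU : IsOpen U) {f : ℝ → ℝ}
    (hf : ContDiffOn ℝ (⊤ : ℕ∞) f U) (k : ℕ) {s : ℝ} (hs : s ∈ U) :
    HasDerivAt (iteratedDeriv k f) (iteratedDeriv (k+1) f s) s := by
  have h1 := smooth_iteratedDeriv hU hf k
  have h2 : DifferentiableOn ℝ (iteratedDeriv k f) U :=
    h1.differentiableOn (by simp)
  have h3 : DifferentiableAt ℝ (iteratedDeriv k f) s :=
    h2.differentiableAt (hU.mem_nhds hs)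
  have h4 := h3.hasDerivAt
  rwa [show deriv (iteratedDeriv k f) s = iteratedDeriv (k+1) f s from by
    rw [iteratedDeriv_succ]] at h4

lemma eqon_iteratedDeriv (hU : IsOpen U) {f g : ℝ → ℝ} (h : EqOn f g U) (k : ℕ) :
    EqOn (iteratedDeriv k f) (iteratedDeriv k g) U := by
  induction k with
  | zero => intro t ht; simpa [iteratedDeriv_zero] using h ht
  | succ k ih =>
    intro t ht
    rw [iteratedDeriv_succ, iteratedDeriv_succ]
    exact Filter.EventuallyEq.deriv_eq
      (Filter.eventuallyEq_of_mem (hU.mem_nhds ht) ih)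

/-- chain-rule coefficients for `(y ∘ T)^(n) = ∑ c n k · y^(k)∘T`. -/
noncomputable def chainC (T : ℝ → ℝ) : ℕ → ℕ → ℝ → ℝ
  | 0, 0 => fun _ => 1
  | 0, _+1 => fun _ => 0
  | n+1, 0 => fun t => deriv (chainC T n 0) t
  | n+1, k+1 => fun t => deriv (chainC T n (k+1)) t + deriv T t * chainC T n k t

lemma chainC_zero (T : ℝ → ℝ) : ∀ n k, n < k → chainC T n k = fun _ => 0 := by
  intro n
  induction n with
  | zero => intro k hk; match k, hk with | k+1, _ => rfl
  | succ n ih =>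
    intro k hk
    match k, hk with
    | k+1, hk =>
      show (fun t => deriv (chainC T n (k+1)) t + deriv T t * chainC T n k t) = fun _ => 0
      have h1 : chainC T n (k+1) = fun _ => 0 := ih (k+1) (by omega)
      have h2 : chainC T n k = fun _ => 0 := ih k (by omega)
      funext t
      simp [h1, h2]

lemma chainC_smooth (hIo : IsOpen I) {T : ℝ → ℝ} (hT : ContDiffOn ℝ (⊤ : ℕ∞) T I) :
    ∀ n k, ContDiffOn ℝ (⊤ : ℕ∞) (chainC T n k) I := by
  have hT' : ContDiffOn ℝ (⊤ : ℕ∞) (deriv T) I := hT.deriv_of_isOpen hIo (le_of_eq rfl)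
  intro n
  induction n with
  | zero =>
    intro k
    match k with
    | 0 => exact contDiffOn_const
    | k+1 => exact contDiffOn_const
  | succ n ih =>
    intro k
    match k with
    | 0 => exact (ih 0).deriv_of_isOpen hIo (le_of_eq rfl)
    | k+1 => exact ((ih (k+1)).deriv_of_isOpen hIo (le_of_eq rfl)).add (hT'.mul (ih k))

lemma chainC_diag {T : ℝ → ℝ} (hIo : IsOpen I) (hT : ContDiffOn ℝ (⊤ : ℕ∞) T I) :
    ∀ n, ∀ t ∈ I, chainC T n n t = (deriv T t)^n := by
  intro n
  induction n with
  | zero => intro t ht; simp [chainC]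
  | succ n ih =>
    intro t ht
    show deriv (chainC T n (n+1)) t + deriv T t * chainC T n n t = _
    rw [chainC_zero T n (n+1) (by omega)]
    rw [ih t ht]
    simp [pow_succ]
    ring

lemma chainC_subdiag {T : ℝ → ℝ} (hIo : IsOpen I) (hT : ContDiffOn ℝ (⊤ : ℕ∞) T I) :
    ∀ n, ∀ t ∈ I, chainC T (n+1) n t =
      ((n+1 : ℝ) * n / 2) * (deriv T t)^(n-1) * iteratedDeriv 2 T t := by
  have hT2 : ∀ t ∈ I, HasDerivAt (deriv T) (iteratedDeriv 2 T t) t := by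
    intro t ht
    have := hasDerivAt_iteratedDeriv hIo hT 1 ht
    rwa [iteratedDeriv_one] at this
  intro n
  induction n with
  | zero =>
    intro t ht
    show deriv (chainC T 0 0) t = _
    rw [show chainC T 0 0 = fun _ => (1:ℝ) from rfl]
    simp
  | succ n ih =>
    intro t ht
    show deriv (chainC T (n+1) (n+1)) t + deriv T t * chainC T (n+1) n t = _
    have hev : chainC T (n+1) (n+1) =ᶠ[nhds t] (fun s => (deriv T s)^(n+1)) :=
      Filter.eventuallyEq_of_mem (hIo.mem_nhds ht)
        (fun s hs => chainC_diag hIo hT (n+1) s hs)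
    rw [hev.deriv_eq]
    have hpow : HasDerivAt (fun s => (deriv T s)^(n+1))
        (((n:ℝ)+1) * (deriv T t)^n * iteratedDeriv 2 T t) t := by
      have h := (hT2 t ht).fun_pow (n+1)
      simpa using h
    rw [hpow.deriv, ih t ht]
    have hns : n + 1 - 1 = n := rfl
    rw [hns]
    rcases Nat.eq_zero_or_pos n with hn | hn
    · subst hn
      norm_num
    · have h1 : n - 1 + 1 = n := Nat.succ_pred_eq_of_pos hn
      have h2 : deriv T t * deriv T t^(n-1) = deriv T t^n := by
        rw [← pow_succ', h1]
      push_cast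
      rw [show deriv T t * (((n:ℝ)+1) * (n:ℝ) / 2 * deriv T t^(n-1) * iteratedDeriv 2 T t) =
        ((n:ℝ)+1) * (n:ℝ) / 2 * (deriv T t * deriv T t^(n-1)) * iteratedDeriv 2 T t from by
          ring, h2]
      ring

lemma chainC_succ_succ (T : ℝ → ℝ) (n k : ℕ) (t : ℝ) :
    chainC T (n+1) (k+1) t = deriv (chainC T n (k+1)) t + deriv T t * chainC T n k t := rfl

lemma chainC_succ_zero (T : ℝ → ℝ) (n : ℕ) (t : ℝ) :
    chainC T (n+1) 0 t = deriv (chainC T n 0) t := rfl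

theorem chainC_spec (hIo : IsOpen I) (hUo : IsOpen U) {T : ℝ → ℝ}
    (hT : ContDiffOn ℝ (⊤ : ℕ∞) T I) (hTU : MapsTo T I U)
    {y : ℝ → ℝ} (hy : ContDiffOn ℝ (⊤ : ℕ∞) y U) :
    ∀ n, ∀ t ∈ I, iteratedDeriv n (fun s => y (T s)) t =
      ∑ k ∈ Finset.range (n+1), chainC T n k t * iteratedDeriv k y (T t) := by
  have hTd : ∀ t ∈ I, HasDerivAt T (deriv T t) t := fun t ht =>
    ((hT.differentiableOn (by simp)).differentiableAt
      (hIo.mem_nhds ht)).hasDerivAt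
  intro n
  induction n with
  | zero =>
    intro t ht
    simp [chainC, iteratedDeriv_zero]
  | succ n ih =>
    intro t ht
    rw [iteratedDeriv_succ]
    have hev : iteratedDeriv n (fun s => y (T s)) =ᶠ[nhds t]
        (fun s => ∑ k ∈ Finset.range (n+1), chainC T n k s * iteratedDeriv k y (T s)) :=
      Filter.eventuallyEq_of_mem (hIo.mem_nhds ht) (fun s hs => ih s hs)
    rw [hev.deriv_eq]
    have hterm : ∀ k ∈ Finset.range (n+1),
        HasDerivAt (fun s => chainC T n k s * iteratedDeriv k y (T s))
          (deriv (chainC T n k) t * iteratedDeriv k y (T t) +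
           chainC T n k t * (iteratedDeriv (k+1) y (T t) * deriv T t)) t := by
      intro k _
      have h1 : HasDerivAt (chainC T n k) (deriv (chainC T n k) t) t :=
        (((chainC_smooth hIo hT n k).differentiableOn
          (by simp)).differentiableAt (hIo.mem_nhds ht)).hasDerivAt
      have h2 : HasDerivAt (fun s => iteratedDeriv k y (T s))
          (iteratedDeriv (k+1) y (T t) * deriv T t) t :=
        (hasDerivAt_iteratedDeriv hUo hy k (hTU ht)).comp t (hTd t ht)
      exact h1.mul h2
    have hsum := HasDerivAt.fun_sum hterm
    rw [hsum.deriv]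
    set A : ℕ → ℝ := fun k => iteratedDeriv k y (T t) with hA
    have hzero : deriv (chainC T n (n+1)) t = 0 := by
      rw [chainC_zero T n (n+1) (by omega)]; simp
    rw [Finset.sum_add_distrib]
    rw [Finset.sum_range_succ' (fun k => deriv (chainC T n k) t * A k) n]
    rw [Finset.sum_range_succ' (fun k => chainC T (n+1) k t * A k) (n+1)]
    rw [chainC_succ_zero]
    have hc : ∀ k ∈ Finset.range (n+1), chainC T (n+1) (k+1) t * A (k+1) =
        deriv (chainC T n (k+1)) t * A (k+1) + chainC T n k t * (A (k+1) * deriv T t) := by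
      intro k _
      rw [chainC_succ_succ]; ring
    rw [Finset.sum_congr rfl hc, Finset.sum_add_distrib]
    rw [Finset.sum_range_succ (fun k => deriv (chainC T n (k+1)) t * A (k+1)) n]
    rw [hzero]
    ring

noncomputable def leibC (X₁ : ℝ → ℝ) : ℕ → ℕ → ℝ → ℝ
  | 0, 0 => X₁
  | 0, _+1 => fun _ => 0
  | n+1, 0 => fun t => deriv (leibC X₁ n 0) t
  | n+1, k+1 => fun t => deriv (leibC X₁ n (k+1)) t + leibC X₁ n k t

variable {X₁ : ℝ → ℝ}

lemma leibC_zero (X₁ : ℝ → ℝ) : ∀ n k, n < k → leibC X₁ n k = fun _ => 0 := by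
  intro n
  induction n with
  | zero => intro k hk; match k, hk with | k+1, _ => rfl
  | succ n ih =>
    intro k hk
    match k, hk with
    | k+1, hk =>
      show (fun t => deriv (leibC X₁ n (k+1)) t + leibC X₁ n k t) = fun _ => 0
      have h1 : leibC X₁ n (k+1) = fun _ => 0 := ih (k+1) (by omega)
      have h2 : leibC X₁ n k = fun _ => 0 := ih k (by omega)
      funext t
      simp [h1, h2]

lemma leibC_smooth (hIo : IsOpen I) (hX₁ : ContDiffOn ℝ (⊤ : ℕ∞) X₁ I) :
    ∀ n k, ContDiffOn ℝ (⊤ : ℕ∞) (leibC X₁ n k) I := by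
  intro n
  induction n with
  | zero =>
    intro k
    match k with
    | 0 => exact hX₁
    | k+1 => exact contDiffOn_const
  | succ n ih =>
    intro k
    match k with
    | 0 => exact (ih 0).deriv_of_isOpen hIo (le_of_eq rfl)
    | k+1 => exact ((ih (k+1)).deriv_of_isOpen hIo (le_of_eq rfl)).add (ih k)

lemma leibC_diag_fun (X₁ : ℝ → ℝ) : ∀ n, leibC X₁ n n = X₁ := by
  intro n
  induction n with
  | zero => rfl
  | succ n ih =>
    funext t
    show deriv (leibC X₁ n (n+1)) t + leibC X₁ n n t = X₁ t
    rw [leibC_zero X₁ n (n+1) (by omega), ih]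
    simp

lemma leibC_subdiag (X₁ : ℝ → ℝ) : ∀ n t, leibC X₁ (n+1) n t = ((n:ℝ)+1) * deriv X₁ t := by
  intro n
  induction n with
  | zero =>
    intro t
    show deriv (leibC X₁ 0 0) t = _
    rw [show leibC X₁ 0 0 = X₁ from rfl]
    norm_num
  | succ n ih =>
    intro t
    show deriv (leibC X₁ (n+1) (n+1)) t + leibC X₁ (n+1) n t = _
    rw [leibC_diag_fun X₁ (n+1), ih t]
    push_cast
    ring

lemma leibC_succ_succ (X₁ : ℝ → ℝ) (n k : ℕ) (t : ℝ) :
    leibC X₁ (n+1) (k+1) t = deriv (leibC X₁ n (k+1)) t + leibC X₁ n k t := rfl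

lemma leibC_succ_zero (X₁ : ℝ → ℝ) (n : ℕ) (t : ℝ) :
    leibC X₁ (n+1) 0 t = deriv (leibC X₁ n 0) t := rfl

theorem leibC_spec (hIo : IsOpen I) (hX₁ : ContDiffOn ℝ (⊤ : ℕ∞) X₁ I)
    {X₀ : ℝ → ℝ} (hX₀ : ContDiffOn ℝ (⊤ : ℕ∞) X₀ I)
    {x : ℝ → ℝ} (hx : ContDiffOn ℝ (⊤ : ℕ∞) x I) :
    ∀ n, ∀ t ∈ I, iteratedDeriv n (fun s => X₁ s * x s + X₀ s) t =
      (∑ k ∈ Finset.range (n+1), leibC X₁ n k t * iteratedDeriv k x t) +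
        iteratedDeriv n X₀ t := by
  intro n
  induction n with
  | zero =>
    intro t ht
    rw [Finset.sum_range_succ, Finset.sum_range_zero, zero_add]
    simp only [iteratedDeriv_zero]
    rfl
  | succ n ih =>
    intro t ht
    rw [iteratedDeriv_succ]
    have hev : iteratedDeriv n (fun s => X₁ s * x s + X₀ s) =ᶠ[nhds t]
        (fun s => (∑ k ∈ Finset.range (n+1), leibC X₁ n k s * iteratedDeriv k x s) +
          iteratedDeriv n X₀ s) :=
      Filter.eventuallyEq_of_mem (hIo.mem_nhds ht) (fun s hs => ih s hs)
    rw [hev.deriv_eq]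
    have hterm : ∀ k ∈ Finset.range (n+1),
        HasDerivAt (fun s => leibC X₁ n k s * iteratedDeriv k x s)
          (deriv (leibC X₁ n k) t * iteratedDeriv k x t +
           leibC X₁ n k t * iteratedDeriv (k+1) x t) t := by
      intro k _
      have h1 : HasDerivAt (leibC X₁ n k) (deriv (leibC X₁ n k) t) t :=
        (((leibC_smooth hIo hX₁ n k).differentiableOn
          (by simp)).differentiableAt (hIo.mem_nhds ht)).hasDerivAt
      exact h1.mul (hasDerivAt_iteratedDeriv hIo hx k ht)
    have hsum := (HasDerivAt.fun_sum hterm).fun_add (hasDerivAt_iteratedDeriv hIo hX₀ n ht)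
    rw [hsum.deriv]
    set A : ℕ → ℝ := fun k => iteratedDeriv k x t with hA
    have hzero : deriv (leibC X₁ n (n+1)) t = 0 := by
      rw [leibC_zero X₁ n (n+1) (by omega)]; simp
    rw [Finset.sum_add_distrib]
    rw [Finset.sum_range_succ' (fun k => deriv (leibC X₁ n k) t * A k) n]
    rw [Finset.sum_range_succ' (fun k => leibC X₁ (n+1) k t * A k) (n+1)]
    rw [leibC_succ_zero]
    have hc : ∀ k ∈ Finset.range (n+1), leibC X₁ (n+1) (k+1) t * A (k+1) =
        deriv (leibC X₁ n (k+1)) t * A (k+1) + leibC X₁ n k t * A (k+1) := by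
      intro k _
      rw [leibC_succ_succ]; ring
    rw [Finset.sum_congr rfl hc, Finset.sum_add_distrib]
    rw [Finset.sum_range_succ (fun k => deriv (leibC X₁ n (k+1)) t * A (k+1)) n]
    rw [hzero]
    ring

theorem inv_coeffs (hIo : IsOpen I) (hUo : IsOpen U) {T : ℝ → ℝ}
    (hT : ContDiffOn ℝ (⊤ : ℕ∞) T I) (hTU : MapsTo T I U)
    (hTne : ∀ t ∈ I, deriv T t ≠ 0) :
    ∀ K : ℕ, ∃ d : ℕ → ℕ → ℝ → ℝ, ∀ m ≤ K, ∀ (y : ℝ → ℝ), ContDiffOn ℝ (⊤ : ℕ∞) y U →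
      ∀ t ∈ I, iteratedDeriv m y (T t) =
        ∑ j ∈ Finset.range (m+1), d m j t * iteratedDeriv j (fun s => y (T s)) t := by
  intro K
  induction K with
  | zero =>
    refine ⟨fun _ _ _ => 1, ?_⟩
    intro m hm y hy t ht
    interval_cases m
    simp [iteratedDeriv_zero]
  | succ K ih =>
    obtain ⟨d, hd⟩ := ih
    refine ⟨fun m => if m = K+1 then (fun j t =>
      (deriv T t)⁻¹^(K+1) * ((if j = K+1 then 1 else 0) -
        ∑ p ∈ Finset.range (K+1), chainC T (K+1) p t * (if j ≤ p then d p j t else 0)))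
      else d m, ?_⟩
    intro m hm y hy t ht
    by_cases hmK : m = K+1
    · subst hmK
      simp only [if_pos rfl]
      set B : ℕ → ℝ := fun j => iteratedDeriv j (fun s => y (T s)) t with hBdef
      set Y : ℕ → ℝ := fun p => iteratedDeriv p y (T t) with hYdef
      have h1 : B (K+1) = chainC T (K+1) (K+1) t * Y (K+1) +
          ∑ p ∈ Finset.range (K+1), chainC T (K+1) p t * Y p := by
        show iteratedDeriv (K+1) (fun s => y (T s)) t = _
        rw [chainC_spec hIo hUo hT hTU hy (K+1) t ht]
        rw [Finset.sum_range_succ]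
        ring
      have hdiag : chainC T (K+1) (K+1) t = (deriv T t)^(K+1) :=
        chainC_diag hIo hT (K+1) t ht
      have hTn : deriv T t ≠ 0 := hTne t ht
      have hsub : ∀ p ∈ Finset.range (K+1),
          (∑ j ∈ Finset.range (K+2), (if j ≤ p then d p j t else 0) * B j) =
          ∑ j ∈ Finset.range (p+1), d p j t * B j := by
        intro p hp
        rw [Finset.mem_range] at hp
        rw [← Finset.sum_subset (Finset.range_subset_range.2 (by omega : p+1 ≤ K+2))
          (fun j _ hj => by
            rw [Finset.mem_range, not_lt] at hj
            rw [if_neg (by omega)]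
            ring)]
        apply Finset.sum_congr rfl
        intro j hj
        rw [Finset.mem_range] at hj
        rw [if_pos (by omega)]
      have hY : ∀ p ∈ Finset.range (K+1), Y p = ∑ j ∈ Finset.range (p+1), d p j t * B j := by
        intro p hp
        rw [Finset.mem_range] at hp
        exact hd p (by omega) y hy t ht
      have hfirst : ∑ j ∈ Finset.range (K+2), (if j = K+1 then (1:ℝ) else 0) * B j
          = B (K+1) := by
        rw [Finset.sum_eq_single_of_mem (K+1) (Finset.self_mem_range_succ (K+1))
          (fun j _ hne => by rw [if_neg hne, zero_mul])]
        simp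
      have hsecond : ∑ j ∈ Finset.range (K+2), ∑ p ∈ Finset.range (K+1),
          chainC T (K+1) p t * ((if j ≤ p then d p j t else 0) * B j)
          = ∑ p ∈ Finset.range (K+1), chainC T (K+1) p t * Y p := by
        rw [Finset.sum_comm]
        apply Finset.sum_congr rfl
        intro p hp
        rw [← Finset.mul_sum]
        congr 1
        rw [hsub p hp]
        exact (hY p hp).symm
      have e1 : ∀ j ∈ Finset.range (K+2),
          ((deriv T t)⁻¹^(K+1) * ((if j = K+1 then (1:ℝ) else 0) -
            ∑ p ∈ Finset.range (K+1), chainC T (K+1) p t * (if j ≤ p then d p j t else 0))) * B j =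
          (deriv T t)⁻¹^(K+1) * (((if j = K+1 then (1:ℝ) else 0) * B j) -
            ∑ p ∈ Finset.range (K+1), chainC T (K+1) p t * ((if j ≤ p then d p j t else 0) * B j)) := by
        intro j _
        have h2 : ((deriv T t)⁻¹^(K+1) * ((if j = K+1 then (1:ℝ) else 0) -
            ∑ p ∈ Finset.range (K+1), chainC T (K+1) p t * (if j ≤ p then d p j t else 0))) * B j =
            (deriv T t)⁻¹^(K+1) * (((if j = K+1 then (1:ℝ) else 0) * B j) -
              (∑ p ∈ Finset.range (K+1), chainC T (K+1) p t * (if j ≤ p then d p j t else 0)) * B j) := by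
          ring
        rw [h2, Finset.sum_mul]
        congr 1
        congr 1
        exact Finset.sum_congr rfl (fun p _ => by ring)
      have hRHS : (∑ j ∈ Finset.range (K+2),
          ((deriv T t)⁻¹^(K+1) * ((if j = K+1 then (1:ℝ) else 0) -
            ∑ p ∈ Finset.range (K+1), chainC T (K+1) p t * (if j ≤ p then d p j t else 0))) * B j) =
          (deriv T t)⁻¹^(K+1) *
            (B (K+1) - ∑ p ∈ Finset.range (K+1), chainC T (K+1) p t * Y p) := by
        rw [Finset.sum_congr rfl e1, ← Finset.mul_sum, Finset.sum_sub_distrib, hfirst, hsecond]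
      show Y (K+1) = ∑ j ∈ Finset.range (K+1+1),
        ((deriv T t)⁻¹^(K+1) * ((if j = K+1 then (1:ℝ) else 0) -
          ∑ p ∈ Finset.range (K+1), chainC T (K+1) p t * (if j ≤ p then d p j t else 0))) * B j
      rw [show K+1+1 = K+2 from rfl, hRHS]
      have h3 : B (K+1) = (deriv T t)^(K+1) * Y (K+1) +
          ∑ p ∈ Finset.range (K+1), chainC T (K+1) p t * Y p := by
        rw [h1, hdiag]
      rw [h3, add_sub_cancel_right, ← mul_assoc, ← mul_pow, inv_mul_cancel₀ hTn,
        one_pow, one_mul]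
    · simp only [if_neg hmK]
      exact hd m (by omega) y hy t ht

end Coef

/-- if a fiber-preserving transformation `t̃ = T(t)`, `x̃ = X₁(t)x + X₀(t)`
maps an `r`-th order (`r ≥ 3`) linear ODE in rational form to another one in rational
form, then `2X₁'T' = (r−1)X₁T''`; in particular, if `T' > 0` then
`X₁ = C (T')^((r−1)/2)` for some nonzero constant `C`. -/
theorem stmt7 (r : ℕ) (hr : 3 ≤ r) (I : Set ℝ) (hI : IsOpenInterval I)
    (a a' : ℕ → ℝ → ℝ) (b b' : ℝ → ℝ)
    (T X₁ X₀ : ℝ → ℝ)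
    (hT : ContDiffOn ℝ (⊤ : ℕ∞) T I) (hX₁ : ContDiffOn ℝ (⊤ : ℕ∞) X₁ I) (hX₀ : ContDiffOn ℝ (⊤ : ℕ∞) X₀ I)
    (hTX : ∀ t ∈ I, deriv T t * X₁ t ≠ 0)
    (ha : ∀ i, ContDiffOn ℝ (⊤ : ℕ∞) (a i) I) (hb : ContDiffOn ℝ (⊤ : ℕ∞) b I)
    (ha' : ∀ i, ContDiffOn ℝ (⊤ : ℕ∞) (a' i) (T '' I)) (hb' : ContDiffOn ℝ (⊤ : ℕ∞) b' (T '' I))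
    (hrat : ∀ t ∈ I, a (r - 1) t = 0)
    (hrat' : ∀ s ∈ T '' I, a' (r - 1) s = 0)
    (hmaps : FPMapsODE r I a b a' b' T X₁ X₀) :
    (∀ t ∈ I, 2 * deriv X₁ t * deriv T t = ((r : ℝ) - 1) * X₁ t * iteratedDeriv 2 T t) ∧
    ((∀ t ∈ I, 0 < deriv T t) →
      ∃ C : ℝ, C ≠ 0 ∧ ∀ t ∈ I, X₁ t = C * deriv T t ^ (((r : ℝ) - 1) / 2)) := by
  classical
  obtain ⟨hIo, hIc, hne⟩ := hI
  have hTne : ∀ t ∈ I, deriv T t ≠ 0 := fun t ht => left_ne_zero_of_mul (hTX t ht)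
  have hX₁ne : ∀ t ∈ I, X₁ t ≠ 0 := fun t ht => right_ne_zero_of_mul (hTX t ht)
  have hVo : IsOpen (T '' I) := by
    rw [isOpen_iff_mem_nhds]
    rintro s ⟨t, ht, rfl⟩
    have hTat : ContDiffAt ℝ (⊤ : ℕ∞) T t := hT.contDiffAt (hIo.mem_nhds ht)
    have hstrict : HasStrictDerivAt T (deriv T t) t :=
      hTat.hasStrictDerivAt (by simp)
    rw [← hstrict.map_nhds_eq (hTne t ht)]
    exact Filter.image_mem_map (hIo.mem_nhds ht)
  have hTU : MapsTo T I (T '' I) := mapsTo_image T I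
  obtain ⟨q, hq⟩ : ∃ q, r = q + 2 := ⟨r - 2, by omega⟩
  have main : ∀ t₀ ∈ I,
      2 * deriv X₁ t₀ * deriv T t₀ = ((r : ℝ) - 1) * X₁ t₀ * iteratedDeriv 2 T t₀ := by
    intro t₀ ht₀
    obtain ⟨d, hd⟩ := inv_coeffs hIo hVo hT hTU hTne q
    obtain ⟨x₁, hx₁s, hx₁ode, hx₁jet⟩ := linear_ode_exists r (by omega) I hIo hIc a b ha hb t₀ ht₀
      (fun i => if (i : ℕ) = r - 1 then 1 else 0)
    obtain ⟨x₂, hx₂s, hx₂ode, hx₂jet⟩ := linear_ode_exists r (by omega) I hIo hIc a b ha hb t₀ ht₀ 0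
    obtain ⟨y₁, ⟨hy₁s, hy₁ode⟩, hy₁link⟩ := hmaps x₁ ⟨hx₁s, fun t ht => hx₁ode t ht⟩
    obtain ⟨y₂, ⟨hy₂s, hy₂ode⟩, hy₂link⟩ := hmaps x₂ ⟨hx₂s, fun t ht => hx₂ode t ht⟩
    have hs₀V : T t₀ ∈ T '' I := ⟨t₀, ht₀, rfl⟩
    -- jet differences
    have hDJlow : ∀ i ≤ q, iteratedDeriv i x₁ t₀ - iteratedDeriv i x₂ t₀ = 0 := by
      intro i hi
      rw [hx₁jet ⟨i, by omega⟩, hx₂jet ⟨i, by omega⟩]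
      simp only [Pi.zero_apply]
      rw [if_neg (by omega : ¬ (i = r - 1))]
      ring
    have hDJtop : iteratedDeriv (q+1) x₁ t₀ - iteratedDeriv (q+1) x₂ t₀ = 1 := by
      rw [hx₁jet ⟨q+1, by omega⟩, hx₂jet ⟨q+1, by omega⟩]
      simp only [Pi.zero_apply]
      rw [if_pos (by omega : q + 1 = r - 1)]
      ring
    have hDJr : iteratedDeriv r x₁ t₀ - iteratedDeriv r x₂ t₀ = 0 := by
      have e1 := hx₁ode t₀ ht₀
      have e2 := hx₂ode t₀ ht₀
      have h3 : iteratedDeriv r x₁ t₀ - iteratedDeriv r x₂ t₀ =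
          -(∑ i ∈ Finset.range r, a i t₀ *
            (iteratedDeriv i x₁ t₀ - iteratedDeriv i x₂ t₀)) := by
        have h4 : ∑ i ∈ Finset.range r, a i t₀ *
            (iteratedDeriv i x₁ t₀ - iteratedDeriv i x₂ t₀) =
            (∑ i ∈ Finset.range r, a i t₀ * iteratedDeriv i x₁ t₀) -
            ∑ i ∈ Finset.range r, a i t₀ * iteratedDeriv i x₂ t₀ := by
          rw [← Finset.sum_sub_distrib]
          exact Finset.sum_congr rfl (fun i _ => by ring)
        rw [h4]
        linarith [e1, e2]
      rw [h3, hq, Finset.sum_range_succ]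
      have h5 : ∑ i ∈ Finset.range (q+1), a i t₀ *
          (iteratedDeriv i x₁ t₀ - iteratedDeriv i x₂ t₀) = 0 :=
        Finset.sum_eq_zero (fun i hi => by
          rw [Finset.mem_range] at hi
          rw [hDJlow i (by omega), mul_zero])
      rw [h5, zero_add]
      rw [show q + 1 = r - 1 from by omega, hrat t₀ ht₀]
      ring
    -- U differences
    have hDU : ∀ n, iteratedDeriv n (fun s => X₁ s * x₁ s + X₀ s) t₀ -
        iteratedDeriv n (fun s => X₁ s * x₂ s + X₀ s) t₀ =
        ∑ k ∈ Finset.range (n+1), leibC X₁ n k t₀ *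
          (iteratedDeriv k x₁ t₀ - iteratedDeriv k x₂ t₀) := by
      intro n
      rw [leibC_spec hIo hX₁ hX₀ hx₁s n t₀ ht₀, leibC_spec hIo hX₁ hX₀ hx₂s n t₀ ht₀]
      rw [show ∀ A B P : ℝ, (A + P) - (B + P) = A - B from fun A B P => by ring]
      rw [← Finset.sum_sub_distrib]
      exact Finset.sum_congr rfl (fun k _ => by ring)
    have hDUlow : ∀ n ≤ q, iteratedDeriv n (fun s => X₁ s * x₁ s + X₀ s) t₀ -
        iteratedDeriv n (fun s => X₁ s * x₂ s + X₀ s) t₀ = 0 := by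
      intro n hn
      rw [hDU n]
      exact Finset.sum_eq_zero (fun k hk => by
        rw [Finset.mem_range] at hk
        rw [hDJlow k (by omega), mul_zero])
    have hDUq1 : iteratedDeriv (q+1) (fun s => X₁ s * x₁ s + X₀ s) t₀ -
        iteratedDeriv (q+1) (fun s => X₁ s * x₂ s + X₀ s) t₀ = X₁ t₀ := by
      rw [hDU (q+1), Finset.sum_range_succ]
      have h5 : ∑ k ∈ Finset.range (q+1), leibC X₁ (q+1) k t₀ *
          (iteratedDeriv k x₁ t₀ - iteratedDeriv k x₂ t₀) = 0 :=
        Finset.sum_eq_zero (fun k hk => by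
          rw [Finset.mem_range] at hk
          rw [hDJlow k (by omega), mul_zero])
      rw [h5, zero_add, hDJtop, leibC_diag_fun X₁ (q+1), mul_one]
    have hDUr : iteratedDeriv r (fun s => X₁ s * x₁ s + X₀ s) t₀ -
        iteratedDeriv r (fun s => X₁ s * x₂ s + X₀ s) t₀ = (r:ℝ) * deriv X₁ t₀ := by
      rw [hDU r]
      rw [hq]
      rw [show q + 2 + 1 = (q+1) + 1 + 1 from rfl]
      rw [Finset.sum_range_succ, Finset.sum_range_succ]
      have h5 : ∑ k ∈ Finset.range (q+1), leibC X₁ (q+2) k t₀ *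
          (iteratedDeriv k x₁ t₀ - iteratedDeriv k x₂ t₀) = 0 :=
        Finset.sum_eq_zero (fun k hk => by
          rw [Finset.mem_range] at hk
          rw [hDJlow k (by omega), mul_zero])
      rw [h5, zero_add]
      rw [show (q+1:ℕ) + 1 = q + 2 from rfl]
      rw [show iteratedDeriv (q+2) x₁ t₀ - iteratedDeriv (q+2) x₂ t₀ = 0 from by
        rw [← hq]; exact hDJr]
      rw [mul_zero, add_zero, hDJtop, mul_one]
      rw [show (q+2:ℕ) = (q+1) + 1 from rfl, leibC_subdiag X₁ (q+1) t₀]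
      push_cast
      ring
    -- links
    have hlink1 : ∀ j, iteratedDeriv j (fun s => y₁ (T s)) t₀ =
        iteratedDeriv j (fun s => X₁ s * x₁ s + X₀ s) t₀ :=
      fun j => eqon_iteratedDeriv hIo (fun t ht => hy₁link t ht) j ht₀
    have hlink2 : ∀ j, iteratedDeriv j (fun s => y₂ (T s)) t₀ =
        iteratedDeriv j (fun s => X₁ s * x₂ s + X₀ s) t₀ :=
      fun j => eqon_iteratedDeriv hIo (fun t ht => hy₂link t ht) j ht₀
    -- Y differences, low order
    have hDYlow : ∀ k ≤ q, iteratedDeriv k y₁ (T t₀) - iteratedDeriv k y₂ (T t₀) = 0 := by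
      intro k hk
      rw [hd k hk y₁ hy₁s t₀ ht₀, hd k hk y₂ hy₂s t₀ ht₀]
      rw [← Finset.sum_sub_distrib]
      apply Finset.sum_eq_zero
      intro j hj
      rw [Finset.mem_range] at hj
      rw [← mul_sub, hlink1 j, hlink2 j, hDUlow j (by omega), mul_zero]
    -- chain relation for differences
    have hA : ∀ n, iteratedDeriv n (fun s => X₁ s * x₁ s + X₀ s) t₀ -
        iteratedDeriv n (fun s => X₁ s * x₂ s + X₀ s) t₀ =
        ∑ k ∈ Finset.range (n+1), chainC T n k t₀ *
          (iteratedDeriv k y₁ (T t₀) - iteratedDeriv k y₂ (T t₀)) := by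
      intro n
      rw [← hlink1 n, ← hlink2 n]
      rw [chainC_spec hIo hVo hT hTU hy₁s n t₀ ht₀, chainC_spec hIo hVo hT hTU hy₂s n t₀ ht₀]
      rw [← Finset.sum_sub_distrib]
      exact Finset.sum_congr rfl (fun k _ => by ring)
    have hDYq1 : (deriv T t₀)^(q+1) * (iteratedDeriv (q+1) y₁ (T t₀) -
        iteratedDeriv (q+1) y₂ (T t₀)) = X₁ t₀ := by
      have h1 := hA (q+1)
      rw [hDUq1] at h1
      rw [Finset.sum_range_succ, chainC_diag hIo hT (q+1) t₀ ht₀] at h1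
      have h2 : ∑ k ∈ Finset.range (q+1), chainC T (q+1) k t₀ *
          (iteratedDeriv k y₁ (T t₀) - iteratedDeriv k y₂ (T t₀)) = 0 :=
        Finset.sum_eq_zero (fun k hk => by
          rw [Finset.mem_range] at hk
          rw [hDYlow k (by omega), mul_zero])
      rw [h2, zero_add] at h1
      rw [← h1]
    have hDYr : iteratedDeriv r y₁ (T t₀) - iteratedDeriv r y₂ (T t₀) = 0 := by
      have e1 := hy₁ode (T t₀) hs₀V
      have e2 := hy₂ode (T t₀) hs₀V
      unfold odeLHS at e1 e2
      have h3 : iteratedDeriv r y₁ (T t₀) - iteratedDeriv r y₂ (T t₀) =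
          -(∑ i ∈ Finset.range r, a' i (T t₀) *
            (iteratedDeriv i y₁ (T t₀) - iteratedDeriv i y₂ (T t₀))) := by
        have h4 : ∑ i ∈ Finset.range r, a' i (T t₀) *
            (iteratedDeriv i y₁ (T t₀) - iteratedDeriv i y₂ (T t₀)) =
            (∑ i ∈ Finset.range r, a' i (T t₀) * iteratedDeriv i y₁ (T t₀)) -
            ∑ i ∈ Finset.range r, a' i (T t₀) * iteratedDeriv i y₂ (T t₀) := by
          rw [← Finset.sum_sub_distrib]
          exact Finset.sum_congr rfl (fun i _ => by ring)
        rw [h4]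
        linarith [e1, e2]
      rw [h3, hq, Finset.sum_range_succ]
      have h5 : ∑ i ∈ Finset.range (q+1), a' i (T t₀) *
          (iteratedDeriv i y₁ (T t₀) - iteratedDeriv i y₂ (T t₀)) = 0 :=
        Finset.sum_eq_zero (fun i hi => by
          rw [Finset.mem_range] at hi
          rw [hDYlow i (by omega), mul_zero])
      rw [h5, zero_add]
      rw [show q + 1 = r - 1 from by omega, hrat' (T t₀) hs₀V]
      ring
    -- final computation
    have hfin := hA r
    rw [hDUr] at hfin
    rw [hq] at hfin hDYr
    rw [show q + 2 + 1 = (q+1) + 1 + 1 from rfl] at hfin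
    rw [Finset.sum_range_succ, Finset.sum_range_succ] at hfin
    have h5 : ∑ k ∈ Finset.range (q+1), chainC T (q+2) k t₀ *
        (iteratedDeriv k y₁ (T t₀) - iteratedDeriv k y₂ (T t₀)) = 0 :=
      Finset.sum_eq_zero (fun k hk => by
        rw [Finset.mem_range] at hk
        rw [hDYlow k (by omega), mul_zero])
    rw [h5, zero_add] at hfin
    rw [show (q+1:ℕ) + 1 = q + 2 from rfl] at hfin
    rw [hDYr, mul_zero, add_zero] at hfin
    rw [show (q+2:ℕ) = (q+1) + 1 from rfl, chainC_subdiag hIo hT (q+1) t₀ ht₀] at hfin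
    rw [show (q+1:ℕ) - 1 = q from rfl] at hfin
    -- hfin : (r:ℝ) * deriv X₁ t₀ = ((q+1+1)*(q+1)/2) * (T')^q * T'' * DY(q+1)
    have h6 : ((q:ℝ)+2) * (deriv X₁ t₀ * deriv T t₀) =
        ((q:ℝ)+2) * ((((q:ℝ)+1)/2) * (X₁ t₀ * iteratedDeriv 2 T t₀)) := by
      have h7 : ((q:ℝ)+2) * deriv X₁ t₀ * deriv T t₀ =
          (((q:ℝ)+1+1) * ((q:ℝ)+1) / 2) * iteratedDeriv 2 T t₀ *
            ((deriv T t₀)^(q+1) * (iteratedDeriv (q+1) y₁ (T t₀) -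
              iteratedDeriv (q+1) y₂ (T t₀))) := by
        calc ((q:ℝ)+2) * deriv X₁ t₀ * deriv T t₀
            = (((q+2:ℕ):ℝ) * deriv X₁ t₀) * deriv T t₀ := by push_cast; ring
          _ = ((((q:ℝ)+1)+1) * ((q:ℝ)+1) / 2 * deriv T t₀ ^ q * iteratedDeriv 2 T t₀ *
              (iteratedDeriv (q+1) y₁ (T t₀) - iteratedDeriv (q+1) y₂ (T t₀))) *
              deriv T t₀ := by rw [hfin]; push_cast; ring
          _ = _ := by ring
      rw [hDYq1] at h7
      linarith [h7]
    have hq2 : ((q:ℝ)+2) ≠ 0 := by positivity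
    have h8 := mul_left_cancel₀ hq2 h6
    have h9 : ((r:ℝ) - 1) = (q:ℝ) + 1 := by rw [hq]; push_cast; ring
    rw [h9]
    linear_combination 2 * h8
  refine ⟨main, ?_⟩
  intro hpos
  obtain ⟨t₀, ht₀⟩ := hne
  set β : ℝ := ((r:ℝ) - 1) / 2 with hβ
  have hconv : Convex ℝ I := by
    rw [convex_iff_ordConnected]; exact hIc
  set g : ℝ → ℝ := fun t => X₁ t * (deriv T t) ^ (-β) with hg
  have hgd : ∀ t ∈ I, HasDerivAt g 0 t := by
    intro t ht
    have hX₁d : HasDerivAt X₁ (deriv X₁ t) t :=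
      ((hX₁.differentiableOn (by simp)).differentiableAt
        (hIo.mem_nhds ht)).hasDerivAt
    have hTd2 : HasDerivAt (deriv T) (iteratedDeriv 2 T t) t := by
      have h := hasDerivAt_iteratedDeriv hIo hT 1 ht
      rwa [iteratedDeriv_one] at h
    have hrpow : HasDerivAt (fun s => (deriv T s) ^ (-β))
        ((-β) * (deriv T t) ^ (-β - 1) * iteratedDeriv 2 T t) t := by
      have h1 := Real.hasDerivAt_rpow_const (x := deriv T t) (p := -β)
        (Or.inl (ne_of_gt (hpos t ht)))
      exact h1.comp t hTd2
    have hprod := hX₁d.mul hrpow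
    have heq : deriv X₁ t * deriv T t ^ (-β) +
        X₁ t * ((-β) * (deriv T t) ^ (-β - 1) * iteratedDeriv 2 T t) = 0 := by
      have hTpos := hpos t ht
      have hm := main t ht
      have hsplit : (deriv T t) ^ (-β) = (deriv T t) ^ (-β - 1) * deriv T t := by
        have h4 := Real.rpow_add hTpos (-β - 1) 1
        rw [Real.rpow_one] at h4
        rw [show -β - 1 + 1 = -β from by ring] at h4
        exact h4
      rw [hsplit]
      have hX₁' : deriv X₁ t * deriv T t = β * (X₁ t * iteratedDeriv 2 T t) := by
        rw [hβ]
        linarith [hm]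
      calc deriv X₁ t * ((deriv T t) ^ (-β - 1) * deriv T t) +
            X₁ t * ((-β) * (deriv T t) ^ (-β - 1) * iteratedDeriv 2 T t)
          = (deriv T t) ^ (-β - 1) *
            (deriv X₁ t * deriv T t - β * (X₁ t * iteratedDeriv 2 T t)) := by ring
        _ = 0 := by rw [hX₁', sub_self, mul_zero]
    rw [← heq]
    exact hprod
  have hgconst : ∀ t ∈ I, g t = g t₀ := by
    intro t ht
    apply hconv.is_const_of_fderivWithin_eq_zero (𝕜 := ℝ)
      (fun s hs => ((hgd s hs).differentiableAt).differentiableWithinAt) ?_ ht ht₀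
    intro s hs
    rw [fderivWithin_of_isOpen hIo hs]
    have := (hgd s hs).deriv
    have h2 : fderiv ℝ g s = 0 := by
      have h3 := (hgd s hs).hasFDerivAt
      rw [h3.fderiv]
      ext z
      simp
    exact h2
  refine ⟨g t₀, ?_, ?_⟩
  · rw [hg]
    simp only
    apply mul_ne_zero (hX₁ne t₀ ht₀)
    exact ne_of_gt (Real.rpow_pos_of_pos (hpos t₀ ht₀) _)
  · intro t ht
    have h1 := hgconst t ht
    rw [hg] at h1
    simp only at h1
    have hTpos := hpos t ht
    have h2 : (deriv T t) ^ (-β) * (deriv T t) ^ β = 1 := by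
      rw [← Real.rpow_add hTpos]
      norm_num
    calc X₁ t = X₁ t * ((deriv T t) ^ (-β) * (deriv T t) ^ β) := by rw [h2, mul_one]
      _ = (X₁ t * (deriv T t) ^ (-β)) * (deriv T t) ^ β := by ring
      _ = g t₀ * deriv T t ^ β := by rw [h1]
end Scalar
end

section
/- Let I ⊆ ℝ be an open interval and T : I → ℝ a smooth function with T'(t) ≠ 0 for all t ∈ I. If T satisfies T'''(t)·T'(t) − (3/2)·(T''(t))² = 0 on I (i.e., the Schwarzian derivative of T vanishes), then there exist constants α, β, γ, δ with αδ − βγ ≠ 0 and γt + δ ≠ 0 for all t ∈ I such that T(t) = (αt + β)/(γt + δ) on I. -/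
open Set

lemma aux_const {s : Set ℝ} (hs : IsOpen s) (hc : Convex ℝ s) {f : ℝ → ℝ}
    (h : ∀ x ∈ s, HasDerivAt f 0 x) {x y : ℝ} (hx : x ∈ s) (hy : y ∈ s) : f x = f y := by
  refine hc.is_const_of_fderivWithin_eq_zero
    (fun z hz => ((h z hz).differentiableAt).differentiableWithinAt) (fun z hz => ?_) hx hy
  rw [fderivWithin_of_isOpen hs hz, (h z hz).hasFDerivAt.fderiv]
  ext
  simp


/-- a smooth function on an open interval with nonvanishing derivative and
vanishing Schwarzian derivative is fractional linear. -/
theorem stmt9 (I : Set ℝ) (hI : IsOpenInterval I) (T : ℝ → ℝ)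
    (hT : ContDiffOn ℝ (⊤ : ℕ∞) T I) (hT' : ∀ t ∈ I, deriv T t ≠ 0)
    (hSchwarz : ∀ t ∈ I,
      iteratedDeriv 3 T t * deriv T t - (3 / 2) * iteratedDeriv 2 T t ^ 2 = 0) :
    ∃ α β γ δ : ℝ, α * δ - β * γ ≠ 0 ∧
      ∀ t ∈ I, γ * t + δ ≠ 0 ∧ T t = (α * t + β) / (γ * t + δ) := by
  obtain ⟨hIo, hIord, t₀, ht₀⟩ := hI
  have hconv : Convex ℝ I := convex_iff_ordConnected.mpr hIord
  set u : ℝ → ℝ := deriv T with hu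
  set v : ℝ → ℝ := deriv u with hv
  set w : ℝ → ℝ := deriv v with hw
  -- Schwarzian in terms of u v w
  have hS : ∀ t ∈ I, w t * u t - (3/2) * (v t)^2 = 0 := by
    intro t ht
    have := hSchwarz t ht
    simpa [iteratedDeriv_succ, iteratedDeriv_one, hu, hv, hw] using this
  have hnhds : ∀ t ∈ I, I ∈ nhds t := fun t ht => hIo.mem_nhds ht
  -- smoothness of u, v
  have hu_smooth : ContDiffOn ℝ (⊤ : ℕ∞) u I := hT.deriv_of_isOpen hIo (by exact_mod_cast le_top)
  have hv_smooth : ContDiffOn ℝ (⊤ : ℕ∞) v I := hu_smooth.deriv_of_isOpen hIo (by exact_mod_cast le_top)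
  have hT_diff : ∀ t ∈ I, HasDerivAt T (u t) t := fun t ht =>
    ((hT.contDiffAt (hnhds t ht)).differentiableAt (by simp)).hasDerivAt
  have hu_diff : ∀ t ∈ I, HasDerivAt u (v t) t := fun t ht =>
    ((hu_smooth.contDiffAt (hnhds t ht)).differentiableAt (by simp)).hasDerivAt
  have hv_diff : ∀ t ∈ I, HasDerivAt v (w t) t := fun t ht =>
    ((hv_smooth.contDiffAt (hnhds t ht)).differentiableAt (by simp)).hasDerivAt
  -- sign
  set ε : ℝ := if 0 < u t₀ then 1 else -1 with hε
  have hε2 : ε * ε = 1 := by rw [hε]; split <;> norm_num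
  have hεne : ε ≠ 0 := by rw [hε]; split <;> norm_num
  have hεt₀ : 0 < ε * u t₀ := by
    rcases lt_or_gt_of_ne (hT' t₀ ht₀) with h | h
    · rw [hε, if_neg (by linarith)]; nlinarith
    · rw [hε, if_pos h]; nlinarith
  have hpos : ∀ t ∈ I, 0 < ε * u t := by
    intro t ht
    rcases lt_trichotomy (ε * u t) 0 with h | h | h
    · exfalso
      have hsub : uIcc t t₀ ⊆ I := hIord.uIcc_subset ht ht₀
      have hcont : ContinuousOn (fun s => ε * u s) (uIcc t t₀) :=
        (continuous_const.comp continuous_id).continuousOn.mul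
          ((hu_smooth.continuousOn).mono hsub)
      have h0 : (0:ℝ) ∈ uIcc (ε * u t) (ε * u t₀) := by
        rw [mem_uIcc]; left; exact ⟨le_of_lt h, le_of_lt hεt₀⟩
      obtain ⟨c, hc, hc0⟩ := intermediate_value_uIcc hcont h0
      have : u c = 0 := by
        rcases mul_eq_zero.mp hc0 with h | h
        · exact absurd h hεne
        · exact h
      exact hT' c (hsub hc) this
    · exfalso
      have : u t ≠ 0 := hT' t ht
      rcases mul_eq_zero.mp h with h' | h'
      · exact hεne h'
      · exact this h'
    · exact h
  -- the function f = (eps*u)^(-1/2)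
  set f : ℝ → ℝ := fun t => (ε * u t) ^ (-(1/2) : ℝ) with hf
  have hεu_diff : ∀ t ∈ I, HasDerivAt (fun s => ε * u s) (ε * v t) t :=
    fun t ht => (hu_diff t ht).const_mul ε
  set F' : ℝ → ℝ := fun t => (ε * v t) * (-(1/2)) * (ε * u t) ^ (-(1/2) - 1 : ℝ) with hF'
  have hf_diff : ∀ t ∈ I, HasDerivAt f (F' t) t := fun t ht =>
    (hεu_diff t ht).rpow_const (Or.inl (ne_of_gt (hpos t ht)))
  set G : ℝ → ℝ := fun t => (ε * w t * (-(1/2))) * ((ε * u t) ^ (-(1/2) - 1 : ℝ)) +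
      ((ε * v t) * (-(1/2))) * ((ε * v t) * (-(1/2) - 1) * (ε * u t) ^ (-(1/2) - 1 - 1 : ℝ))
    with hG
  have hF'_diff : ∀ t ∈ I, HasDerivAt F' (G t) t := by
    intro t ht
    have h1 : HasDerivAt (fun s => (ε * v s) * (-(1/2) : ℝ)) (ε * w t * (-(1/2))) t :=
      ((hv_diff t ht).const_mul ε).mul_const _
    have h2 : HasDerivAt (fun s => (ε * u s) ^ (-(1/2) - 1 : ℝ))
        ((ε * v t) * (-(1/2) - 1) * (ε * u t) ^ (-(1/2) - 1 - 1 : ℝ)) t :=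
      (hεu_diff t ht).rpow_const (Or.inl (ne_of_gt (hpos t ht)))
    exact h1.mul h2
  have hG0 : ∀ t ∈ I, G t = 0 := by
    intro t ht
    have hx := hpos t ht
    have hrw : (ε * u t) ^ (-(1/2) - 1 : ℝ) = (ε * u t) ^ (-(1/2) - 1 - 1 : ℝ) * (ε * u t) := by
      have h' : (-(1/2) - 1 : ℝ) = (-(1/2) - 1 - 1) + 1 := by ring
      conv_lhs => rw [h', Real.rpow_add hx, Real.rpow_one]
    rw [hG]
    simp only
    rw [hrw]
    linear_combination (-(1/2) * (ε * u t) ^ (-(1/2) - 1 - 1 : ℝ) * ε * ε) * (hS t ht)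
  set a : ℝ := F' t₀ with ha
  have hF'const : ∀ t ∈ I, F' t = a :=
    fun t ht => aux_const hIo hconv (fun s hs => hG0 s hs ▸ hF'_diff s hs) ht ht₀
  set b : ℝ := f t₀ - a * t₀ with hb
  have hfab : ∀ t ∈ I, f t = a * t + b := by
    intro t ht
    have key : ∀ s ∈ I, HasDerivAt (fun r => f r - a * r) 0 s := by
      intro s hs
      have h' := (hf_diff s hs).sub ((hasDerivAt_id s).const_mul a)
      exact (by simpa [hF'const s hs] using h' : HasDerivAt (f - fun y => a * y) 0 s)
    have h2 : f t - a * t = f t₀ - a * t₀ := aux_const hIo hconv key ht ht₀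
    rw [hb]; linarith [h2]
  have hfpos : ∀ t ∈ I, 0 < a * t + b := by
    intro t ht
    rw [← hfab t ht]
    exact Real.rpow_pos_of_pos (hpos t ht) _
  have huf : ∀ t ∈ I, u t = ε * ((a * t + b)^2)⁻¹ := by
    intro t ht
    have h1 : (f t)^2 = (ε * u t)⁻¹ := by
      rw [hf]
      simp only
      rw [← Real.rpow_natCast ((ε * u t) ^ (-(1/2):ℝ)) 2,
        ← Real.rpow_mul (le_of_lt (hpos t ht))]
      norm_num
      rw [Real.rpow_neg_one]
      ring
    calc u t = ε * (ε * u t) := by rw [← mul_assoc, hε2, one_mul]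
      _ = ε * ((f t)^2)⁻¹ := by rw [h1, inv_inv]
      _ = ε * ((a * t + b)^2)⁻¹ := by rw [hfab t ht]
  rcases eq_or_ne a 0 with ha0 | ha0
  · -- linear case
    set m : ℝ := ε * (b^2)⁻¹ with hm
    have hbpos : 0 < b := by have := hfpos t₀ ht₀; rwa [ha0, zero_mul, zero_add] at this
    have hTm : ∀ t ∈ I, T t = m * t + (T t₀ - m * t₀) := by
      intro t ht
      have key : ∀ s ∈ I, HasDerivAt (fun r => T r - m * r) 0 s := by
        intro s hs
        have h' := (hT_diff s hs).sub ((hasDerivAt_id s).const_mul m)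
        have hu' : u s = m := by rw [huf s hs, ha0, zero_mul, zero_add, hm]
        exact (by simpa [hu'] using h' : HasDerivAt (T - fun y => m * y) 0 s)
      have h2 : T t - m * t = T t₀ - m * t₀ := aux_const hIo hconv key ht ht₀
      linarith [h2]
    refine ⟨m, T t₀ - m * t₀, 0, 1, ?_, ?_⟩
    · have hmne : m ≠ 0 := by
        rw [hm]
        exact mul_ne_zero hεne (inv_ne_zero (pow_ne_zero 2 (ne_of_gt hbpos)))
      simpa using hmne
    · intro t ht
      refine ⟨by norm_num, ?_⟩
      rw [hTm t ht]
      norm_num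
  · -- genuine fractional linear case
    set Φ : ℝ → ℝ := fun s => -ε * (a * (a * s + b))⁻¹ with hΦ
    have hΦ_diff : ∀ t ∈ I, HasDerivAt Φ (u t) t := by
      intro t ht
      have hinner : HasDerivAt (fun s => a * s + b) a t := by
        simpa using ((hasDerivAt_id t).const_mul a).add_const b
      have hψ : HasDerivAt (fun s => a * (a * s + b)) (a * a) t := by
        simpa using hinner.const_mul a
      have hne : a * (a * t + b) ≠ 0 := mul_ne_zero ha0 (ne_of_gt (hfpos t ht))
      have h2 := (hψ.inv hne).const_mul (-ε)
      have heq : -ε * (-(a * a) / (a * (a * t + b)) ^ 2) = u t := by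
        rw [huf t ht]
        have h3 : (a * t + b) ≠ 0 := ne_of_gt (hfpos t ht)
        field_simp
      rw [heq] at h2
      exact h2
    set c : ℝ := T t₀ - Φ t₀ with hc
    have hTΦ : ∀ t ∈ I, T t = Φ t + c := by
      intro t ht
      have key : ∀ s ∈ I, HasDerivAt (fun r => T r - Φ r) 0 s := by
        intro s hs
        exact (by simpa using (hT_diff s hs).sub (hΦ_diff s hs) : HasDerivAt (T - Φ) 0 s)
      have h2 : T t - Φ t = T t₀ - Φ t₀ := aux_const hIo hconv key ht ht₀
      rw [hc]; linarith [h2]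
    refine ⟨c * a * a, c * a * b - ε, a * a, a * b, ?_, ?_⟩
    · have : c * a * a * (a * b) - (c * a * b - ε) * (a * a) = ε * (a * a) := by ring
      rw [this]
      exact mul_ne_zero hεne (mul_ne_zero ha0 ha0)
    · intro t ht
      have hne : a * (a * t + b) ≠ 0 := mul_ne_zero ha0 (ne_of_gt (hfpos t ht))
      have hden : a * a * t + a * b = a * (a * t + b) := by ring
      refine ⟨by rw [hden]; exact hne, ?_⟩
      rw [hTΦ t ht, hΦ, hden]
      simp only
      field_simp
      have h3 : a * t + b ≠ 0 := ne_of_gt (hfpos t ht)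
      field_simp
      ring
end

section
/- Let r ≥ 3, and let E and Ẽ be homogeneous r-th order linear ODEs of first Arnold form (coefficient of the zeroth-order term identically zero, i.e., of the form x^{(r)} + a_{r−1}x^{(r−1)} + ⋯ + a₁x' = 0) on open intervals I and T(I) respectively. Let T, X₁, X₀ : I → ℝ be smooth with T'(t)X₁(t) ≠ 0 for all t, and suppose the fiber-preserving transformation t̃ = T(t), x̃ = X₁(t)x + X₀(t) maps E to Ẽ and its inverse maps Ẽ to E (for every solution y of Ẽ, the function t ↦ (y(T(t)) − X₀(t))/X₁(t) is a solution of E). Then both 1/X₁ and X₀/X₁ are solutions of E. -/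
open Set

/- Auxiliary lemmas -/

lemma iteratedDeriv_const_fun (n : ℕ) (c : ℝ) (hn : 0 < n) :
    iteratedDeriv n (fun _ : ℝ => c) = fun _ => 0 := by
  induction n with
  | zero => omega
  | succ m ih =>
    rcases Nat.eq_zero_or_pos m with hm | hm
    · subst hm
      funext t
      rw [iteratedDeriv_succ, iteratedDeriv_zero]
      simp [deriv_const']
    · rw [iteratedDeriv_succ, ih hm]
      funext t
      simp [deriv_const']

lemma iteratedDeriv_of_isOpen {s : Set ℝ} {f : ℝ → ℝ} (n : ℕ) (hs : IsOpen s)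
    {x : ℝ} (hx : x ∈ s) : iteratedDerivWithin n f s x = iteratedDeriv n f x := by
  simp only [iteratedDerivWithin, iteratedDeriv, iteratedFDerivWithin_of_isOpen n hs hx]

lemma isSol_neg {r : ℕ} {a : ℕ → ℝ → ℝ} {I : Set ℝ} {f : ℝ → ℝ}
    (hf : IsSolODE r a (fun _ => 0) I f) :
    IsSolODE r a (fun _ => 0) I (fun t => -f t) := by
  obtain ⟨h1, h2⟩ := hf
  refine ⟨h1.neg, fun t ht => ?_⟩
  have := h2 t ht
  simp only [odeLHS, show (fun t => -f t) = -f from rfl, iteratedDeriv_neg] at *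
  simp only [mul_neg, ← neg_add, Finset.sum_neg_distrib]
  linarith [this]

lemma isSol_add {r : ℕ} {a : ℕ → ℝ → ℝ} {I : Set ℝ} (hI : IsOpen I) {f g : ℝ → ℝ}
    (hf : IsSolODE r a (fun _ => 0) I f) (hg : IsSolODE r a (fun _ => 0) I g) :
    IsSolODE r a (fun _ => 0) I (fun t => f t + g t) := by
  obtain ⟨hf1, hf2⟩ := hf
  obtain ⟨hg1, hg2⟩ := hg
  refine ⟨hf1.add hg1, fun t ht => ?_⟩
  have hu : UniqueDiffOn ℝ I := hI.uniqueDiffOn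
  have key : ∀ n : ℕ, iteratedDeriv n (fun t => f t + g t) t
      = iteratedDeriv n f t + iteratedDeriv n g t := by
    intro n
    have := iteratedDerivWithin_add (f := f) (g := g) (n := n) ht hu
      ((hf1 t ht).of_le (by exact_mod_cast (le_top : (n:ℕ∞) ≤ ⊤))) ((hg1 t ht).of_le (by exact_mod_cast (le_top : (n:ℕ∞) ≤ ⊤)))
    rw [iteratedDeriv_of_isOpen n hI ht, iteratedDeriv_of_isOpen n hI ht,
      iteratedDeriv_of_isOpen n hI ht] at this
    simpa [Pi.add_def] using this
  have h1 := hf2 t ht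
  have h2 := hg2 t ht
  simp only [odeLHS, key] at *
  simp only [mul_add, Finset.sum_add_distrib]
  linarith [h1, h2]

/-- if a fiber-preserving transformation `t̃ = T(t)`, `x̃ = X₁(t)x + X₀(t)`
with `T' X₁ ≠ 0` maps a homogeneous `r`-th order (`r ≥ 3`) linear ODE `E` of first Arnold
form (`a₀ ≡ 0`) to another such equation, with inverse mapping back, then both `1/X₁`
and `X₀/X₁` are solutions of `E`. -/
theorem stmt10 (r : ℕ) (hr : 3 ≤ r) (I : Set ℝ) (hI : IsOpenInterval I)
    (a a' : ℕ → ℝ → ℝ)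
    (T X₁ X₀ : ℝ → ℝ)
    (hT : ContDiffOn ℝ (⊤ : ℕ∞) T I) (hX₁ : ContDiffOn ℝ (⊤ : ℕ∞) X₁ I) (hX₀ : ContDiffOn ℝ (⊤ : ℕ∞) X₀ I)
    (hTX : ∀ t ∈ I, deriv T t * X₁ t ≠ 0)
    (ha : ∀ i, ContDiffOn ℝ (⊤ : ℕ∞) (a i) I) (ha' : ∀ i, ContDiffOn ℝ (⊤ : ℕ∞) (a' i) (T '' I))
    (hA : ∀ t ∈ I, a 0 t = 0) (hA' : ∀ s ∈ T '' I, a' 0 s = 0)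
    (hmaps : FPMapsODE r I a (fun _ => 0) a' (fun _ => 0) T X₁ X₀)
    (hinv : ∀ y : ℝ → ℝ, IsSolODE r a' (fun _ => 0) (T '' I) y →
      IsSolODE r a (fun _ => 0) I (fun t => (y (T t) - X₀ t) / X₁ t)) :
    IsSolODE r a (fun _ => 0) I (fun t => 1 / X₁ t) ∧
    IsSolODE r a (fun _ => 0) I (fun t => X₀ t / X₁ t) := by
  have hrpos : 0 < r := by omega
  -- the constant functions 0 and 1 solve the target equation
  have hy0 : IsSolODE r a' (fun _ => 0) (T '' I) (fun _ => (0 : ℝ)) := by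
    refine ⟨contDiffOn_const, fun s hs => ?_⟩
    simp only [odeLHS, iteratedDeriv_const_fun r 0 hrpos]
    rw [Finset.sum_eq_zero]
    · simp
    · intro i hi
      rcases Nat.eq_zero_or_pos i with h | h
      · subst h; simp
      · rw [iteratedDeriv_const_fun i 0 h]; simp
  have hy1 : IsSolODE r a' (fun _ => 0) (T '' I) (fun _ => (1 : ℝ)) := by
    refine ⟨contDiffOn_const, fun s hs => ?_⟩
    simp only [odeLHS, iteratedDeriv_const_fun r 1 hrpos]
    rw [Finset.sum_eq_zero]
    · simp
    · intro i hi
      rcases Nat.eq_zero_or_pos i with h | h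
      · subst h; simp [hA' s hs]
      · rw [iteratedDeriv_const_fun i 1 h]; simp
  have hf2 := hinv _ hy0
  have hf1 := hinv _ hy1
  -- hf2 : solution  t ↦ (0 - X₀ t)/X₁ t
  have hsolX : IsSolODE r a (fun _ => 0) I (fun t => X₀ t / X₁ t) := by
    have := isSol_neg hf2
    convert this using 2 with t
    rw [zero_sub, neg_div, neg_neg]
  refine ⟨?_, hsolX⟩
  have := isSol_add hI.1 hf1 hsolX
  convert this using 2 with t
  rw [← add_div, sub_add_cancel]
end
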